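/- arXiv:math/0202236 — 7 statements merged into one kernel-verified Lean document; each statement's English description precedes it below -/
import Mathlib

section
/- Let T₀, T₁ : [0,1] → S² ⊂ ℝ³ be C¹ curves on the unit sphere with T₀(t) ≠ −T₁(t) for all t. Define u(θ,t) = cos θ · T₀(t) + sin θ · T₁(t). Then the spherical area swept out by the normalized interpolation v(θ,t) = u(θ,t)/|u(θ,t)| for (θ,t) ∈ [0, π/2] × [0,1], computed as the integral of the pullback of the area form, satisfies ∫₀¹ ∫₀^{π/2} (1/|u(θ,t)|³) · ((∂u/∂θ) × (∂u/∂t) · u(θ,t)) dθ dt = ∫₀¹ ((T₀(t) × T₁(t))/(1 + T₀(t)·T₁(t))) · (T₀'(t) + T₁'(t)) dt. -/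
noncomputable section

/-- Cross product on `ℝ³`. -/
def cross3 (v w : EuclideanSpace ℝ (Fin 3)) : EuclideanSpace ℝ (Fin 3) :=
  WithLp.toLp 2 ![v 1 * w 2 - v 2 * w 1, v 2 * w 0 - v 0 * w 2, v 0 * w 1 - v 1 * w 0]

/-- Euclidean inner product on `ℝ³`. -/
def dot3 (v w : EuclideanSpace ℝ (Fin 3)) : ℝ := inner ℝ v w

open Real intervalIntegral

lemma tripleprod (s c : ℝ) (a b a' b' : EuclideanSpace ℝ (Fin 3)) :
    dot3 (cross3 ((-s) • a + c • b) (c • a' + s • b')) (c • a + s • b)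
      = (c^3 + c*s^2) * dot3 (cross3 a b) a' + (s*c^2 + s^3) * dot3 (cross3 a b) b' := by
  simp [dot3, cross3, PiLp.inner_apply, Fin.sum_univ_three, RCLike.inner_apply,
    PiLp.add_apply, PiLp.smul_apply, smul_eq_mul]
  ring

lemma crossself (a x : EuclideanSpace ℝ (Fin 3)) : dot3 (cross3 a a) x = 0 := by
  simp [dot3, cross3, PiLp.inner_apply, Fin.sum_univ_three, RCLike.inner_apply]
  ring

lemma norm_interp (θ : ℝ) (a b : EuclideanSpace ℝ (Fin 3))
    (ha : ‖a‖ = 1) (hb : ‖b‖ = 1) :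
    ‖Real.cos θ • a + Real.sin θ • b‖
      = Real.sqrt (1 + 2*(dot3 a b)*(Real.sin θ * Real.cos θ)) := by
  have hpy := sin_sq_add_cos_sq θ
  have h2 : ‖Real.cos θ • a + Real.sin θ • b‖^2
      = 1 + 2*(dot3 a b)*(Real.sin θ * Real.cos θ) := by
    rw [norm_add_sq_real, norm_smul, norm_smul, real_inner_smul_left, real_inner_smul_right]
    simp only [Real.norm_eq_abs, ha, hb, mul_one]
    rw [sq_abs, sq_abs]
    show Real.cos θ ^ 2 + 2 * (Real.cos θ * (Real.sin θ * dot3 a b)) + Real.sin θ ^ 2 = _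
    nlinarith []
  rw [← h2, Real.sqrt_sq (norm_nonneg _)]



lemma qpos (d : ℝ) (hd : -1 < d) (hd1 : d < 1) (θ : ℝ) (hθ : θ ∈ Set.uIcc (0:ℝ) (π/2)) :
    0 < 1 + 2*d*(sin θ * cos θ) := by
  rw [Set.uIcc_of_le (by positivity)] at hθ
  have hs : 0 ≤ sin θ := sin_nonneg_of_nonneg_of_le_pi hθ.1 (by linarith [hθ.2, pi_pos])
  have hc : 0 ≤ cos θ := cos_nonneg_of_mem_Icc ⟨by linarith [hθ.1, pi_pos], hθ.2⟩
  have hpy := sin_sq_add_cos_sq θ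
  nlinarith [mul_nonneg hs hc, sq_nonneg (sin θ - cos θ),
    mul_pos (show (0:ℝ) < 1 + 2*(sin θ * cos θ) by nlinarith [mul_nonneg hs hc])
      (show (0:ℝ) < 1 + d by linarith),
    mul_nonneg (show (0:ℝ) ≤ 1 - 2*(sin θ * cos θ) by nlinarith [sq_nonneg (sin θ - cos θ)])
      (show (0:ℝ) ≤ 1 - d by linarith)]

lemma key_integral (d A B : ℝ) (hd : -1 < d) (hd1 : d < 1) :
    ∫ θ in (0:ℝ)..(π/2),
        (A * cos θ + B * sin θ) / Real.sqrt (1 + 2*d*(sin θ * cos θ)) ^ 3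
      = (A + B) / (1 + d) := by
  have hk : (1:ℝ) - d^2 ≠ 0 := by nlinarith
  have hd0 : (1:ℝ) + d ≠ 0 := by linarith
  set f : ℝ → ℝ := fun θ => (A * cos θ + B * sin θ) / Real.sqrt (1 + 2*d*(sin θ * cos θ)) ^ 3 with hf
  set F : ℝ → ℝ := fun θ =>
    (A * (sin θ + d * cos θ) - B * (cos θ + d * sin θ)) /
      ((1 - d^2) * Real.sqrt (1 + 2*d*(sin θ * cos θ))) with hF
  have hderiv : ∀ θ ∈ Set.uIcc (0:ℝ) (π/2), HasDerivAt F (f θ) θ := by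
    intro θ hθ
    have hq := qpos d hd hd1 θ hθ
    set s := sin θ with hs'
    set c := cos θ with hc'
    set S := Real.sqrt (1 + 2*d*(s * c)) with hS
    have hsq : S ^ 2 = 1 + 2*d*(s * c) := Real.sq_sqrt hq.le
    have hsqpos : 0 < S := Real.sqrt_pos.mpr hq
    have hqd : HasDerivAt (fun x : ℝ => 1 + 2*d*(sin x * cos x))
        (2*d*(c * c + s * -s)) θ := by
      have := ((hasDerivAt_sin θ).mul (hasDerivAt_cos θ)).const_mul (2*d)
      simpa using this.const_add 1
    have hsqd : HasDerivAt (fun x : ℝ => Real.sqrt (1 + 2*d*(sin x * cos x)))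
        ((2*d*(c * c + s * -s)) / (2 * S)) θ := hqd.sqrt hq.ne'
    have hN : HasDerivAt (fun x : ℝ => A * (sin x + d * cos x) - B * (cos x + d * sin x))
        (A * (c + d * -s) - B * (-s + d * c)) θ :=
      (((hasDerivAt_sin θ).add ((hasDerivAt_cos θ).const_mul d)).const_mul A).sub
        (((hasDerivAt_cos θ).add ((hasDerivAt_sin θ).const_mul d)).const_mul B)
    have hD : HasDerivAt (fun x : ℝ => (1 - d^2) * Real.sqrt (1 + 2*d*(sin x * cos x)))
        ((1 - d^2) * ((2*d*(c * c + s * -s)) / (2 * S))) θ := hsqd.const_mul _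
    have hDne : (1 - d^2) * S ≠ 0 := mul_ne_zero hk hsqpos.ne'
    have key := hN.div hD hDne
    convert key using 1
    show (A * c + B * s) / S ^ 3 = _
    have hpy : s^2 + c^2 = 1 := sin_sq_add_cos_sq θ
    rw [div_eq_div_iff (by positivity) (pow_ne_zero 2 hDne)]
    simp only [← hs', ← hc', ← hS]
    field_simp
    linear_combination (-(A*(c-s*d)+B*(s-c*d))) * hsq +
      (A*(c*d^2-d*s)+B*(s*d^2-d*c)) * hpy
    all_goals rfl
  have hcont : ContinuousOn f (Set.uIcc (0:ℝ) (π/2)) := by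
    apply ContinuousOn.div
    · fun_prop
    · fun_prop
    · intro θ hθ
      have := qpos d hd hd1 θ hθ
      positivity
  rw [integral_eq_sub_of_hasDerivAt hderiv (hcont.intervalIntegrable)]
  rw [hF]
  simp [Real.sin_pi_div_two, Real.cos_pi_div_two]
  field_simp
  ring

/-- Let `T₀, T₁ : [0,1] → S²` be `C¹` curves on the unit sphere which are
never antipodal, and let `u θ t = cos θ • T₀ t + sin θ • T₁ t`. Then the spherical area
swept out by the normalized interpolation `v = u/|u|` on `[0, π/2] × [0,1]`, computed as the
integral of the pullback of the area form, equals the Fuller ribbon integral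
`∫₀¹ ((T₀ × T₁)/(1 + T₀·T₁)) · (T₀' + T₁') dt`. -/
theorem ribbon_area_formula
    (T₀ T₁ : ℝ → EuclideanSpace ℝ (Fin 3))
    (hC₀ : ContDiff ℝ 1 T₀) (hC₁ : ContDiff ℝ 1 T₁)
    (hS₀ : ∀ t ∈ Set.Icc (0:ℝ) 1, ‖T₀ t‖ = 1)
    (hS₁ : ∀ t ∈ Set.Icc (0:ℝ) 1, ‖T₁ t‖ = 1)
    (hanti : ∀ t ∈ Set.Icc (0:ℝ) 1, T₀ t ≠ -T₁ t)
    (u : ℝ → ℝ → EuclideanSpace ℝ (Fin 3))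
    (hu : ∀ θ t : ℝ, u θ t = Real.cos θ • T₀ t + Real.sin θ • T₁ t) :
    (∫ t in (0:ℝ)..1, ∫ θ in (0:ℝ)..(Real.pi / 2),
        (1 / ‖u θ t‖ ^ 3) *
          dot3 (cross3 (deriv (fun θ' => u θ' t) θ) (deriv (fun t' => u θ t') t)) (u θ t)) =
      ∫ t in (0:ℝ)..1,
        dot3 (cross3 (T₀ t) (T₁ t)) (deriv T₀ t + deriv T₁ t) /
          (1 + dot3 (T₀ t) (T₁ t)) := by
  apply intervalIntegral.integral_congr
  intro t ht
  rw [Set.uIcc_of_le zero_le_one] at ht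
  simp only []
  set a := T₀ t with ha'
  set b := T₁ t with hb'
  set a' := deriv T₀ t with hda
  set b' := deriv T₁ t with hdb
  have ha : ‖a‖ = 1 := hS₀ t ht
  have hb : ‖b‖ = 1 := hS₁ t ht
  set A := dot3 (cross3 a b) a' with hA
  set B := dot3 (cross3 a b) b' with hB
  have hd1' : dot3 a b ≤ 1 := by
    have := real_inner_le_norm a b
    rw [ha, hb] at this; simpa [dot3] using this
  have hdgt : -1 < dot3 a b := by
    have habs : |(inner ℝ a b : ℝ)| ≤ 1 := by
      have := abs_real_inner_le_norm a b
      rw [ha, hb] at this; simpa using this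
    have hge : -1 ≤ dot3 a b := neg_le_of_abs_le habs
    rcases hge.lt_or_eq with h | h
    · exact h
    · exfalso
      apply hanti t ht
      have hnb : ‖-b‖ = 1 := by rwa [norm_neg]
      have h1 : (inner ℝ a (-b) : ℝ) = 1 := by
        rw [inner_neg_right]
        have h2 : (inner ℝ a b : ℝ) = -1 := h.symm
        rw [h2]; norm_num
      exact (inner_eq_one_iff_of_norm_eq_one ha hnb).mp h1
  -- derivative computations
  have hderθ : ∀ θ : ℝ, deriv (fun θ' => u θ' t) θ = (-Real.sin θ) • a + Real.cos θ • b := by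
    intro θ
    have hfun : (fun θ' => u θ' t) = fun θ' => Real.cos θ' • a + Real.sin θ' • b :=
      funext fun θ' => hu θ' t
    rw [hfun]
    exact (((Real.hasDerivAt_cos θ).smul_const a).add
      ((Real.hasDerivAt_sin θ).smul_const b)).deriv
  have hdert : ∀ θ : ℝ, deriv (fun t' => u θ t') t = Real.cos θ • a' + Real.sin θ • b' := by
    intro θ
    have hfun : (fun t' => u θ t') = fun t' => Real.cos θ • T₀ t' + Real.sin θ • T₁ t' :=
      funext fun t' => hu θ t'
    rw [hfun]
    exact ((((hC₀.differentiable one_ne_zero) t).hasDerivAt.const_smul (Real.cos θ)).add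
      (((hC₁.differentiable one_ne_zero) t).hasDerivAt.const_smul (Real.sin θ))).deriv
  have hpoint : ∀ θ : ℝ,
      (1 / ‖u θ t‖ ^ 3) *
          dot3 (cross3 (deriv (fun θ' => u θ' t) θ) (deriv (fun t' => u θ t') t)) (u θ t)
        = (A * Real.cos θ + B * Real.sin θ) /
            Real.sqrt (1 + 2*(dot3 a b)*(Real.sin θ * Real.cos θ)) ^ 3 := by
    intro θ
    have hpy := sin_sq_add_cos_sq θ
    rw [hderθ θ, hdert θ, hu θ t, tripleprod (Real.sin θ) (Real.cos θ) a b a' b',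
      norm_interp θ a b ha hb, ← hA, ← hB, one_div_mul_eq_div]
    congr 1
    linear_combination (Real.cos θ * A + Real.sin θ * B) * hpy
  simp_rw [hpoint]
  rcases eq_or_lt_of_le hd1' with hd1 | hd1
  · -- a = b, everything vanishes
    have hab : a = b := by
      have : (inner ℝ a b : ℝ) = 1 := hd1
      exact (inner_eq_one_iff_of_norm_eq_one ha hb).mp this
    have hA0 : A = 0 := by rw [hA, hab]; exact crossself b a'
    have hB0 : B = 0 := by rw [hB, hab]; exact crossself b b'
    have hnum : dot3 (cross3 a b) (a' + b') = 0 := by rw [hab]; exact crossself b _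
    rw [hnum]
    simp [hA0, hB0]
  · rw [key_integral (dot3 a b) A B hdgt hd1]
    congr 1
    rw [hA, hB]
    show (inner ℝ (cross3 a b) a' : ℝ) + inner ℝ (cross3 a b) b' = inner ℝ (cross3 a b) (a' + b')
    exact (inner_add_right _ _ _).symm

end
end

section
/- Let C : ℝ → ℝ³ be an embedded (simple) closed polygonal curve of period 1 with corners at t₀ < t₁ < ⋯ < t_n = t₀ + 1 and positive corner angles. Then there exists a sequence of simple closed curves C_i : ℝ → ℝ³ of period 1, each of class C¹ with regular parametrization, converging pointwise to C, such that: (1) C_i(t) = C(t) whenever t lies outside the union of the intervals of radius 1/i around the corner parameters t_j; (2) near each corner t_j, the unit tangent vector of C_i takes values on the shorter great-circle arc in S² joining the incoming edge direction of C at t_j to the outgoing edge direction of C at t_j; and (3) Wr(C_i) → Wr(C) as i → ∞. -/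
noncomputable section

/-- The writhe of a closed curve of period `L`, given by the Gauss double integral. -/
def writhe (L : ℝ) (C : ℝ → EuclideanSpace ℝ (Fin 3)) : ℝ :=
  (1 / (4 * Real.pi)) *
    ∫ s in (0:ℝ)..L, ∫ t in (0:ℝ)..L,
      dot3 (cross3 (deriv C s) (deriv C t)) (C s - C t) / ‖C s - C t‖ ^ 3

/-- The unit tangent vector of a curve. -/
def ut (C : ℝ → EuclideanSpace ℝ (Fin 3)) (t : ℝ) : EuclideanSpace ℝ (Fin 3) :=
  ‖deriv C t‖⁻¹ • deriv C t

/-- The shorter great-circle arc on `S²` joining two non-antipodal unit vectors `u` and `v`: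
the set of normalizations of the nonzero nonnegative combinations of `u` and `v`. -/
def shorterArc (u v : EuclideanSpace ℝ (Fin 3)) : Set (EuclideanSpace ℝ (Fin 3)) :=
  {w | ∃ a b : ℝ, 0 ≤ a ∧ 0 ≤ b ∧ a • u + b • v ≠ 0 ∧
    w = ‖a • u + b • v‖⁻¹ • (a • u + b • v)}

open MeasureTheory Set Filter

abbrev E3 := EuclideanSpace ℝ (Fin 3)

/-- slope of the smoothing profile -/
def spsi (u : ℝ) : ℝ := max 0 (min 1 ((u + 1) / 2))

/-- the C¹ smoothing profile: φ' = ψ, φ = 0 on (-∞,-1], φ = id on [1,∞) -/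
def sphi (x : ℝ) : ℝ := ∫ u in (-1:ℝ)..x, spsi u

lemma spsi_cont : Continuous spsi := by
  unfold spsi
  exact continuous_const.max (continuous_const.min (by continuity))

lemma spsi_nonneg (u : ℝ) : 0 ≤ spsi u := le_max_left _ _

lemma spsi_le_one (u : ℝ) : spsi u ≤ 1 := by
  unfold spsi
  exact max_le zero_le_one (min_le_left _ _)

lemma spsi_of_le (u : ℝ) (h : u ≤ -1) : spsi u = 0 := by
  unfold spsi
  have : (u + 1) / 2 ≤ 0 := by linarith
  have : min 1 ((u+1)/2) ≤ 0 := le_trans (min_le_right _ _) this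
  simp [max_eq_left this]

lemma spsi_of_ge (u : ℝ) (h : 1 ≤ u) : spsi u = 1 := by
  unfold spsi
  have : (1:ℝ) ≤ (u + 1) / 2 := by linarith
  rw [min_eq_left this]; simp

lemma sphi_hasDerivAt (x : ℝ) : HasDerivAt sphi (spsi x) x := by
  exact (spsi_cont.integral_hasStrictDerivAt (-1) x).hasDerivAt

lemma sphi_deriv (x : ℝ) : deriv sphi x = spsi x := (sphi_hasDerivAt x).deriv

lemma sphi_contDiff : ContDiff ℝ 1 sphi := by
  rw [contDiff_one_iff_deriv]
  refine ⟨fun x => (sphi_hasDerivAt x).differentiableAt, ?_⟩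
  have : deriv sphi = spsi := funext sphi_deriv
  rw [this]; exact spsi_cont

lemma sphi_of_le (x : ℝ) (h : x ≤ -1) : sphi x = 0 := by
  unfold sphi
  rw [intervalIntegral.integral_symm]
  have : ∀ u ∈ Set.uIcc x (-1), spsi u = 0 := by
    intro u hu
    rcases hu with ⟨h1, h2⟩
    have : u ≤ -1 := by
      rw [sup_eq_right.mpr h] at h2
      exact h2
    exact spsi_of_le u this
  rw [intervalIntegral.integral_congr this]
  simp

lemma sphi_one : sphi 1 = 1 := by
  unfold sphi
  have : ∀ u ∈ Set.uIcc (-1:ℝ) 1, spsi u = (u + 1)/2 := by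
    intro u hu
    rw [Set.uIcc_of_le (by norm_num)] at hu
    unfold spsi
    rw [min_eq_right (by linarith [hu.2]), max_eq_right (by linarith [hu.1])]
  rw [intervalIntegral.integral_congr this]
  have : ∀ u : ℝ, (u+1)/2 = u * (1/2) + 1/2 := fun u => by ring
  simp_rw [this]
  rw [intervalIntegral.integral_add (by apply IntervalIntegrable.mul_const; exact intervalIntegral.intervalIntegrable_id) (intervalIntegrable_const)]
  rw [intervalIntegral.integral_mul_const, integral_id, intervalIntegral.integral_const]
  norm_num

lemma sphi_of_ge (x : ℝ) (h : 1 ≤ x) : sphi x = x := by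
  have hsplit : sphi x = sphi 1 + ∫ u in (1:ℝ)..x, spsi u := by
    unfold sphi
    rw [intervalIntegral.integral_add_adjacent_intervals]
    · exact (spsi_cont.intervalIntegrable _ _)
    · exact (spsi_cont.intervalIntegrable _ _)
  have : ∀ u ∈ Set.uIcc (1:ℝ) x, spsi u = 1 := by
    intro u hu
    rw [Set.uIcc_of_le h] at hu
    exact spsi_of_ge u hu.1
  rw [hsplit, intervalIntegral.integral_congr this, sphi_one, intervalIntegral.integral_const]
  simp

lemma sphi_nonneg (x : ℝ) : 0 ≤ sphi x := by
  rcases le_or_gt x (-1) with h | h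
  · rw [sphi_of_le x h]
  · unfold sphi
    apply intervalIntegral.integral_nonneg (by linarith)
    intro u _; exact spsi_nonneg u

lemma sphi_sub_posPart_abs (x : ℝ) : |sphi x - max x 0| ≤ 2 := by
  rcases le_or_gt x (-1) with h | h
  · rw [sphi_of_le x h, max_eq_right (by linarith)]; norm_num
  rcases le_or_gt 1 x with h2 | h2
  · rw [sphi_of_ge x h2, max_eq_left (by linarith)]; norm_num
  · have h1 : sphi x ≤ x + 1 := by
      unfold sphi
      calc ∫ u in (-1:ℝ)..x, spsi u ≤ ∫ u in (-1:ℝ)..x, 1 := by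
            apply intervalIntegral.integral_mono_on (by linarith)
              (spsi_cont.intervalIntegrable _ _) intervalIntegrable_const
            intro u _; exact spsi_le_one u
        _ = x + 1 := by simp
    have h0 : 0 ≤ sphi x := sphi_nonneg x
    have hm : max x 0 ≤ 1 := by
      apply max_le (by linarith) (by norm_num)
    have hm0 : 0 ≤ max x 0 := le_max_right _ _
    rw [abs_le]; constructor <;> nlinarith



lemma dot3_eq (v w : E3) : dot3 v w = v 0 * w 0 + v 1 * w 1 + v 2 * w 2 := by
  simp [dot3, PiLp.inner_apply, Fin.sum_univ_three, mul_comm]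

lemma cross3_apply (v w : E3) :
    cross3 v w 0 = v 1 * w 2 - v 2 * w 1 ∧
    cross3 v w 1 = v 2 * w 0 - v 0 * w 2 ∧
    cross3 v w 2 = v 0 * w 1 - v 1 * w 0 := by
  refine ⟨rfl, rfl, rfl⟩

lemma smul_add_apply (a b : ℝ) (p q : E3) (i : Fin 3) :
    (a • p + b • q) i = a * p i + b * q i := rfl

/-- scalar triple product of three vectors in a 2-dim span vanishes -/
lemma triple_span_zero (p q : E3) (a₁ b₁ a₂ b₂ a₃ b₃ : ℝ) :
    dot3 (cross3 (a₁ • p + b₁ • q) (a₂ • p + b₂ • q)) (a₃ • p + b₃ • q) = 0 := by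
  rw [dot3_eq]
  obtain ⟨h0, h1, h2⟩ := cross3_apply (a₁ • p + b₁ • q) (a₂ • p + b₂ • q)
  rw [h0, h1, h2]
  simp only [smul_add_apply]
  ring

lemma norm_cross3_le (v w : E3) : ‖cross3 v w‖ ≤ ‖v‖ * ‖w‖ := by
  have hv : 0 ≤ ‖v‖ := norm_nonneg _
  have hw : 0 ≤ ‖w‖ := norm_nonneg _
  have h1 : ‖cross3 v w‖^2 ≤ (‖v‖ * ‖w‖)^2 := by
    have e1 : ‖cross3 v w‖^2 = (v 1 * w 2 - v 2 * w 1)^2 + (v 2 * w 0 - v 0 * w 2)^2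
        + (v 0 * w 1 - v 1 * w 0)^2 := by
      rw [← real_inner_self_eq_norm_sq]
      rw [show (inner ℝ (cross3 v w) (cross3 v w) : ℝ) = dot3 (cross3 v w) (cross3 v w) from rfl]
      rw [dot3_eq]
      obtain ⟨h0, h1, h2⟩ := cross3_apply v w
      rw [h0, h1, h2]; ring
    have e2 : (‖v‖ * ‖w‖)^2 = (v 0^2 + v 1^2 + v 2^2) * (w 0^2 + w 1^2 + w 2^2) := by
      rw [mul_pow, ← real_inner_self_eq_norm_sq, ← real_inner_self_eq_norm_sq]
      rw [show (inner ℝ v v : ℝ) = dot3 v v from rfl, show (inner ℝ w w : ℝ) = dot3 w w from rfl]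
      rw [dot3_eq, dot3_eq]; ring
    rw [e1, e2]
    nlinarith [sq_nonneg (v 0 * w 0 + v 1 * w 1 + v 2 * w 2)]
  have := (pow_le_pow_iff_left₀ (norm_nonneg (cross3 v w)) (by positivity) (two_ne_zero)).1 h1
  exact this

lemma abs_dot3_le (v w : E3) : |dot3 v w| ≤ ‖v‖ * ‖w‖ := abs_real_inner_le_norm v w

lemma continuous_coord (i : Fin 3) : Continuous (fun v : E3 => v i) := by
  exact (continuous_apply i).comp (PiLp.continuous_ofLp (p := 2) (β := fun _ : Fin 3 => ℝ))

lemma continuous_cross3 : Continuous (fun p : E3 × E3 => cross3 p.1 p.2) := by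
  have h : ∀ i, Continuous (fun p : E3 × E3 => cross3 p.1 p.2 i) := by
    intro i
    have c0 : ∀ j : Fin 3, Continuous (fun p : E3 × E3 => p.1 j) :=
      fun j => (continuous_coord j).comp continuous_fst
    have c1 : ∀ j : Fin 3, Continuous (fun p : E3 × E3 => p.2 j) :=
      fun j => (continuous_coord j).comp continuous_snd
    fin_cases i
    · exact ((c0 1).mul (c1 2)).sub ((c0 2).mul (c1 1))
    · exact ((c0 2).mul (c1 0)).sub ((c0 0).mul (c1 2))
    · exact ((c0 0).mul (c1 1)).sub ((c0 1).mul (c1 0))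
  exact (PiLp.continuous_toLp (p := 2) (β := fun _ : Fin 3 => ℝ)).comp (continuous_pi h)



section Poly

variable {C : ℝ → E3} {t : ℤ → ℝ} {e : ℤ → E3} {n : ℕ}

/-- reduction of an `n`-periodic assignment to a natural index `< n` -/
lemma periodic_int_reduce {α : Sort*} (g : ℤ → α) (hg : ∀ j : ℤ, g (j + n) = g j)
    (hn : 0 < n) (j : ℤ) : ∃ r : ℕ, r < n ∧ g j = g r := by
  have key : ∀ k : ℤ, ∀ j : ℤ, g (j + n * k) = g j := by
    intro k
    induction k using Int.induction_on with
    | zero => simp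
    | succ k ih => intro j
                   have : j + n * (k + 1) = (j + n * k) + n := by ring
                   rw [this, hg, ih]
    | pred k ih => intro j
                   have : (j + n * (-k - 1)) + n = j + n * (-k) := by ring
                   have h2 := hg (j + n * (-k - 1))
                   rw [this] at h2
                   rw [h2.symm, ih]
  refine ⟨(j % n).toNat, ?_, ?_⟩
  · have h1 : 0 ≤ j % (n:ℤ) := Int.emod_nonneg j (by positivity)
    have h2 : j % (n:ℤ) < n := Int.emod_lt_of_pos j (by exact_mod_cast hn)
    omega
  · have h1 : 0 ≤ j % (n:ℤ) := Int.emod_nonneg j (by positivity)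
    have h3 : ((j % n).toNat : ℤ) = j % n := Int.toNat_of_nonneg h1
    rw [h3]
    have h4 : j = j % n + n * (j / n) := by
      have := Int.emod_add_mul_ediv j n
      linarith
    conv_lhs => rw [h4]
    rw [key (j / n) (j % n)]

lemma tgap_pos (ht : StrictMono t) (j : ℤ) : 0 < t (j + 1) - t j :=
  sub_pos.mpr (ht (by omega))

lemma tgap_per (htper : ∀ j : ℤ, t (j + n) = t j + 1) (j : ℤ) :
    t ((j + n) + 1) - t (j + n) = t (j + 1) - t j := by
  have h1 : (j + (n:ℤ)) + 1 = (j + 1) + n := by ring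
  rw [h1, htper, htper]; ring

/-- the minimal gap between consecutive corner parameters -/
def gapm (t : ℤ → ℝ) (n : ℕ) (hn : 0 < n) : ℝ :=
  (Finset.range n).inf' (by simp [Finset.nonempty_range_iff]; omega) (fun r => t (r + 1) - t r)

lemma gapm_pos (ht : StrictMono t) (hn : 0 < n) : 0 < gapm t n hn := by
  rw [gapm, Finset.lt_inf'_iff]
  intro r _
  exact tgap_pos ht r

lemma gapm_le (htper : ∀ j : ℤ, t (j + n) = t j + 1) (hn : 0 < n) (j : ℤ) :
    gapm t n hn ≤ t (j + 1) - t j := by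
  obtain ⟨r, hr, he⟩ := periodic_int_reduce (fun j => t (j+1) - t j) (tgap_per htper) hn j
  rw [he]
  exact Finset.inf'_le _ (Finset.mem_range.mpr hr)

lemma t_mul_k (htper : ∀ j : ℤ, t (j + n) = t j + 1) (m : ℤ) :
    t ((n:ℤ) * m) = t 0 + m := by
  induction m using Int.induction_on with
  | zero => simp
  | succ m ih => have h : (n:ℤ) * (m + 1) = (n:ℤ) * m + n := by ring
                 rw [h, htper, ih]; push_cast; ring
  | pred m ih => have h : (n:ℤ) * (-m) = ((n:ℤ) * (-m - 1)) + n := by ring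
                 have h2 := htper ((n:ℤ) * (-m - 1))
                 rw [← h] at h2
                 rw [h2] at ih
                 push_cast at ih ⊢
                 linarith

/-- the corner interval containing `s` -/
lemma corner_floor (htper : ∀ j : ℤ, t (j + n) = t j + 1) (hn : 0 < n) (s : ℝ) :
    ∃ j : ℤ, t j ≤ s ∧ s < t (j + 1) := by
  classical
  set k : ℤ := ⌊s - t 0⌋ with hk
  have hlo : t ((n:ℤ) * k) ≤ s := by
    rw [t_mul_k htper]
    have := Int.floor_le (s - t 0)
    linarith
  have hhi : s < t ((n:ℤ) * (k + 1)) := by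
    rw [t_mul_k htper]
    have := Int.lt_floor_add_one (s - t 0)
    push_cast
    linarith
  set A : Finset ℤ := (Finset.Icc ((n:ℤ) * k) ((n:ℤ) * (k+1))).filter (fun j => t j ≤ s)
    with hA
  have hAne : A.Nonempty := by
    refine ⟨(n:ℤ) * k, ?_⟩
    rw [hA, Finset.mem_filter, Finset.mem_Icc]
    refine ⟨⟨le_refl _, ?_⟩, hlo⟩
    have h : (0:ℤ) < n := by exact_mod_cast hn
    nlinarith
  obtain ⟨j₀, hj₀⟩ : ∃ j₀, j₀ = A.max' hAne := ⟨_, rfl⟩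
  have hj₀mem : j₀ ∈ A := hj₀ ▸ A.max'_mem hAne
  rw [hA, Finset.mem_filter, Finset.mem_Icc] at hj₀mem
  refine ⟨j₀, hj₀mem.2, ?_⟩
  by_contra hcon
  push_neg at hcon
  have hne : j₀ ≠ (n:ℤ) * (k+1) := by
    intro hEq
    rw [hEq] at hj₀mem
    exact absurd hj₀mem.2 (not_le.mpr hhi)
  have hmem1 : j₀ + 1 ∈ A := by
    rw [hA, Finset.mem_filter, Finset.mem_Icc]
    have h1 : j₀ + 1 ≤ (n:ℤ) * (k+1) := by
      have := hj₀mem.1.2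
      omega
    exact ⟨⟨by linarith [hj₀mem.1.1], h1⟩, hcon⟩
  have hle := Finset.le_max' A _ hmem1
  rw [← hj₀] at hle
  omega

end Poly

section Poly
variable {C : ℝ → E3} {t : ℤ → ℝ} {e : ℤ → E3} {n : ℕ}

/-- velocity of edge `j` -/
def vdir (C : ℝ → E3) (t : ℤ → ℝ) (j : ℤ) : E3 :=
  (t (j + 1) - t j)⁻¹ • (C (t (j + 1)) - C (t j))

/-- speed of edge `j` -/
def ell (C : ℝ → E3) (t : ℤ → ℝ) (j : ℤ) : ℝ :=
  ‖C (t (j + 1)) - C (t j)‖ / (t (j + 1) - t j)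

lemma C_int_per (hP : Function.Periodic C 1) (k : ℤ) (x : ℝ) : C (x + k) = C x := by
  have := (hP.int_mul k) x
  simpa using this

lemma n_ge_two (heper : ∀ j : ℤ, e (j + n) = e j)
    (hangle : ∀ j : ℤ, e (j - 1) ≠ e j ∧ e (j - 1) ≠ -e j) (hn : 0 < n) : 2 ≤ n := by
  by_contra h
  push_neg at h
  interval_cases n
  have h1 := heper 0
  have h2 := (hangle 1).1
  norm_num at h1
  rw [show (1:ℤ) - 1 = 0 from rfl] at h2
  exact h2 h1.symm

lemma vdir_per (hP : Function.Periodic C 1) (htper : ∀ j : ℤ, t (j + n) = t j + 1) (j : ℤ) :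
    vdir C t (j + n) = vdir C t j := by
  unfold vdir
  have h1 : (j + (n:ℤ)) + 1 = (j + 1) + n := by ring
  have h2 : C (t ((j + 1) + n)) = C (t (j + 1)) := by
    rw [htper]
    have := C_int_per hP 1 (t (j+1))
    simpa using this
  have h3 : C (t (j + n)) = C (t j) := by
    rw [htper]
    have := C_int_per hP 1 (t j)
    simpa using this
  rw [h1, h2, h3, htper, htper]
  ring_nf

lemma ell_per (hP : Function.Periodic C 1) (htper : ∀ j : ℤ, t (j + n) = t j + 1) (j : ℤ) :
    ell C t (j + n) = ell C t j := by
  unfold ell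
  have h1 : (j + (n:ℤ)) + 1 = (j + 1) + n := by ring
  have h2 : C (t ((j + 1) + n)) = C (t (j + 1)) := by
    rw [htper]; simpa using C_int_per hP 1 (t (j+1))
  have h3 : C (t (j + n)) = C (t j) := by
    rw [htper]; simpa using C_int_per hP 1 (t j)
  rw [h1, h2, h3, htper, htper]
  ring_nf

/-- a parameter has a representative in the fundamental window -/
lemma fund_rep (t0 : ℝ) (s : ℝ) : ∃ z : ℤ, s - z ∈ Set.Ico t0 (t0 + 1) := by
  refine ⟨⌊s - t0⌋, ?_, ?_⟩
  · have := Int.floor_le (s - t0); linarith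
  · have := Int.lt_floor_add_one (s - t0); linarith

/-- distinct corners have distinct images -/
lemma edge_ne (hP : Function.Periodic C 1) (hinj : Set.InjOn C (Set.Ico (t 0) (t 0 + 1)))
    (ht : StrictMono t) (htper : ∀ j : ℤ, t (j + n) = t j + 1) (h2n : 2 ≤ n) (j : ℤ) :
    C (t (j + 1)) ≠ C (t j) := by
  intro hEq
  have hlt : t j < t (j + 1) := ht (by omega)
  have hlt1 : t (j + 1) < t j + 1 := by
    have : t (j + 1) < t (j + n) := ht (by omega)
    rw [htper] at this
    exact this
  obtain ⟨z1, hz1⟩ := fund_rep (t 0) (t j)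
  obtain ⟨z2, hz2⟩ := fund_rep (t 0) (t (j + 1))
  have e1 : C (t j - z1) = C (t j) := by
    have := C_int_per hP (-z1) (t j)
    push_cast at this
    simpa [sub_eq_add_neg] using this
  have e2 : C (t (j + 1) - z2) = C (t (j + 1)) := by
    have := C_int_per hP (-z2) (t (j + 1))
    push_cast at this
    simpa [sub_eq_add_neg] using this
  have : t j - z1 = t (j + 1) - z2 := by
    apply hinj hz1 hz2
    rw [e1, e2, hEq]
  have hz : t (j + 1) - t j = (z2 - z1 : ℤ) := by push_cast; linarith
  have h0 : (0:ℝ) < ((z2 - z1 : ℤ) : ℝ) := by rw [← hz]; linarith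
  have h1 : ((z2 - z1 : ℤ) : ℝ) < 1 := by rw [← hz]; linarith
  have : (0:ℤ) < z2 - z1 := by exact_mod_cast h0
  have : (z2 - z1 : ℤ) < 1 := by exact_mod_cast h1
  omega

lemma ell_pos (hP : Function.Periodic C 1) (hinj : Set.InjOn C (Set.Ico (t 0) (t 0 + 1)))
    (ht : StrictMono t) (htper : ∀ j : ℤ, t (j + n) = t j + 1) (h2n : 2 ≤ n) (j : ℤ) :
    0 < ell C t j := by
  apply div_pos
  · rw [norm_pos_iff, sub_ne_zero]
    exact edge_ne hP hinj ht htper h2n j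
  · exact tgap_pos ht j

lemma vdir_eq (hdir : ∀ j : ℤ, C (t (j + 1)) - C (t j) = ‖C (t (j + 1)) - C (t j)‖ • e j)
    (j : ℤ) : vdir C t j = ell C t j • e j := by
  unfold vdir ell
  rw [div_eq_inv_mul, mul_smul, ← hdir j]

lemma one_add_inner_pos (heunit : ∀ j : ℤ, ‖e j‖ = 1)
    (hangle : ∀ j : ℤ, e (j - 1) ≠ e j ∧ e (j - 1) ≠ -e j) (j : ℤ) :
    0 < 1 + (inner ℝ (e (j - 1)) (e j) : ℝ) := by
  have hne : e (j - 1) + e j ≠ 0 := by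
    intro h
    exact (hangle j).2 (eq_neg_of_add_eq_zero_left h)
  have h2 : 0 < ‖e (j - 1) + e j‖ ^ 2 := pow_pos (norm_pos_iff.mpr hne) 2
  rw [norm_add_sq_real, heunit, heunit] at h2
  nlinarith [h2]

end Poly

section Poly
variable {C : ℝ → E3} {t : ℤ → ℝ} {e : ℤ → E3} {n : ℕ}

def wv (C : ℝ → E3) (t : ℤ → ℝ) (j : ℤ) : E3 := vdir C t j - vdir C t (j - 1)

def bump (C : ℝ → E3) (t : ℤ → ℝ) (δ : ℝ) (j : ℤ) (s : ℝ) : E3 :=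
  (δ * sphi ((s - t j) / δ) - max (s - t j) 0) • wv C t j

def smoothed (C : ℝ → E3) (t : ℤ → ℝ) (δ : ℝ) (s : ℝ) : E3 :=
  C s + ∑' j : ℤ, bump C t δ j s

def FF (C : ℝ → E3) (t : ℤ → ℝ) (δ : ℝ) (j : ℤ) (x : ℝ) : E3 :=
  C (t j) + (x - t j) • vdir C t (j - 1) + (δ * sphi ((x - t j) / δ)) • wv C t j

def UU (t : ℤ → ℝ) (δ : ℝ) (j : ℤ) : Set ℝ := Set.Ioo (t (j - 1) + δ) (t (j + 1) - δ)

lemma bump_scalar_eq_zero {δ s c : ℝ} (hδ : 0 < δ) (h : δ ≤ |s - c|) :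
    δ * sphi ((s - c) / δ) - max (s - c) 0 = 0 := by
  rcases le_or_gt (s - c) 0 with hle | hgt
  · have h1 : s - c ≤ -δ := by
      rcases abs_cases (s - c) with ⟨h2, _⟩ | ⟨h2, _⟩
      · nlinarith
      · linarith
    have : (s - c) / δ ≤ -1 := by
      rw [div_le_iff₀ hδ]; linarith
    rw [sphi_of_le _ this, max_eq_right hle]; ring
  · have h1 : δ ≤ s - c := by
      rcases abs_cases (s - c) with ⟨h2, _⟩ | ⟨h2, _⟩
      · linarith
      · linarith
    have : (1:ℝ) ≤ (s - c) / δ := by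
      rw [le_div_iff₀ hδ]; linarith
    rw [sphi_of_ge _ this, max_eq_left hgt.le]
    field_simp
    ring

lemma bump_eq_zero {δ s : ℝ} {j : ℤ} (hδ : 0 < δ) (h : δ ≤ |s - t j|) :
    bump C t δ j s = 0 := by
  rw [bump, bump_scalar_eq_zero hδ h, zero_smul]

lemma tsum_bump_eq (ht : StrictMono t) {δ s : ℝ} {j : ℤ} (hδ : 0 < δ)
    (hs : s ∈ UU t δ j) : ∑' k : ℤ, bump C t δ k s = bump C t δ j s := by
  apply tsum_eq_single
  intro k hk
  rcases lt_or_gt_of_ne hk with hlt | hgt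
  · -- k < j hence k ≤ j - 1, t k ≤ t (j-1) < s - δ
    have h1 : t k ≤ t (j - 1) := ht.monotone (by omega)
    have h2 : t (j - 1) + δ < s := hs.1
    apply bump_eq_zero hδ
    rw [abs_of_pos (by linarith)]
    linarith
  · have h1 : t (j + 1) ≤ t k := ht.monotone (by omega)
    have h2 : s < t (j + 1) - δ := hs.2
    apply bump_eq_zero hδ
    rw [abs_of_neg (by linarith)]
    linarith

lemma C_locally (ht : StrictMono t)
    (hlin : ∀ j : ℤ, ∀ s ∈ Set.Icc (t j) (t (j + 1)),
      C s = C (t j) + ((s - t j) / (t (j + 1) - t j)) • (C (t (j + 1)) - C (t j)))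
    (j : ℤ) (x : ℝ) (hx : x ∈ Set.Icc (t (j - 1)) (t (j + 1))) :
    C x = C (t j) + (x - t j) • vdir C t (j - 1) + (max (x - t j) 0) • wv C t j := by
  rcases le_or_gt x (t j) with hle | hgt
  · have hx1 : x ∈ Set.Icc (t (j - 1)) (t ((j - 1) + 1)) := by
      rw [show (j - 1) + 1 = j by ring]
      exact ⟨hx.1, hle⟩
    have := hlin (j - 1) x hx1
    rw [show (j - 1) + 1 = j by ring] at this
    rw [this, max_eq_right (by linarith), zero_smul, add_zero, vdir]
    have hΔ : t j - t (j - 1) ≠ 0 := by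
      have : t (j - 1) < t j := ht (by omega)
      linarith
    rw [show (j - 1) + 1 = j by ring]
    match_scalars <;> field_simp <;> ring
  · have hx1 : x ∈ Set.Icc (t j) (t (j + 1)) := ⟨hgt.le, hx.2⟩
    have := hlin j x hx1
    rw [this, max_eq_left (by linarith), wv, vdir, vdir]
    have hΔ : t (j + 1) - t j ≠ 0 := by
      have : t j < t (j + 1) := ht (by omega)
      linarith
    match_scalars <;> field_simp <;> ring

lemma smoothed_eq_FF (ht : StrictMono t)
    (hlin : ∀ j : ℤ, ∀ s ∈ Set.Icc (t j) (t (j + 1)),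
      C s = C (t j) + ((s - t j) / (t (j + 1) - t j)) • (C (t (j + 1)) - C (t j)))
    {δ s : ℝ} {j : ℤ} (hδ : 0 < δ) (hs : s ∈ UU t δ j) :
    smoothed C t δ s = FF C t δ j s := by
  rw [smoothed, tsum_bump_eq ht hδ hs]
  have hmem : s ∈ Set.Icc (t (j - 1)) (t (j + 1)) := by
    constructor
    · have := hs.1; linarith
    · have := hs.2; linarith
  rw [C_locally ht hlin j s hmem, bump, FF]
  module

end Poly

section Poly
variable {C : ℝ → E3} {t : ℤ → ℝ} {e : ℤ → E3} {n : ℕ}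

lemma UU_isOpen (t : ℤ → ℝ) (δ : ℝ) (j : ℤ) : IsOpen (UU t δ j) := isOpen_Ioo

lemma mem_UU (ht : StrictMono t) (htper : ∀ j : ℤ, t (j + n) = t j + 1) (hn : 0 < n)
    {δ : ℝ} (hδ : 0 < δ) (hδ2 : 2 * δ < gapm t n hn) (s : ℝ) : ∃ j : ℤ, s ∈ UU t δ j := by
  obtain ⟨j, h1, h2⟩ := corner_floor htper hn s
  rcases lt_or_ge s (t (j + 1) - δ) with hc | hc
  · refine ⟨j, ?_, hc⟩
    have hg := gapm_le htper hn (j - 1)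
    rw [show (j - 1) + 1 = j by ring] at hg
    linarith
  · refine ⟨j + 1, ?_, ?_⟩
    · have hg := gapm_le htper hn j
      rw [show (j + 1) - 1 = j by ring]
      linarith
    · have hg := gapm_le htper hn (j + 1)
      linarith

lemma FF_hasDerivAt {δ : ℝ} (hδ : 0 < δ) (j : ℤ) (x : ℝ) :
    HasDerivAt (FF C t δ j)
      (vdir C t (j - 1) + spsi ((x - t j) / δ) • wv C t j) x := by
  have h1 : HasDerivAt (fun y : ℝ => (y - t j) • vdir C t (j - 1)) (vdir C t (j - 1)) x := by
    have := ((hasDerivAt_id x).sub_const (t j)).smul_const (vdir C t (j - 1))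
    simpa using this
  have h2 : HasDerivAt (fun y : ℝ => (δ * sphi ((y - t j) / δ)) • wv C t j)
      (spsi ((x - t j) / δ) • wv C t j) x := by
    have ha : HasDerivAt (fun y : ℝ => (y - t j) / δ) (1 / δ) x := by
      simpa using ((hasDerivAt_id x).sub_const (t j)).div_const δ
    have hb := (sphi_hasDerivAt ((x - t j) / δ)).comp x ha
    have hc := (hb.const_mul δ).smul_const (wv C t j)
    have e : spsi ((x - t j) / δ) = δ * (spsi ((x - t j) / δ) * (1 / δ)) := by field_simp
    rw [e]; exact hc
  have := (h1.add h2).const_add (C (t j))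
  refine HasDerivAt.congr_of_eventuallyEq this (Filter.Eventually.of_forall fun y => ?_)
  show _ = C (t j) + ((y - t j) • vdir C t (j - 1) + (δ * sphi ((y - t j) / δ)) • wv C t j)
  rw [FF]
  abel

lemma smoothed_eventuallyEq_FF (ht : StrictMono t)
    (hlin : ∀ j : ℤ, ∀ s ∈ Set.Icc (t j) (t (j + 1)),
      C s = C (t j) + ((s - t j) / (t (j + 1) - t j)) • (C (t (j + 1)) - C (t j)))
    {δ s : ℝ} {j : ℤ} (hδ : 0 < δ) (hs : s ∈ UU t δ j) :
    smoothed C t δ =ᶠ[nhds s] FF C t δ j := by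
  filter_upwards [(UU_isOpen t δ j).mem_nhds hs] with x hx
  exact smoothed_eq_FF ht hlin hδ hx

lemma smoothed_hasDerivAt (ht : StrictMono t)
    (hlin : ∀ j : ℤ, ∀ s ∈ Set.Icc (t j) (t (j + 1)),
      C s = C (t j) + ((s - t j) / (t (j + 1) - t j)) • (C (t (j + 1)) - C (t j)))
    {δ s : ℝ} {j : ℤ} (hδ : 0 < δ) (hs : s ∈ UU t δ j) :
    HasDerivAt (smoothed C t δ)
      (vdir C t (j - 1) + spsi ((s - t j) / δ) • wv C t j) s := by
  exact (FF_hasDerivAt hδ j s).congr_of_eventuallyEq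
    (smoothed_eventuallyEq_FF ht hlin hδ hs)

lemma deriv_smoothed (ht : StrictMono t)
    (hlin : ∀ j : ℤ, ∀ s ∈ Set.Icc (t j) (t (j + 1)),
      C s = C (t j) + ((s - t j) / (t (j + 1) - t j)) • (C (t (j + 1)) - C (t j)))
    {δ s : ℝ} {j : ℤ} (hδ : 0 < δ) (hs : s ∈ UU t δ j) :
    deriv (smoothed C t δ) s
      = vdir C t (j - 1) + spsi ((s - t j) / δ) • wv C t j :=
  (smoothed_hasDerivAt ht hlin hδ hs).deriv

/-- the derivative written as a nonnegative combination of the two edge directions -/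
lemma deriv_smoothed_comb (ht : StrictMono t)
    (hlin : ∀ j : ℤ, ∀ s ∈ Set.Icc (t j) (t (j + 1)),
      C s = C (t j) + ((s - t j) / (t (j + 1) - t j)) • (C (t (j + 1)) - C (t j)))
    (hdir : ∀ j : ℤ, C (t (j + 1)) - C (t j) = ‖C (t (j + 1)) - C (t j)‖ • e j)
    {δ s : ℝ} {j : ℤ} (hδ : 0 < δ) (hs : s ∈ UU t δ j) :
    ∃ a b : ℝ, 0 ≤ a ∧ 0 ≤ b ∧
      a + b = (1 - spsi ((s - t j) / δ)) * ell C t (j - 1) + spsi ((s - t j) / δ) * ell C t j ∧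
      deriv (smoothed C t δ) s = a • e (j - 1) + b • e j := by
  refine ⟨(1 - spsi ((s - t j) / δ)) * ell C t (j - 1), spsi ((s - t j) / δ) * ell C t j,
    mul_nonneg (by linarith [spsi_le_one ((s - t j) / δ)]) ?_,
    mul_nonneg (spsi_nonneg _) ?_, rfl, ?_⟩
  · exact div_nonneg (norm_nonneg _) (tgap_pos ht _).le
  · exact div_nonneg (norm_nonneg _) (tgap_pos ht _).le
  · rw [deriv_smoothed ht hlin hδ hs, wv, vdir_eq hdir, vdir_eq hdir]
    module

end Poly

section Poly
variable {C : ℝ → E3} {t : ℤ → ℝ} {e : ℤ → E3} {n : ℕ}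

/-- positivity of the inner product with the angle bisector direction -/
lemma comb_inner_pos (heunit : ∀ j : ℤ, ‖e j‖ = 1)
    (hangle : ∀ j : ℤ, e (j - 1) ≠ e j ∧ e (j - 1) ≠ -e j)
    {j : ℤ} {a b : ℝ} (ha : 0 ≤ a) (hb : 0 ≤ b) (hab : 0 < a + b) :
    0 < (inner ℝ (a • e (j - 1) + b • e j) (e (j - 1) + e j) : ℝ) := by
  have hc := one_add_inner_pos heunit hangle j
  have h1 : (inner ℝ (a • e (j - 1) + b • e j) (e (j - 1) + e j) : ℝ)
      = (a + b) * (1 + (inner ℝ (e (j - 1)) (e j) : ℝ)) := by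
    rw [inner_add_left, inner_add_right, inner_add_right, real_inner_smul_left,
      real_inner_smul_left, real_inner_smul_left, real_inner_smul_left,
      real_inner_self_eq_norm_sq, real_inner_self_eq_norm_sq, heunit, heunit,
      real_inner_comm (e j) (e (j-1))]
    ring
  rw [h1]
  positivity

lemma comb_ne_zero (heunit : ∀ j : ℤ, ‖e j‖ = 1)
    (hangle : ∀ j : ℤ, e (j - 1) ≠ e j ∧ e (j - 1) ≠ -e j)
    {j : ℤ} {a b : ℝ} (ha : 0 ≤ a) (hb : 0 ≤ b) (hab : 0 < a + b) :
    a • e (j - 1) + b • e j ≠ 0 := by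
  intro h
  have := comb_inner_pos heunit hangle (j := j) ha hb hab
  rw [h, inner_zero_left] at this
  exact lt_irrefl 0 this

lemma ab_sum_pos (hP : Function.Periodic C 1) (hinj : Set.InjOn C (Set.Ico (t 0) (t 0 + 1)))
    (ht : StrictMono t) (htper : ∀ j : ℤ, t (j + n) = t j + 1) (h2n : 2 ≤ n)
    {j : ℤ} (u : ℝ) :
    0 < (1 - spsi u) * ell C t (j - 1) + spsi u * ell C t j := by
  have h1 := ell_pos hP hinj ht htper h2n (j - 1)
  have h2 := ell_pos hP hinj ht htper h2n j
  have h3 := spsi_nonneg u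
  have h4 := spsi_le_one u
  rcases lt_or_ge (spsi u) 1 with h5 | h5
  · nlinarith [mul_pos (by linarith : (0:ℝ) < 1 - spsi u) h1, mul_nonneg h3 h2.le]
  · nlinarith [mul_nonneg (by linarith : (0:ℝ) ≤ 1 - spsi u) h1.le]

lemma deriv_smoothed_ne_zero (hP : Function.Periodic C 1)
    (hinj : Set.InjOn C (Set.Ico (t 0) (t 0 + 1)))
    (ht : StrictMono t) (htper : ∀ j : ℤ, t (j + n) = t j + 1) (h2n : 2 ≤ n)
    (hlin : ∀ j : ℤ, ∀ s ∈ Set.Icc (t j) (t (j + 1)),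
      C s = C (t j) + ((s - t j) / (t (j + 1) - t j)) • (C (t (j + 1)) - C (t j)))
    (hdir : ∀ j : ℤ, C (t (j + 1)) - C (t j) = ‖C (t (j + 1)) - C (t j)‖ • e j)
    (heunit : ∀ j : ℤ, ‖e j‖ = 1)
    (hangle : ∀ j : ℤ, e (j - 1) ≠ e j ∧ e (j - 1) ≠ -e j)
    {δ s : ℝ} {j : ℤ} (hδ : 0 < δ) (hs : s ∈ UU t δ j) :
    deriv (smoothed C t δ) s ≠ 0 := by
  obtain ⟨a, b, ha, hb, hab, hEq⟩ := deriv_smoothed_comb ht hlin hdir hδ hs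
  rw [hEq]
  exact comb_ne_zero heunit hangle ha hb
    (hab ▸ ab_sum_pos hP hinj ht htper h2n _)

lemma ut_smoothed_mem (hP : Function.Periodic C 1)
    (hinj : Set.InjOn C (Set.Ico (t 0) (t 0 + 1)))
    (ht : StrictMono t) (htper : ∀ j : ℤ, t (j + n) = t j + 1) (h2n : 2 ≤ n)
    (hlin : ∀ j : ℤ, ∀ s ∈ Set.Icc (t j) (t (j + 1)),
      C s = C (t j) + ((s - t j) / (t (j + 1) - t j)) • (C (t (j + 1)) - C (t j)))
    (hdir : ∀ j : ℤ, C (t (j + 1)) - C (t j) = ‖C (t (j + 1)) - C (t j)‖ • e j)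
    (heunit : ∀ j : ℤ, ‖e j‖ = 1)
    (hangle : ∀ j : ℤ, e (j - 1) ≠ e j ∧ e (j - 1) ≠ -e j)
    {δ s : ℝ} {j : ℤ} (hδ : 0 < δ) (hs : s ∈ UU t δ j) :
    ut (smoothed C t δ) s ∈ shorterArc (e (j - 1)) (e j) := by
  obtain ⟨a, b, ha, hb, hab, hEq⟩ := deriv_smoothed_comb ht hlin hdir hδ hs
  refine ⟨a, b, ha, hb, ?_, ?_⟩
  · exact comb_ne_zero heunit hangle ha hb (hab ▸ ab_sum_pos hP hinj ht htper h2n _)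
  · rw [ut, hEq]

lemma FF_contDiff {δ : ℝ} (hδ : 0 < δ) (j : ℤ) : ContDiff ℝ 1 (FF C t δ j) := by
  unfold FF
  apply ContDiff.add
  apply ContDiff.add
  · exact contDiff_const
  · exact (contDiff_id.sub contDiff_const).smul contDiff_const
  · refine ContDiff.fun_smul ?_ contDiff_const
    exact contDiff_const.mul (sphi_contDiff.comp ((contDiff_id.sub contDiff_const).div_const δ))

lemma smoothed_contDiff (ht : StrictMono t) (htper : ∀ j : ℤ, t (j + n) = t j + 1)
    (hn : 0 < n)
    (hlin : ∀ j : ℤ, ∀ s ∈ Set.Icc (t j) (t (j + 1)),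
      C s = C (t j) + ((s - t j) / (t (j + 1) - t j)) • (C (t (j + 1)) - C (t j)))
    {δ : ℝ} (hδ : 0 < δ) (hδ2 : 2 * δ < gapm t n hn) :
    ContDiff ℝ 1 (smoothed C t δ) := by
  rw [contDiff_iff_contDiffAt]
  intro s
  obtain ⟨j, hj⟩ := mem_UU ht htper hn hδ hδ2 s
  exact ((FF_contDiff hδ j).contDiffAt).congr_of_eventuallyEq
    (smoothed_eventuallyEq_FF ht hlin hδ hj)

lemma wv_per (hP : Function.Periodic C 1) (htper : ∀ j : ℤ, t (j + n) = t j + 1) (j : ℤ) :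
    wv C t (j + n) = wv C t j := by
  unfold wv
  rw [vdir_per hP htper, show (j + (n:ℤ)) - 1 = (j - 1) + n by ring, vdir_per hP htper]

lemma bump_per (hP : Function.Periodic C 1) (htper : ∀ j : ℤ, t (j + n) = t j + 1)
    (δ : ℝ) (j : ℤ) (s : ℝ) : bump C t δ j (s + 1) = bump C t δ (j - n) s := by
  unfold bump
  have h1 : t j = t (j - n) + 1 := by
    have := htper (j - n)
    rw [show (j - (n:ℤ)) + n = j by ring] at this
    rw [this]
  have h2 : wv C t j = wv C t (j - n) := by
    have := wv_per hP htper (j - n)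
    rw [show (j - (n:ℤ)) + n = j by ring] at this
    rw [this]
  rw [h1, h2]
  ring_nf

lemma smoothed_periodic (hP : Function.Periodic C 1)
    (htper : ∀ j : ℤ, t (j + n) = t j + 1) (δ : ℝ) :
    Function.Periodic (smoothed C t δ) 1 := by
  intro s
  unfold smoothed
  rw [hP s]
  congr 1
  calc ∑' j : ℤ, bump C t δ j (s + 1) = ∑' j : ℤ, bump C t δ (j - n) s := by
        exact tsum_congr (fun j => bump_per hP htper δ j s)
    _ = ∑' j : ℤ, bump C t δ j s := by
        exact (Equiv.subRight (n:ℤ)).tsum_eq (fun k => bump C t δ k s)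

lemma smoothed_sub_C_norm (ht : StrictMono t) (htper : ∀ j : ℤ, t (j + n) = t j + 1)
    (hn : 0 < n) {δ : ℝ} {Wb : ℝ} (hW : ∀ j : ℤ, ‖wv C t j‖ ≤ Wb)
    (hδ : 0 < δ) (hδ2 : 2 * δ < gapm t n hn) (s : ℝ) :
    ‖smoothed C t δ s - C s‖ ≤ 2 * δ * Wb := by
  obtain ⟨j, hj⟩ := mem_UU ht htper hn hδ hδ2 s
  have h1 : smoothed C t δ s - C s = bump C t δ j s := by
    rw [smoothed, tsum_bump_eq ht hδ hj]
    abel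
  rw [h1, bump, norm_smul]
  have h2 : |δ * sphi ((s - t j) / δ) - max (s - t j) 0| ≤ 2 * δ := by
    have h3 : max (s - t j) 0 = δ * max ((s - t j) / δ) 0 := by
      rw [mul_max_of_nonneg _ _ hδ.le]
      rw [mul_div_cancel₀ _ hδ.ne', mul_zero]
    rw [h3, ← mul_sub, abs_mul, abs_of_pos hδ]
    have h4 := sphi_sub_posPart_abs ((s - t j) / δ)
    nlinarith
  have h5 : (0:ℝ) ≤ ‖wv C t j‖ := norm_nonneg _
  calc |δ * sphi ((s - t j) / δ) - max (s - t j) 0| * ‖wv C t j‖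
      ≤ (2 * δ) * Wb := by
        apply mul_le_mul h2 (hW j) h5
        positivity
  
lemma continuous_C (ht : StrictMono t) (htper : ∀ j : ℤ, t (j + n) = t j + 1) (hn : 0 < n)
    (hlin : ∀ j : ℤ, ∀ s ∈ Set.Icc (t j) (t (j + 1)),
      C s = C (t j) + ((s - t j) / (t (j + 1) - t j)) • (C (t (j + 1)) - C (t j))) :
    Continuous C := by
  rw [continuous_iff_continuousAt]
  intro s
  obtain ⟨j, h1, h2⟩ := corner_floor htper hn s
  have hopen : IsOpen (Set.Ioo (t (j - 1)) (t (j + 1))) := isOpen_Ioo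
  have hmem : s ∈ Set.Ioo (t (j - 1)) (t (j + 1)) := by
    constructor
    · exact lt_of_lt_of_le (ht (by omega)) h1
    · exact h2
  have hcont : Continuous (fun x => C (t j) + (x - t j) • vdir C t (j - 1)
      + (max (x - t j) 0) • wv C t j) := by
    apply Continuous.add
    apply Continuous.add continuous_const
    · exact (continuous_id.sub continuous_const).smul continuous_const
    · exact ((continuous_id.sub continuous_const).max continuous_const).smul continuous_const
  apply hcont.continuousAt.congr
  filter_upwards [hopen.mem_nhds hmem] with x hx
  exact (C_locally ht hlin j x ⟨hx.1.le, hx.2.le⟩).symm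

/-- the maximum edge speed -/
def ellmax (C : ℝ → E3) (t : ℤ → ℝ) (n : ℕ) (hn : 0 < n) : ℝ :=
  (Finset.range n).sup' (by simp [Finset.nonempty_range_iff]; omega) (fun r => ell C t r)

lemma ell_le_ellmax (hP : Function.Periodic C 1) (htper : ∀ j : ℤ, t (j + n) = t j + 1)
    (hn : 0 < n) (j : ℤ) : ell C t j ≤ ellmax C t n hn := by
  obtain ⟨r, hr, he⟩ := periodic_int_reduce (fun j => ell C t j) (ell_per hP htper) hn j
  rw [he]
  unfold ellmax
  exact Finset.le_sup' (fun r : ℕ => ell C t r) (Finset.mem_range.mpr hr)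

/-- the maximum corner turn -/
def wmax (C : ℝ → E3) (t : ℤ → ℝ) (n : ℕ) (hn : 0 < n) : ℝ :=
  (Finset.range n).sup' (by simp [Finset.nonempty_range_iff]; omega) (fun r => ‖wv C t r‖)

lemma wv_le_wmax (hP : Function.Periodic C 1) (htper : ∀ j : ℤ, t (j + n) = t j + 1)
    (hn : 0 < n) (j : ℤ) : ‖wv C t j‖ ≤ wmax C t n hn := by
  obtain ⟨r, hr, he⟩ := periodic_int_reduce (fun j => wv C t j) (wv_per hP htper) hn j
  rw [he]
  unfold wmax
  exact Finset.le_sup' (fun r : ℕ => ‖wv C t r‖) (Finset.mem_range.mpr hr)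

lemma wmax_nonneg (hn : 0 < n) : 0 ≤ wmax C t n hn := by
  unfold wmax
  have h0 : (0:ℕ) ∈ Finset.range n := Finset.mem_range.mpr hn
  exact le_trans (norm_nonneg (wv C t (0:ℕ)))
    (Finset.le_sup' (fun r : ℕ => ‖wv C t r‖) h0)

/-- norm bound for the derivative -/
lemma deriv_smoothed_norm_le (hP : Function.Periodic C 1)
    (ht : StrictMono t) (htper : ∀ j : ℤ, t (j + n) = t j + 1) (hn : 0 < n)
    (hlin : ∀ j : ℤ, ∀ s ∈ Set.Icc (t j) (t (j + 1)),
      C s = C (t j) + ((s - t j) / (t (j + 1) - t j)) • (C (t (j + 1)) - C (t j)))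
    (hdir : ∀ j : ℤ, C (t (j + 1)) - C (t j) = ‖C (t (j + 1)) - C (t j)‖ • e j)
    (heunit : ∀ j : ℤ, ‖e j‖ = 1)
    {δ s : ℝ} {j : ℤ} (hδ : 0 < δ) (hs : s ∈ UU t δ j) :
    ‖deriv (smoothed C t δ) s‖ ≤ ellmax C t n hn := by
  obtain ⟨a, b, ha, hb, hab, hEq⟩ := deriv_smoothed_comb ht hlin hdir hδ hs
  rw [hEq]
  calc ‖a • e (j - 1) + b • e j‖ ≤ ‖a • e (j - 1)‖ + ‖b • e j‖ := norm_add_le _ _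
    _ = a + b := by rw [norm_smul, norm_smul, heunit, heunit, Real.norm_eq_abs,
        Real.norm_eq_abs, abs_of_nonneg ha, abs_of_nonneg hb]; ring
    _ ≤ ellmax C t n hn := by
        rw [hab]
        have h1 := ell_le_ellmax hP htper hn (j - 1)
        have h2 := ell_le_ellmax hP htper hn j
        have h3 := spsi_nonneg ((s - t j) / δ)
        have h4 := spsi_le_one ((s - t j) / δ)
        nlinarith

end Poly

section Poly
variable {C : ℝ → E3} {t : ℤ → ℝ} {e : ℤ → E3} {n : ℕ}

/-- the compact set of "circularly separated" parameter pairs -/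
def sep (t : ℤ → ℝ) (δ₀ : ℝ) : Set (ℝ × ℝ) :=
  {p | p.1 ∈ Set.Icc (t 0) (t 0 + 1) ∧ p.2 ∈ Set.Icc (t 0) (t 0 + 1) ∧
    ∀ j : ℤ, ¬(p.1 ∈ UU t δ₀ j ∧ p.2 ∈ UU t δ₀ j) ∧
      ¬(p.2 ∈ UU t δ₀ j ∧ p.1 + 1 ∈ UU t δ₀ j) ∧
      ¬(p.1 ∈ UU t δ₀ j ∧ p.2 + 1 ∈ UU t δ₀ j)}

lemma sep_isCompact (t : ℤ → ℝ) (δ₀ : ℝ) : IsCompact (sep t δ₀) := by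
  have hsub : sep t δ₀ ⊆ (Set.Icc (t 0) (t 0 + 1)) ×ˢ (Set.Icc (t 0) (t 0 + 1)) := by
    intro p hp
    exact ⟨hp.1, hp.2.1⟩
  apply IsCompact.of_isClosed_subset (isCompact_Icc.prod isCompact_Icc) ?_ hsub
  have : sep t δ₀ =
      ((Set.Icc (t 0) (t 0 + 1)) ×ˢ (Set.Icc (t 0) (t 0 + 1))) ∩
      (⋂ j : ℤ,
        ((fun p : ℝ × ℝ => (p.1, p.2)) ⁻¹' ((UU t δ₀ j) ×ˢ (UU t δ₀ j)))ᶜ ∩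
        (((fun p : ℝ × ℝ => (p.2, p.1 + 1)) ⁻¹' ((UU t δ₀ j) ×ˢ (UU t δ₀ j)))ᶜ ∩
        ((fun p : ℝ × ℝ => (p.1, p.2 + 1)) ⁻¹' ((UU t δ₀ j) ×ˢ (UU t δ₀ j)))ᶜ)) := by
    ext p
    simp only [sep, Set.mem_setOf_eq, Set.mem_inter_iff, Set.mem_prod, Set.mem_iInter,
      Set.mem_compl_iff, Set.mem_preimage]
    constructor
    · rintro ⟨h1, h2, h3⟩
      exact ⟨⟨h1, h2⟩, fun j => ⟨(h3 j).1, (h3 j).2.1, (h3 j).2.2⟩⟩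
    · rintro ⟨⟨h1, h2⟩, h3⟩
      exact ⟨h1, h2, fun j => ⟨(h3 j).1, (h3 j).2.1, (h3 j).2.2⟩⟩
  rw [this]
  apply IsClosed.inter
  · exact (isClosed_Icc.prod isClosed_Icc)
  · apply isClosed_iInter
    intro j
    have hopen : IsOpen ((UU t δ₀ j) ×ˢ (UU t δ₀ j)) := (UU_isOpen t δ₀ j).prod (UU_isOpen t δ₀ j)
    refine IsClosed.inter ?_ (IsClosed.inter ?_ ?_)
    · exact (hopen.preimage (by fun_prop)).isClosed_compl
    · exact (hopen.preimage (by fun_prop)).isClosed_compl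
    · exact (hopen.preimage (by fun_prop)).isClosed_compl

/-- on `sep`, the polygon takes distinct values -/
lemma sep_ne (hP : Function.Periodic C 1) (hinj : Set.InjOn C (Set.Ico (t 0) (t 0 + 1)))
    (ht : StrictMono t) (htper : ∀ j : ℤ, t (j + n) = t j + 1) (hn : 0 < n)
    {δ₀ : ℝ} (hδ₀ : 0 < δ₀) (hδ₀2 : 2 * δ₀ < gapm t n hn) :
    ∀ p ∈ sep t δ₀, C p.1 ≠ C p.2 := by
  rintro ⟨s, u⟩ ⟨hs, hu, hcond⟩ hEq
  simp only at hEq hcond hs hu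
  rcases lt_or_eq_of_le hs.2 with hs1 | hs1
  · rcases lt_or_eq_of_le hu.2 with hu1 | hu1
    · -- both interior: s = u
      have hsu : s = u := hinj ⟨hs.1, hs1⟩ ⟨hu.1, hu1⟩ hEq
      obtain ⟨j, hj⟩ := mem_UU ht htper hn hδ₀ hδ₀2 s
      exact (hcond j).1 ⟨hj, hsu ▸ hj⟩
    · -- u = t 0 + 1: C s = C (t 0), so s = t 0
      have hCu : C u = C (t 0) := by
        rw [hu1]
        exact hP (t 0)
      have hst : s = t 0 := by
        apply hinj ⟨hs.1, hs1⟩ ⟨le_refl _, by linarith [gapm_pos ht hn]⟩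
        rw [hEq, hCu]
      obtain ⟨j, hj⟩ := mem_UU ht htper hn hδ₀ hδ₀2 u
      apply (hcond j).2.1
      refine ⟨hj, ?_⟩
      rw [hst, ← hu1]
      exact hj
  · rcases lt_or_eq_of_le hu.2 with hu1 | hu1
    · have hCs : C s = C (t 0) := by
        rw [hs1]
        exact hP (t 0)
      have hut : u = t 0 := by
        apply hinj ⟨hu.1, hu1⟩ ⟨le_refl _, by linarith [gapm_pos ht hn]⟩
        rw [← hEq, hCs]
      obtain ⟨j, hj⟩ := mem_UU ht htper hn hδ₀ hδ₀2 s
      apply (hcond j).2.2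
      refine ⟨hj, ?_⟩
      rw [hut, ← hs1]
      exact hj
    · obtain ⟨j, hj⟩ := mem_UU ht htper hn hδ₀ hδ₀2 s
      exact (hcond j).1 ⟨hj, (hs1.trans hu1.symm) ▸ hj⟩

/-- the uniform separation constant -/
lemma exists_sep_const (hP : Function.Periodic C 1)
    (hinj : Set.InjOn C (Set.Ico (t 0) (t 0 + 1)))
    (ht : StrictMono t) (htper : ∀ j : ℤ, t (j + n) = t j + 1) (hn : 0 < n)
    (hlin : ∀ j : ℤ, ∀ s ∈ Set.Icc (t j) (t (j + 1)),
      C s = C (t j) + ((s - t j) / (t (j + 1) - t j)) • (C (t (j + 1)) - C (t j)))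
    {δ₀ : ℝ} (hδ₀ : 0 < δ₀) (hδ₀2 : 2 * δ₀ < gapm t n hn) :
    ∃ m : ℝ, 0 < m ∧ ∀ p ∈ sep t δ₀, m ≤ ‖C p.1 - C p.2‖ := by
  rcases Set.eq_empty_or_nonempty (sep t δ₀) with hemp | hne
  · exact ⟨1, one_pos, fun p hp => absurd hp (by rw [hemp]; exact Set.notMem_empty p)⟩
  · have hcont : ContinuousOn (fun p : ℝ × ℝ => ‖C p.1 - C p.2‖) (sep t δ₀) := by
      apply Continuous.continuousOn
      exact (((continuous_C ht htper hn hlin).comp continuous_fst).sub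
        ((continuous_C ht htper hn hlin).comp continuous_snd)).norm
    obtain ⟨p₀, hp₀, hmin⟩ := (sep_isCompact t δ₀).exists_isMinOn hne hcont
    refine ⟨‖C p₀.1 - C p₀.2‖, ?_, fun p hp => hmin hp⟩
    rw [norm_pos_iff, sub_ne_zero]
    exact sep_ne hP hinj ht htper hn hδ₀ hδ₀2 p₀ hp₀

end Poly

section Poly
variable {C : ℝ → E3} {t : ℤ → ℝ} {e : ℤ → E3} {n : ℕ}

/-- the closed corner neighborhoods -/
def VV (t : ℤ → ℝ) (δ : ℝ) (j : ℤ) : Set ℝ :=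
  Set.Icc (t (j - 1) + 2 * δ) (t (j + 1) - 2 * δ)

lemma VV_subset_UU {δ : ℝ} (hδ : 0 < δ) (j : ℤ) : VV t δ j ⊆ UU t δ j := by
  intro x hx
  exact ⟨by linarith [hx.1], by linarith [hx.2]⟩

lemma UU_subset_VV {δ δ₀ : ℝ} (hδ : 2 * δ ≤ δ₀) (j : ℤ) : UU t δ₀ j ⊆ VV t δ j := by
  intro x hx
  exact ⟨by linarith [hx.1], by linarith [hx.2]⟩

/-- strict monotonicity of the bisector coordinate on a corner window -/
lemma smoothed_strictMono (hP : Function.Periodic C 1)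
    (hinj : Set.InjOn C (Set.Ico (t 0) (t 0 + 1)))
    (ht : StrictMono t) (htper : ∀ j : ℤ, t (j + n) = t j + 1) (h2n : 2 ≤ n) (hn : 0 < n)
    (hlin : ∀ j : ℤ, ∀ s ∈ Set.Icc (t j) (t (j + 1)),
      C s = C (t j) + ((s - t j) / (t (j + 1) - t j)) • (C (t (j + 1)) - C (t j)))
    (hdir : ∀ j : ℤ, C (t (j + 1)) - C (t j) = ‖C (t (j + 1)) - C (t j)‖ • e j)
    (heunit : ∀ j : ℤ, ‖e j‖ = 1)
    (hangle : ∀ j : ℤ, e (j - 1) ≠ e j ∧ e (j - 1) ≠ -e j)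
    {δ : ℝ} (hδ : 0 < δ) (hδ2 : 2 * δ < gapm t n hn) (j : ℤ) :
    StrictMonoOn (fun x => (inner ℝ (e (j - 1) + e j) (smoothed C t δ x) : ℝ)) (VV t δ j) := by
  have hconv : Convex ℝ (VV t δ j) := convex_Icc _ _
  apply strictMonoOn_of_deriv_pos hconv
  · apply Continuous.continuousOn
    exact (continuous_const.inner (smoothed_contDiff ht htper hn hlin hδ hδ2).continuous)
  · intro x hx
    simp only [VV, interior_Icc] at hx
    have hxU : x ∈ UU t δ j := VV_subset_UU hδ j ⟨hx.1.le, hx.2.le⟩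
    have hd := smoothed_hasDerivAt ht hlin hδ hxU
    have hf : HasDerivAt (fun x => (inner ℝ (e (j - 1) + e j) (smoothed C t δ x) : ℝ))
        (inner ℝ (e (j - 1) + e j) (deriv (smoothed C t δ) x) : ℝ) x := by
      have h2 : deriv (smoothed C t δ) x = vdir C t (j - 1) + spsi ((x - t j) / δ) • wv C t j :=
        hd.deriv
      rw [h2]
      exact (innerSL ℝ (e (j - 1) + e j)).hasFDerivAt.comp_hasDerivAt x hd
    rw [hf.deriv]
    obtain ⟨a, b, ha, hb, hab, hEq⟩ := deriv_smoothed_comb ht hlin hdir hδ hxU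
    rw [hEq, real_inner_comm]
    exact comb_inner_pos heunit hangle ha hb (hab ▸ ab_sum_pos hP hinj ht htper h2n _)

/-- injectivity of the smoothing on corner windows -/
lemma smoothed_injOn_VV (hP : Function.Periodic C 1)
    (hinj : Set.InjOn C (Set.Ico (t 0) (t 0 + 1)))
    (ht : StrictMono t) (htper : ∀ j : ℤ, t (j + n) = t j + 1) (h2n : 2 ≤ n) (hn : 0 < n)
    (hlin : ∀ j : ℤ, ∀ s ∈ Set.Icc (t j) (t (j + 1)),
      C s = C (t j) + ((s - t j) / (t (j + 1) - t j)) • (C (t (j + 1)) - C (t j)))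
    (hdir : ∀ j : ℤ, C (t (j + 1)) - C (t j) = ‖C (t (j + 1)) - C (t j)‖ • e j)
    (heunit : ∀ j : ℤ, ‖e j‖ = 1)
    (hangle : ∀ j : ℤ, e (j - 1) ≠ e j ∧ e (j - 1) ≠ -e j)
    {δ : ℝ} (hδ : 0 < δ) (hδ2 : 2 * δ < gapm t n hn) (j : ℤ)
    {x y : ℝ} (hx : x ∈ VV t δ j) (hy : y ∈ VV t δ j)
    (hEq : smoothed C t δ x = smoothed C t δ y) : x = y := by
  have := (smoothed_strictMono hP hinj ht htper h2n hn hlin hdir heunit hangle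
    hδ hδ2 j).injOn hx hy
  apply this
  simp only [hEq]

/-- global injectivity of the smoothing -/
lemma smoothed_injOn (hP : Function.Periodic C 1)
    (hinj : Set.InjOn C (Set.Ico (t 0) (t 0 + 1)))
    (ht : StrictMono t) (htper : ∀ j : ℤ, t (j + n) = t j + 1) (h2n : 2 ≤ n) (hn : 0 < n)
    (hlin : ∀ j : ℤ, ∀ s ∈ Set.Icc (t j) (t (j + 1)),
      C s = C (t j) + ((s - t j) / (t (j + 1) - t j)) • (C (t (j + 1)) - C (t j)))
    (hdir : ∀ j : ℤ, C (t (j + 1)) - C (t j) = ‖C (t (j + 1)) - C (t j)‖ • e j)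
    (heunit : ∀ j : ℤ, ‖e j‖ = 1)
    (hangle : ∀ j : ℤ, e (j - 1) ≠ e j ∧ e (j - 1) ≠ -e j)
    {δ δ₀ m Wb : ℝ} (hδ : 0 < δ) (hδ2 : 2 * δ < gapm t n hn)
    (hδ₀ : 2 * δ ≤ δ₀)
    (hm : ∀ p ∈ sep t δ₀, m ≤ ‖C p.1 - C p.2‖)
    (hW : ∀ j : ℤ, ‖wv C t j‖ ≤ Wb)
    (hWm : 4 * δ * Wb < m) :
    Set.InjOn (smoothed C t δ) (Set.Ico (t 0) (t 0 + 1)) := by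
  intro s hs u hu hEq
  by_cases hA : ∃ j : ℤ, s ∈ VV t δ j ∧ u ∈ VV t δ j
  · obtain ⟨j, h1, h2⟩ := hA
    exact smoothed_injOn_VV hP hinj ht htper h2n hn hlin hdir heunit hangle hδ hδ2 j h1 h2 hEq
  by_cases hB : ∃ j : ℤ, u ∈ VV t δ j ∧ s + 1 ∈ VV t δ j
  · obtain ⟨j, h1, h2⟩ := hB
    have hper : smoothed C t δ (s + 1) = smoothed C t δ s :=
      smoothed_periodic hP htper δ s
    have : u = s + 1 := smoothed_injOn_VV hP hinj ht htper h2n hn hlin hdir heunit hangle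
      hδ hδ2 j h1 h2 (by rw [hper, ← hEq])
    exfalso
    have := hu.2
    have := hs.1
    linarith
  by_cases hD : ∃ j : ℤ, s ∈ VV t δ j ∧ u + 1 ∈ VV t δ j
  · obtain ⟨j, h1, h2⟩ := hD
    have hper : smoothed C t δ (u + 1) = smoothed C t δ u :=
      smoothed_periodic hP htper δ u
    have : s = u + 1 := smoothed_injOn_VV hP hinj ht htper h2n hn hlin hdir heunit hangle
      hδ hδ2 j h1 h2 (by rw [hper, hEq])
    exfalso
    have := hs.2
    have := hu.1
    linarith
  · exfalso
    push_neg at hA hB hD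
    have hsep : (s, u) ∈ sep t δ₀ := by
      refine ⟨⟨hs.1, hs.2.le⟩, ⟨hu.1, hu.2.le⟩, fun j => ⟨?_, ?_, ?_⟩⟩
      · rintro ⟨h1, h2⟩
        exact hA j (UU_subset_VV hδ₀ j h1) (UU_subset_VV hδ₀ j h2)
      · rintro ⟨h1, h2⟩
        exact hB j (UU_subset_VV hδ₀ j h1) (UU_subset_VV hδ₀ j h2)
      · rintro ⟨h1, h2⟩
        exact hD j (UU_subset_VV hδ₀ j h1) (UU_subset_VV hδ₀ j h2)
    have h1 := hm (s, u) hsep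
    have h2 := smoothed_sub_C_norm ht htper hn hW hδ hδ2 s
    have h3 := smoothed_sub_C_norm ht htper hn hW hδ hδ2 u
    have key : C s - C u = (C s - smoothed C t δ s) + (smoothed C t δ u - C u) := by
      rw [hEq]; abel
    have h4 : ‖C s - C u‖ ≤ ‖C s - smoothed C t δ s‖ + ‖smoothed C t δ u - C u‖ := by
      rw [key]; exact norm_add_le _ _
    have h5 : ‖C s - smoothed C t δ s‖ = ‖smoothed C t δ s - C s‖ := norm_sub_rev _ _
    simp only at h1
    linarith

end Poly

section Poly
variable {C : ℝ → E3} {t : ℤ → ℝ} {e : ℤ → E3} {n : ℕ}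

/-- the Gauss integrand numerator for the smoothed curve -/
def numint (C : ℝ → E3) (t : ℤ → ℝ) (δ : ℝ) (s u : ℝ) : ℝ :=
  dot3 (cross3 (deriv (smoothed C t δ) s) (deriv (smoothed C t δ) u))
    (smoothed C t δ s - smoothed C t δ u)

lemma cross3_antisymm (v w : E3) : cross3 w v = -cross3 v w := by
  ext i
  fin_cases i <;> simp [cross3] <;> ring

lemma num_symm (C : ℝ → E3) (t : ℤ → ℝ) (δ : ℝ) (s u : ℝ) :
    numint C t δ s u = numint C t δ u s := by
  unfold numint dot3
  rw [cross3_antisymm, inner_neg_left, ← inner_neg_right]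
  congr 1
  abel

lemma per_int {f : ℝ → E3} (hf : Function.Periodic f 1) (k : ℤ) (x : ℝ) : f (x + k) = f x := by
  simpa using (hf.int_mul k) x

lemma deriv_per_int {f : ℝ → E3} (hf : Function.Periodic f 1) (k : ℤ) (x : ℝ) :
    deriv f (x + k) = deriv f x := by
  have h1 : deriv (fun y => f (y + (k:ℝ))) x = deriv f (x + k) := by
    exact deriv_comp_add_const f (k:ℝ) x
  have h2 : (fun y => f (y + (k:ℝ))) = f := funext (fun y => per_int hf k y)
  rw [← h1, h2]

lemma num_per_left (hP : Function.Periodic C 1) (htper : ∀ j : ℤ, t (j + n) = t j + 1)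
    (δ : ℝ) (k : ℤ) (s u : ℝ) : numint C t δ (s + k) u = numint C t δ s u := by
  unfold numint
  rw [per_int (smoothed_periodic hP htper δ) k, deriv_per_int (smoothed_periodic hP htper δ) k]

lemma num_per_right (hP : Function.Periodic C 1) (htper : ∀ j : ℤ, t (j + n) = t j + 1)
    (δ : ℝ) (k : ℤ) (s u : ℝ) : numint C t δ s (u + k) = numint C t δ s u := by
  unfold numint
  rw [per_int (smoothed_periodic hP htper δ) k, deriv_per_int (smoothed_periodic hP htper δ) k]

lemma smoothed_diff_span (ht : StrictMono t)
    (hlin : ∀ j : ℤ, ∀ s ∈ Set.Icc (t j) (t (j + 1)),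
      C s = C (t j) + ((s - t j) / (t (j + 1) - t j)) • (C (t (j + 1)) - C (t j)))
    (hdir : ∀ j : ℤ, C (t (j + 1)) - C (t j) = ‖C (t (j + 1)) - C (t j)‖ • e j)
    {δ s u : ℝ} {j : ℤ} (hδ : 0 < δ) (hs : s ∈ UU t δ j) (hu : u ∈ UU t δ j) :
    ∃ α β : ℝ, smoothed C t δ s - smoothed C t δ u = α • e (j - 1) + β • e j := by
  rw [smoothed_eq_FF ht hlin hδ hs, smoothed_eq_FF ht hlin hδ hu]
  refine ⟨(s - u) * ell C t (j - 1)
    - (δ * sphi ((s - t j)/δ) - δ * sphi ((u - t j)/δ)) * ell C t (j - 1),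
    (δ * sphi ((s - t j)/δ) - δ * sphi ((u - t j)/δ)) * ell C t j, ?_⟩
  unfold FF wv
  rw [vdir_eq hdir, vdir_eq hdir]
  module

lemma num_zero_VV (ht : StrictMono t)
    (hlin : ∀ j : ℤ, ∀ s ∈ Set.Icc (t j) (t (j + 1)),
      C s = C (t j) + ((s - t j) / (t (j + 1) - t j)) • (C (t (j + 1)) - C (t j)))
    (hdir : ∀ j : ℤ, C (t (j + 1)) - C (t j) = ‖C (t (j + 1)) - C (t j)‖ • e j)
    {δ s u : ℝ} {j : ℤ} (hδ : 0 < δ) (hs : s ∈ VV t δ j) (hu : u ∈ VV t δ j) :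
    numint C t δ s u = 0 := by
  have hsU := VV_subset_UU hδ j hs
  have huU := VV_subset_UU hδ j hu
  obtain ⟨a₁, b₁, _, _, _, h1⟩ := deriv_smoothed_comb ht hlin hdir hδ hsU
  obtain ⟨a₂, b₂, _, _, _, h2⟩ := deriv_smoothed_comb ht hlin hdir hδ huU
  obtain ⟨α, β, h3⟩ := smoothed_diff_span ht hlin hdir hδ hsU huU
  rw [numint, h1, h2, h3]
  exact triple_span_zero (e (j - 1)) (e j) a₁ b₁ a₂ b₂ α β

/-- if the numerator is nonzero, the two points are uniformly far apart on the curve -/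
lemma far_of_num_ne (hP : Function.Periodic C 1)
    (hinj : Set.InjOn C (Set.Ico (t 0) (t 0 + 1)))
    (ht : StrictMono t) (htper : ∀ j : ℤ, t (j + n) = t j + 1) (hn : 0 < n)
    (hlin : ∀ j : ℤ, ∀ s ∈ Set.Icc (t j) (t (j + 1)),
      C s = C (t j) + ((s - t j) / (t (j + 1) - t j)) • (C (t (j + 1)) - C (t j)))
    (hdir : ∀ j : ℤ, C (t (j + 1)) - C (t j) = ‖C (t (j + 1)) - C (t j)‖ • e j)
    {δ δ₀ m Wb : ℝ} (hδ : 0 < δ) (hδ2 : 2 * δ < gapm t n hn)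
    (hδ₀ : 2 * δ ≤ δ₀)
    (hm : ∀ p ∈ sep t δ₀, m ≤ ‖C p.1 - C p.2‖)
    (hW : ∀ j : ℤ, ‖wv C t j‖ ≤ Wb)
    (hWm : 8 * δ * Wb ≤ m)
    (s u : ℝ) (hnum : numint C t δ s u ≠ 0) :
    m / 2 ≤ ‖smoothed C t δ s - smoothed C t δ u‖ := by
  -- reduce to the fundamental window
  obtain ⟨z1, hz1⟩ := fund_rep (t 0) s
  obtain ⟨z2, hz2⟩ := fund_rep (t 0) u
  have hnumEq : numint C t δ ((s - z1) + z1) ((u - z2) + z2) = numint C t δ (s - z1) (u - z2) := by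
    rw [num_per_left hP htper, num_per_right hP htper]
  rw [sub_add_cancel, sub_add_cancel] at hnumEq
  have hnum' : numint C t δ (s - z1) (u - z2) ≠ 0 := by rw [← hnumEq]; exact hnum
  have hsm1 : smoothed C t δ ((s - z1) + z1) = smoothed C t δ (s - z1) :=
    per_int (smoothed_periodic hP htper δ) z1 _
  have hsm2 : smoothed C t δ ((u - z2) + z2) = smoothed C t δ (u - z2) :=
    per_int (smoothed_periodic hP htper δ) z2 _
  rw [sub_add_cancel] at hsm1
  rw [sub_add_cancel] at hsm2
  rw [hsm1, hsm2]
  set s₀ := s - z1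
  set u₀ := u - z2
  -- now s₀, u₀ ∈ Ico (t 0) (t 0 + 1)
  by_cases hA : ∃ j : ℤ, s₀ ∈ VV t δ j ∧ u₀ ∈ VV t δ j
  · obtain ⟨j, h1, h2⟩ := hA
    exact absurd (num_zero_VV ht hlin hdir hδ h1 h2) hnum'
  by_cases hB : ∃ j : ℤ, u₀ ∈ VV t δ j ∧ s₀ + 1 ∈ VV t δ j
  · obtain ⟨j, h1, h2⟩ := hB
    exfalso
    apply hnum'
    have h0 : numint C t δ u₀ (s₀ + 1) = 0 := num_zero_VV ht hlin hdir hδ h1 h2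
    rw [num_symm]
    have := num_per_right hP htper δ 1 u₀ s₀
    push_cast at this
    rw [← this, h0]
  by_cases hD : ∃ j : ℤ, s₀ ∈ VV t δ j ∧ u₀ + 1 ∈ VV t δ j
  · obtain ⟨j, h1, h2⟩ := hD
    exfalso
    apply hnum'
    have h0 : numint C t δ s₀ (u₀ + 1) = 0 := num_zero_VV ht hlin hdir hδ h1 h2
    have := num_per_right hP htper δ 1 s₀ u₀
    push_cast at this
    rw [← this, h0]
  · push_neg at hA hB hD
    have hsep : (s₀, u₀) ∈ sep t δ₀ := by
      refine ⟨⟨hz1.1, hz1.2.le⟩, ⟨hz2.1, hz2.2.le⟩, fun j => ⟨?_, ?_, ?_⟩⟩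
      · rintro ⟨h1, h2⟩
        exact hA j (UU_subset_VV hδ₀ j h1) (UU_subset_VV hδ₀ j h2)
      · rintro ⟨h1, h2⟩
        exact hB j (UU_subset_VV hδ₀ j h1) (UU_subset_VV hδ₀ j h2)
      · rintro ⟨h1, h2⟩
        exact hD j (UU_subset_VV hδ₀ j h1) (UU_subset_VV hδ₀ j h2)
    have h1 := hm (s₀, u₀) hsep
    simp only at h1
    have h2 := smoothed_sub_C_norm ht htper hn hW hδ hδ2 s₀
    have h3 := smoothed_sub_C_norm ht htper hn hW hδ hδ2 u₀
    have key : C s₀ - C u₀ = (C s₀ - smoothed C t δ s₀) + (smoothed C t δ u₀ - C u₀)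
        + (smoothed C t δ s₀ - smoothed C t δ u₀) := by abel
    have h4 : ‖C s₀ - C u₀‖ ≤ ‖C s₀ - smoothed C t δ s₀‖ + ‖smoothed C t δ u₀ - C u₀‖
        + ‖smoothed C t δ s₀ - smoothed C t δ u₀‖ := by
      rw [key]
      exact (norm_add_le _ _).trans (by gcongr; exact norm_add_le _ _)
    have h5 : ‖C s₀ - smoothed C t δ s₀‖ = ‖smoothed C t δ s₀ - C s₀‖ := norm_sub_rev _ _
    linarith

/-- the uniform bound for the Gauss integrand of the smoothed curves -/
lemma G_bound (hP : Function.Periodic C 1)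
    (hinj : Set.InjOn C (Set.Ico (t 0) (t 0 + 1)))
    (ht : StrictMono t) (htper : ∀ j : ℤ, t (j + n) = t j + 1) (hn : 0 < n)
    (hlin : ∀ j : ℤ, ∀ s ∈ Set.Icc (t j) (t (j + 1)),
      C s = C (t j) + ((s - t j) / (t (j + 1) - t j)) • (C (t (j + 1)) - C (t j)))
    (hdir : ∀ j : ℤ, C (t (j + 1)) - C (t j) = ‖C (t (j + 1)) - C (t j)‖ • e j)
    (heunit : ∀ j : ℤ, ‖e j‖ = 1)
    {δ δ₀ m Wb : ℝ} (hδ : 0 < δ) (hδ2 : 2 * δ < gapm t n hn)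
    (hδ₀ : 2 * δ ≤ δ₀) (hm0 : 0 < m)
    (hm : ∀ p ∈ sep t δ₀, m ≤ ‖C p.1 - C p.2‖)
    (hW : ∀ j : ℤ, ‖wv C t j‖ ≤ Wb)
    (hWm : 8 * δ * Wb ≤ m)
    (s u : ℝ) :
    |numint C t δ s u / ‖smoothed C t δ s - smoothed C t δ u‖ ^ 3|
      ≤ (ellmax C t n hn) ^ 2 / (m / 2) ^ 2 := by
  have hL0 : 0 ≤ ellmax C t n hn := by
    obtain ⟨j, hj⟩ := mem_UU ht htper hn hδ hδ2 s
    exact (norm_nonneg _).trans (deriv_smoothed_norm_le hP ht htper hn hlin hdir heunit hδ hj)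
  by_cases hnum : numint C t δ s u = 0
  · rw [hnum, zero_div, abs_zero]
    positivity
  · have hfar := far_of_num_ne hP hinj ht htper hn hlin hdir hδ hδ2 hδ₀ hm hW hWm s u hnum
    have hd0 : 0 < ‖smoothed C t δ s - smoothed C t δ u‖ := lt_of_lt_of_le (by linarith) hfar
    obtain ⟨j1, hj1⟩ := mem_UU ht htper hn hδ hδ2 s
    obtain ⟨j2, hj2⟩ := mem_UU ht htper hn hδ hδ2 u
    have hX := deriv_smoothed_norm_le hP ht htper hn hlin hdir heunit hδ hj1
    have hY := deriv_smoothed_norm_le hP ht htper hn hlin hdir heunit hδ hj2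
    have e1 : |numint C t δ s u|
        ≤ ‖cross3 (deriv (smoothed C t δ) s) (deriv (smoothed C t δ) u)‖
          * ‖smoothed C t δ s - smoothed C t δ u‖ :=
      abs_dot3_le _ _
    have e2 := norm_cross3_le (deriv (smoothed C t δ) s) (deriv (smoothed C t δ) u)
    have e3 : ‖deriv (smoothed C t δ) s‖ * ‖deriv (smoothed C t δ) u‖
        ≤ (ellmax C t n hn) ^ 2 := by
      rw [sq]
      exact mul_le_mul hX hY (norm_nonneg _) hL0
    have hnum_le : |numint C t δ s u|
        ≤ (ellmax C t n hn) ^ 2 * ‖smoothed C t δ s - smoothed C t δ u‖ := by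
      calc |numint C t δ s u|
          ≤ ‖cross3 (deriv (smoothed C t δ) s) (deriv (smoothed C t δ) u)‖
            * ‖smoothed C t δ s - smoothed C t δ u‖ := e1
        _ ≤ (ellmax C t n hn) ^ 2 * ‖smoothed C t δ s - smoothed C t δ u‖ :=
            mul_le_mul_of_nonneg_right (e2.trans e3) hd0.le
    rw [abs_div, abs_of_pos (by positivity : (0:ℝ) < ‖smoothed C t δ s - smoothed C t δ u‖ ^ 3)]
    rw [div_le_div_iff₀ (by positivity) (by positivity)]
    have hsq : (m / 2) ^ 2 ≤ ‖smoothed C t δ s - smoothed C t δ u‖ ^ 2 :=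
      pow_le_pow_left₀ (by linarith) hfar 2
    nlinarith [abs_nonneg (numint C t δ s u), hd0,
      mul_le_mul hnum_le hsq (by positivity) (by positivity)]

end Poly

open scoped Interval

/-- the Gauss linking integrand -/
def Gint (f : ℝ → E3) (s u : ℝ) : ℝ :=
  dot3 (cross3 (deriv f s) (deriv f u)) (f s - f u) / ‖f s - f u‖ ^ 3

lemma writhe_eq (L : ℝ) (f : ℝ → E3) :
    (1 / (4 * Real.pi)) * ∫ s in (0:ℝ)..L, ∫ u in (0:ℝ)..L, Gint f s u
      = (1 / (4 * Real.pi)) *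
        ∫ s in (0:ℝ)..L, ∫ u in (0:ℝ)..L,
          dot3 (cross3 (deriv f s) (deriv f u)) (f s - f u) / ‖f s - f u‖ ^ 3 := rfl

lemma Gint_measurable (f : ℝ → E3) (hf : Continuous f) (hdf : Measurable (deriv f)) :
    Measurable (Function.uncurry (Gint f)) := by
  have m1 : Measurable (fun p : ℝ × ℝ => (deriv f p.1, deriv f p.2)) :=
    (hdf.comp measurable_fst).prodMk (hdf.comp measurable_snd)
  have mcross : Measurable (fun p : ℝ × ℝ => cross3 (deriv f p.1) (deriv f p.2)) :=
    continuous_cross3.measurable.comp m1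
  have mdiff : Measurable (fun p : ℝ × ℝ => f p.1 - f p.2) :=
    ((hf.comp continuous_fst).sub (hf.comp continuous_snd)).measurable
  have mnum : Measurable (fun p : ℝ × ℝ =>
      dot3 (cross3 (deriv f p.1) (deriv f p.2)) (f p.1 - f p.2)) := by
    have : Continuous (fun q : E3 × E3 => (inner ℝ q.1 q.2 : ℝ)) := continuous_inner
    exact (this.measurable).comp (mcross.prodMk mdiff)
  have mden : Measurable (fun p : ℝ × ℝ => ‖f p.1 - f p.2‖ ^ 3) :=
    (mdiff.norm).pow_const 3
  exact mnum.div mden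

/-- distance to the corner set is positive away from corners -/
lemma corner_dist_pos {t : ℤ → ℝ} {n : ℕ} (ht : StrictMono t)
    (htper : ∀ j : ℤ, t (j + n) = t j + 1) (hn : 0 < n)
    (s : ℝ) (hs : s ∉ Set.range t) : ∃ ε > 0, ∀ j : ℤ, ε ≤ |s - t j| := by
  obtain ⟨j, h1, h2⟩ := corner_floor htper hn s
  have h1' : t j < s := lt_of_le_of_ne h1 (by
    intro h
    exact hs ⟨j, h⟩)
  refine ⟨min (s - t j) (t (j + 1) - s), lt_min (by linarith) (by linarith), ?_⟩
  intro j'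
  rcases le_or_gt j' j with hle | hgt
  · have : t j' ≤ t j := ht.monotone hle
    rw [abs_of_pos (by linarith)]
    have := min_le_left (s - t j) (t (j + 1) - s)
    linarith
  · have : t (j + 1) ≤ t j' := ht.monotone (by omega)
    rw [abs_of_neg (by linarith)]
    have := min_le_right (s - t j) (t (j + 1) - s)
    linarith

lemma smoothed_eq_C_outside {C : ℝ → E3} {t : ℤ → ℝ} {δ : ℝ} (hδ : 0 < δ) (s : ℝ)
    (h : ∀ j : ℤ, δ ≤ |s - t j|) : smoothed C t δ s = C s := by
  rw [smoothed]
  have : ∀ j : ℤ, bump C t δ j s = 0 := fun j => bump_eq_zero hδ (h j)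
  rw [tsum_congr this, tsum_zero, add_zero]

/-- near a non-corner point, the smoothing agrees with the polygon on a neighborhood -/
lemma smoothed_eventuallyEq_C {C : ℝ → E3} {t : ℤ → ℝ} {δ ε : ℝ} (hδ : 0 < δ)
    (hε : 0 < ε) (s : ℝ) (h : ∀ j : ℤ, ε ≤ |s - t j|) (hδε : 2 * δ ≤ ε) :
    smoothed C t δ =ᶠ[nhds s] C := by
  have hball : Metric.ball s (ε / 2) ∈ nhds s := Metric.ball_mem_nhds s (by positivity)
  filter_upwards [hball] with x hx
  apply smoothed_eq_C_outside hδ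
  intro j
  have h1 := h j
  have h2 : |x - s| < ε / 2 := by
    rw [← Real.dist_eq]
    exact hx
  have : |s - t j| - |x - s| ≤ |x - t j| := by
    have := abs_sub_abs_le_abs_sub (s - t j) (s - x)
    have h4 : (s - t j) - (s - x) = x - t j := by ring
    rw [h4] at this
    rw [abs_sub_comm x s]
    linarith
  linarith



section Poly
variable {C : ℝ → E3} {t : ℤ → ℝ} {e : ℤ → E3} {n : ℕ}

lemma writhe_Gint (f : ℝ → E3) :
    writhe 1 f = (1 / (4 * Real.pi)) * ∫ s in (0:ℝ)..1, ∫ u in (0:ℝ)..1, Gint f s u := rfl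

lemma Gint_smoothed_eq (δ : ℝ) (s u : ℝ) :
    Gint (smoothed C t δ) s u
      = numint C t δ s u / ‖smoothed C t δ s - smoothed C t δ u‖ ^ 3 := rfl

lemma writhe_tendsto (hP : Function.Periodic C 1)
    (hinj : Set.InjOn C (Set.Ico (t 0) (t 0 + 1)))
    (ht : StrictMono t) (htper : ∀ j : ℤ, t (j + n) = t j + 1) (hn : 0 < n)
    (hlin : ∀ j : ℤ, ∀ s ∈ Set.Icc (t j) (t (j + 1)),
      C s = C (t j) + ((s - t j) / (t (j + 1) - t j)) • (C (t (j + 1)) - C (t j)))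
    (hdir : ∀ j : ℤ, C (t (j + 1)) - C (t j) = ‖C (t (j + 1)) - C (t j)‖ • e j)
    (heunit : ∀ j : ℤ, ‖e j‖ = 1)
    {δ₀ m Wb : ℝ} (hm0 : 0 < m)
    (hm : ∀ p ∈ sep t δ₀, m ≤ ‖C p.1 - C p.2‖)
    (hW : ∀ j : ℤ, ‖wv C t j‖ ≤ Wb)
    (δi : ℕ → ℝ) (hδi : ∀ i, 0 < δi i)
    (hδi2 : ∀ i, 2 * δi i < gapm t n hn)
    (hδi0 : ∀ i, 2 * δi i ≤ δ₀)
    (hδiW : ∀ i, 8 * δi i * Wb ≤ m)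
    (hδito : Filter.Tendsto δi Filter.atTop (nhds 0)) :
    Filter.Tendsto (fun i => writhe 1 (smoothed C t (δi i))) Filter.atTop
      (nhds (writhe 1 C)) := by
  classical
  set K := (ellmax C t n hn) ^ 2 / (m / 2) ^ 2 with hK
  have hCcont := continuous_C ht htper hn hlin
  have hGi_meas : ∀ i, Measurable (Function.uncurry (Gint (smoothed C t (δi i)))) := by
    intro i
    have hcd := smoothed_contDiff ht htper hn hlin (hδi i) (hδi2 i)
    exact Gint_measurable _ hcd.continuous ((hcd.continuous_deriv (le_refl 1)).measurable)
  have hGC_meas : Measurable (Function.uncurry (Gint C)) :=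
    Gint_measurable C hCcont (measurable_deriv C)
  have hGi_bound : ∀ i, ∀ s u : ℝ, |Gint (smoothed C t (δi i)) s u| ≤ K := by
    intro i s u
    rw [Gint_smoothed_eq]
    exact G_bound hP hinj ht htper hn hlin hdir heunit (hδi i) (hδi2 i) (hδi0 i)
      hm0 hm hW (hδiW i) s u
  have hae_nc : ∀ᵐ x : ℝ, x ∉ Set.range t := by
    have hc : (Set.range t).Countable := Set.countable_range t
    exact MeasureTheory.measure_eq_zero_iff_ae_notMem.mp (hc.measure_zero _)
  have hev_eq : ∀ s ∉ Set.range t, ∀ u ∉ Set.range t,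
      ∀ᶠ i in Filter.atTop, Gint (smoothed C t (δi i)) s u = Gint C s u := by
    intro s hsn u hun
    obtain ⟨εs, hεs, hs⟩ := corner_dist_pos ht htper hn s hsn
    obtain ⟨εu, hεu, hu⟩ := corner_dist_pos ht htper hn u hun
    have hev : ∀ᶠ i in Filter.atTop, δi i < min εs εu / 2 := by
      exact hδito.eventually (Filter.Tendsto.eventually_lt_const (by positivity) tendsto_id)
    filter_upwards [hev] with i hi
    have h1 : smoothed C t (δi i) =ᶠ[nhds s] C := by
      apply smoothed_eventuallyEq_C (hδi i) hεs s hs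
      have := min_le_left εs εu
      linarith
    have h2 : smoothed C t (δi i) =ᶠ[nhds u] C := by
      apply smoothed_eventuallyEq_C (hδi i) hεu u hu
      have := min_le_right εs εu
      linarith
    unfold Gint
    rw [h1.deriv_eq, h2.deriv_eq, h1.eq_of_nhds, h2.eq_of_nhds]
  have inner_tend : ∀ s ∉ Set.range t,
      Filter.Tendsto (fun i => ∫ u in (0:ℝ)..1, Gint (smoothed C t (δi i)) s u)
        Filter.atTop (nhds (∫ u in (0:ℝ)..1, Gint C s u)) := by
    intro s hsn
    apply intervalIntegral.tendsto_integral_filter_of_dominated_convergence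
      (bound := fun _ => K)
    · filter_upwards with i
      exact ((hGi_meas i).of_uncurry_left).aestronglyMeasurable
    · filter_upwards with i
      filter_upwards with u
      intro _
      rw [Real.norm_eq_abs]
      exact hGi_bound i s u
    · exact intervalIntegrable_const
    · filter_upwards [hae_nc] with u hun
      intro _
      exact Filter.Tendsto.congr'
        ((hev_eq s hsn u hun).mono (fun i h => h.symm)) tendsto_const_nhds
  have houter : Filter.Tendsto
      (fun i => ∫ s in (0:ℝ)..1, ∫ u in (0:ℝ)..1, Gint (smoothed C t (δi i)) s u)
      Filter.atTop (nhds (∫ s in (0:ℝ)..1, ∫ u in (0:ℝ)..1, Gint C s u)) := by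
    apply intervalIntegral.tendsto_integral_filter_of_dominated_convergence
      (bound := fun _ => K)
    · filter_upwards with i
      have hsm : MeasureTheory.StronglyMeasurable
          (fun s => ∫ u in Set.Ioc (0:ℝ) 1, Gint (smoothed C t (δi i)) s u) :=
        MeasureTheory.StronglyMeasurable.integral_prod_right
          ((hGi_meas i).stronglyMeasurable)
      have heq : (fun s => ∫ u in (0:ℝ)..1, Gint (smoothed C t (δi i)) s u)
          = fun s => ∫ u in Set.Ioc (0:ℝ) 1, Gint (smoothed C t (δi i)) s u :=
        funext (fun s => intervalIntegral.integral_of_le zero_le_one)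
      rw [heq]
      exact hsm.aestronglyMeasurable
    · filter_upwards with i
      filter_upwards with s
      intro _
      have := intervalIntegral.norm_integral_le_of_norm_le_const
        (C := K) (f := fun u => Gint (smoothed C t (δi i)) s u) (a := (0:ℝ)) (b := 1)
        (fun u _ => by rw [Real.norm_eq_abs]; exact hGi_bound i s u)
      simpa using this
    · exact intervalIntegrable_const
    · filter_upwards [hae_nc] with s hsn
      intro _
      exact inner_tend s hsn
  have := houter.const_mul (1 / (4 * Real.pi))
  simpa only [← writhe_Gint] using this

end Poly

/-- Any embedded closed polygonal curve `C` of period 1 (corners at the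
cyclic parameters `t j`, unit edge directions `e j`, positive corner angles: consecutive
edge directions neither equal nor antipodal) admits a sequence of simple closed regular
`C¹` curves `Cs i` of period 1 converging pointwise to `C` such that (for all large `i`):
(1) `Cs i` agrees with `C` outside the union of intervals of radius `1/i` about the corner
parameters; (2) near each corner `t j` the unit tangent of `Cs i` takes values on the
shorter great-circle arc joining the incoming direction `e (j-1)` to the outgoing direction
`e j`; and (3) `Wr (Cs i) → Wr C`. -/
theorem poly_smoothing_family
    (C : ℝ → EuclideanSpace ℝ (Fin 3)) (n : ℕ) (hn : 0 < n)
    (t : ℤ → ℝ) (e : ℤ → EuclideanSpace ℝ (Fin 3))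
    (hP : Function.Periodic C 1) (hinj : Set.InjOn C (Set.Ico (t 0) (t 0 + 1)))
    (ht : StrictMono t) (htper : ∀ j : ℤ, t (j + n) = t j + 1)
    (heper : ∀ j : ℤ, e (j + n) = e j) (heunit : ∀ j : ℤ, ‖e j‖ = 1)
    (hlin : ∀ j : ℤ, ∀ s ∈ Set.Icc (t j) (t (j + 1)),
      C s = C (t j) + ((s - t j) / (t (j + 1) - t j)) • (C (t (j + 1)) - C (t j)))
    (hdir : ∀ j : ℤ, C (t (j + 1)) - C (t j) = ‖C (t (j + 1)) - C (t j)‖ • e j)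
    -- positive corner angles: consecutive edge directions are not equal and not antipodal
    (hangle : ∀ j : ℤ, e (j - 1) ≠ e j ∧ e (j - 1) ≠ -e j) :
    ∃ (Cs : ℕ → ℝ → EuclideanSpace ℝ (Fin 3)) (N : ℕ), 0 < N ∧
      (∀ i : ℕ, N ≤ i →
        -- `Cs i` is a simple closed regular `C¹` curve of period 1
        Function.Periodic (Cs i) 1 ∧ ContDiff ℝ 1 (Cs i) ∧
        (∀ s : ℝ, deriv (Cs i) s ≠ 0) ∧
        Set.InjOn (Cs i) (Set.Ico (t 0) (t 0 + 1)) ∧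
        -- (1) `Cs i = C` outside the corner neighborhoods of radius `1/i`
        (∀ s : ℝ, (∀ j : ℤ, (1:ℝ) / i ≤ |s - t j|) → Cs i s = C s) ∧
        -- (2) near each corner, the unit tangent of `Cs i` lies on the shorter
        -- great-circle arc joining the incoming and outgoing edge directions
        (∀ j : ℤ, ∀ s : ℝ, |s - t j| < 1 / i →
          ut (Cs i) s ∈ shorterArc (e (j - 1)) (e j))) ∧
      -- `Cs i → C` pointwise
      (∀ s : ℝ, Filter.Tendsto (fun i => Cs i s) Filter.atTop (nhds (C s))) ∧
      -- (3) `Wr (Cs i) → Wr C`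
      Filter.Tendsto (fun i => writhe 1 (Cs i)) Filter.atTop (nhds (writhe 1 C)) := by
  classical
  have h2n : 2 ≤ n := n_ge_two heper hangle hn
  set g := gapm t n hn with hgdef
  have hg : 0 < g := gapm_pos ht hn
  set δ₀ : ℝ := g / 4 with hδ₀def
  have hδ₀pos : 0 < δ₀ := by positivity
  have hδ₀2 : 2 * δ₀ < g := by rw [hδ₀def]; linarith
  obtain ⟨m, hm0, hm⟩ := exists_sep_const hP hinj ht htper hn hlin hδ₀pos hδ₀2
  set Wb := wmax C t n hn with hWbdef
  have hW : ∀ j : ℤ, ‖wv C t j‖ ≤ Wb := wv_le_wmax hP htper hn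
  have hW0 : 0 ≤ Wb := wmax_nonneg hn
  set δbar : ℝ := min (g / 8) (m / (8 * Wb + 1)) with hδbardef
  have hδbar0 : 0 < δbar := lt_min (by positivity) (by positivity)
  set δi : ℕ → ℝ := fun i => min δbar (1 / (i + 1)) with hδidef
  have hδip : ∀ i, 0 < δi i := fun i => lt_min hδbar0 (by positivity)
  have hδibar : ∀ i, δi i ≤ δbar := fun i => min_le_left _ _
  have hδinat : ∀ i : ℕ, δi i ≤ 1 / (i + 1) := fun i => min_le_right _ _
  have hδig : ∀ i, δi i ≤ g / 8 := fun i => (hδibar i).trans (min_le_left _ _)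
  have hδim : ∀ i, δi i ≤ m / (8 * Wb + 1) := fun i => (hδibar i).trans (min_le_right _ _)
  have hc2 : ∀ i, 2 * δi i < g := fun i => by have := hδig i; linarith
  have hc0 : ∀ i, 2 * δi i ≤ δ₀ := fun i => by
    have := hδig i
    rw [hδ₀def]
    linarith
  have hcW : ∀ i, 8 * δi i * Wb ≤ m := by
    intro i
    have h1 : δi i * (8 * Wb + 1) ≤ m := by
      have h2 := hδim i
      rw [le_div_iff₀ (by positivity)] at h2
      exact h2
    nlinarith [hδip i]
  have hcW4 : ∀ i, 4 * δi i * Wb < m := by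
    intro i
    have h1 := hcW i
    have h2 := hδip i
    nlinarith [mul_nonneg (hδip i).le hW0]
  have hδito : Filter.Tendsto δi Filter.atTop (nhds 0) := by
    apply squeeze_zero (fun i => (hδip i).le) hδinat
    exact tendsto_one_div_add_atTop_nhds_zero_nat
  refine ⟨fun i => smoothed C t (δi i), ⌈2 / g⌉₊ + 1, Nat.succ_pos _, ?_, ?_, ?_⟩
  · intro i hi
    have hi1 : 1 ≤ i := le_trans (Nat.le_add_left 1 _) hi
    have hig : (1:ℝ) / i ≤ g / 2 := by
      have h1 : (2 / g : ℝ) ≤ ⌈2 / g⌉₊ + 1 := by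
        have := Nat.le_ceil (2 / g)
        push_cast
        linarith
      have h2 : (2 / g : ℝ) ≤ i := by
        have h3 : ((⌈2 / g⌉₊ + 1 : ℕ) : ℝ) ≤ i := by exact_mod_cast hi
        push_cast at h3
        linarith
      have hi0 : (0:ℝ) < i := by exact_mod_cast hi1
      rw [div_le_div_iff₀ hi0 (by norm_num : (0:ℝ) < 2)]
      rw [div_le_iff₀ hg] at h2
      linarith
    have hδilt : δi i < 1 / i := by
      have h1 : (1:ℝ) / (i + 1) < 1 / i := by
        apply one_div_lt_one_div_of_lt
        · exact_mod_cast hi1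
        · push_cast; linarith
      exact lt_of_le_of_lt (hδinat i) h1
    refine ⟨smoothed_periodic hP htper _,
      smoothed_contDiff ht htper hn hlin (hδip i) (hc2 i), ?_, ?_, ?_, ?_⟩
    · intro s
      obtain ⟨j, hj⟩ := mem_UU ht htper hn (hδip i) (hc2 i) s
      exact deriv_smoothed_ne_zero hP hinj ht htper h2n hlin hdir heunit hangle (hδip i) hj
    · exact smoothed_injOn hP hinj ht htper h2n hn hlin hdir heunit hangle
        (hδip i) (hc2 i) (hc0 i) hm hW (hcW4 i)
    · intro s hout
      apply smoothed_eq_C_outside (hδip i)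
      intro j
      exact le_trans hδilt.le (hout j)
    · intro j s hclose
      have habs := abs_lt.mp (lt_of_lt_of_le hclose hig)
      have hUj : s ∈ UU t (δi i) j := by
        have hg1 : g ≤ t j - t (j - 1) := by
          have := gapm_le htper hn (j - 1)
          rw [show (j - 1) + 1 = j by ring] at this
          linarith [this]
        have hg2 : g ≤ t (j + 1) - t j := gapm_le htper hn j
        have hd8 := hδig i
        refine Set.mem_Ioo.mpr ⟨?_, ?_⟩
        · linarith [habs.1]
        · linarith [habs.2]
      exact ut_smoothed_mem hP hinj ht htper h2n hlin hdir heunit hangle (hδip i) hUj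
  · intro s
    rw [tendsto_iff_norm_sub_tendsto_zero]
    apply squeeze_zero (fun i => norm_nonneg _)
      (g := fun i => 2 * δi i * Wb)
    · intro i
      exact smoothed_sub_C_norm ht htper hn hW (hδip i) (hc2 i) s
    · have h := (hδito.const_mul (2:ℝ)).mul_const Wb
      have h0 : (2:ℝ) * 0 * Wb = 0 := by ring
      rw [h0] at h
      exact h
  · exact writhe_tendsto hP hinj ht htper hn hlin hdir heunit hm0 hm hW
      δi hδip hc2 hc0 hcW hδito

end
end

section
/- (Schur chord bound.) Let C : [0, L] → ℝ³ be a C² curve parametrized by arclength (|C'(s)| = 1 for all s) with |C''(s)| ≤ K for all s, where K > 0 and K·L ≤ π. Then |C(L) − C(0)| ≥ (2/K)·sin(K·L/2); that is, the chord of C is at least as long as the chord subtending an arc of length L on a circle of radius 1/K. -/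
open Real InnerProductGeometry Filter Set
open scoped RealInnerProductSpace Topology


lemma arccos_antitone : Antitone Real.arccos := by
  intro x y h
  simp only [Real.arccos]
  have := Real.monotone_arcsin h
  linarith

lemma unit_angle_eq {E : Type*} [NormedAddCommGroup E] [InnerProductSpace ℝ E]
    {u v : E} (hu : ‖u‖ = 1) (hv : ‖v‖ = 1) : angle u v = Real.arccos ⟪u, v⟫ := by
  simp [angle, hu, hv]

lemma unit_cos_angle {E : Type*} [NormedAddCommGroup E] [InnerProductSpace ℝ E]
    {u v : E} (hu : ‖u‖ = 1) (hv : ‖v‖ = 1) : Real.cos (angle u v) = ⟪u, v⟫ := by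
  rw [cos_angle, hu, hv]; ring

lemma unit_angle_triangle {E : Type*} [NormedAddCommGroup E] [InnerProductSpace ℝ E]
    {u v w : E} (hu : ‖u‖ = 1) (hv : ‖v‖ = 1) (hw : ‖w‖ = 1) :
    angle u w ≤ angle u v + angle v w := by
  by_cases hs : angle u v + angle v w ≤ π
  · set a := angle u v with ha
    set b := angle v w with hb
    have ha0 : 0 ≤ a := angle_nonneg u v
    have hb0 : 0 ≤ b := angle_nonneg v w
    have hapi : a ≤ π := angle_le_pi u v
    have hbpi : b ≤ π := angle_le_pi v w
    have hca : Real.cos a = ⟪u, v⟫ := unit_cos_angle hu hv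
    have hcb : Real.cos b = ⟪v, w⟫ := unit_cos_angle hv hw
    set u' := u - ⟪u, v⟫ • v with hu'
    set w' := w - ⟪w, v⟫ • v with hw'
    have hvv : ⟪v, v⟫ = 1 := by
      rw [real_inner_self_eq_norm_sq, hv]; norm_num
    have hnu' : ‖u'‖ ^ 2 = 1 - ⟪u, v⟫ ^ 2 := by
      rw [← real_inner_self_eq_norm_sq, hu']
      simp only [inner_sub_left, inner_sub_right, real_inner_smul_left, inner_smul_right,
        real_inner_comm u v, hvv]
      rw [real_inner_self_eq_norm_sq, hu]
      ring
    have hnw' : ‖w'‖ ^ 2 = 1 - ⟪w, v⟫ ^ 2 := by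
      rw [← real_inner_self_eq_norm_sq, hw']
      simp only [inner_sub_left, inner_sub_right, real_inner_smul_left, inner_smul_right,
        real_inner_comm w v, hvv]
      rw [real_inner_self_eq_norm_sq, hw]
      ring
    have hsa : Real.sin a = ‖u'‖ := by
      rw [Real.sin_eq_sqrt_one_sub_cos_sq ha0 hapi, hca, ← hnu']
      rw [Real.sqrt_sq_eq_abs, abs_of_nonneg (norm_nonneg _)]
    have hsb : Real.sin b = ‖w'‖ := by
      rw [Real.sin_eq_sqrt_one_sub_cos_sq hb0 hbpi, hcb, real_inner_comm w v, ← hnw']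
      rw [Real.sqrt_sq_eq_abs, abs_of_nonneg (norm_nonneg _)]
    have hdecomp : ⟪u, w⟫ = ⟪u, v⟫ * ⟪w, v⟫ + ⟪u', w'⟫ := by
      simp only [hu', hw', inner_sub_left, inner_sub_right, real_inner_smul_left,
        inner_smul_right, hvv, real_inner_comm w v]
      ring
    have hCS : |⟪u', w'⟫| ≤ ‖u'‖ * ‖w'‖ := abs_real_inner_le_norm u' w'
    have key : Real.cos (a + b) ≤ ⟪u, w⟫ := by
      rw [Real.cos_add, hca, hcb, hdecomp, hsa, hsb, real_inner_comm w v]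
      have := (abs_le.mp hCS).1
      linarith
    calc angle u w = Real.arccos ⟪u, w⟫ := unit_angle_eq hu hw
      _ ≤ Real.arccos (Real.cos (a + b)) := arccos_antitone key
      _ = a + b := Real.arccos_cos (by linarith) hs
  · push_neg at hs
    linarith [angle_le_pi u w]


lemma unit_angle_le_two_arcsin {E : Type*} [NormedAddCommGroup E] [InnerProductSpace ℝ E]
    {u v : E} (hu : ‖u‖ = 1) (hv : ‖v‖ = 1) {c : ℝ} (hc : ‖u - v‖ ≤ c) :
    angle u v ≤ 2 * Real.arcsin (c / 2) := by
  set θ := angle u v with hθ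
  have hθ0 : 0 ≤ θ := angle_nonneg u v
  have hθπ : θ ≤ π := angle_le_pi u v
  have hcosθ : Real.cos θ = ⟪u, v⟫ := by rw [hθ, cos_angle, hu, hv]; ring
  have hnormsq : ‖u - v‖ ^ 2 = 2 - 2 * ⟪u, v⟫ := by
    rw [← real_inner_self_eq_norm_sq]
    simp only [inner_sub_left, inner_sub_right]
    rw [real_inner_self_eq_norm_sq, real_inner_self_eq_norm_sq, hu, hv, real_inner_comm v u]
    ring
  have hsinhalf : Real.sin (θ / 2) = ‖u - v‖ / 2 := by
    rw [Real.sin_half_eq_sqrt hθ0 (by linarith [Real.pi_pos]), hcosθ]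
    have : (1 - ⟪u, v⟫) / 2 = (‖u - v‖ / 2) ^ 2 := by
      rw [div_pow, hnormsq]; ring
    rw [this, Real.sqrt_sq (by positivity)]
  have : θ / 2 = Real.arcsin (‖u - v‖ / 2) := by
    rw [← hsinhalf, Real.arcsin_sin (by linarith) (by linarith)]
  have harc : Real.arcsin (‖u - v‖ / 2) ≤ Real.arcsin (c / 2) :=
    Real.monotone_arcsin (by linarith)
  linarith

lemma tendsto_n_arcsin {c : ℝ} (hc : 0 < c) :
    Tendsto (fun n : ℕ => (n : ℝ) * (2 * Real.arcsin (c / (2 * n)))) atTop (𝓝 c) := by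
  have hdi : HasDerivAt Real.arcsin 1 0 := by
    simpa using Real.hasDerivAt_arcsin (x := 0) (by norm_num) (by norm_num)
  have hslope := hasDerivAt_iff_tendsto_slope.mp hdi
  have hy : Tendsto (fun n : ℕ => c / (2 * n)) atTop (𝓝[≠] 0) := by
    apply tendsto_nhdsWithin_of_tendsto_nhds_of_eventually_within
    · apply Tendsto.div_atTop (tendsto_const_nhds)
      exact Tendsto.const_mul_atTop (by norm_num) tendsto_natCast_atTop_atTop
    · filter_upwards [eventually_ge_atTop 1] with n hn
      have hn' : (0 : ℝ) < n := by exact_mod_cast hn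
      have : c / (2 * (n:ℝ)) ≠ 0 := by positivity
      simpa using this
  have hcomp : Tendsto (fun n : ℕ => slope Real.arcsin 0 (c / (2 * n))) atTop (𝓝 1) :=
    hslope.comp hy
  have heq : ∀ᶠ n : ℕ in atTop,
      c * slope Real.arcsin 0 (c / (2 * n)) = (n : ℝ) * (2 * Real.arcsin (c / (2 * n))) := by
    filter_upwards [eventually_ge_atTop 1] with n hn
    have hn' : (0 : ℝ) < n := by exact_mod_cast hn
    have hy0 : c / (2 * n) ≠ 0 := by positivity
    rw [slope_def_field, Real.arcsin_zero]
    field_simp [hc.ne']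
    ring
  have := (hcomp.const_mul c).congr' heq
  simpa using this

lemma angle_le_of_lip {E : Type*} [NormedAddCommGroup E] [InnerProductSpace ℝ E]
    {T : ℝ → E} {K a b : ℝ} (hab : a ≤ b) (hK : 0 ≤ K)
    (hunit : ∀ s ∈ Icc a b, ‖T s‖ = 1)
    (hlip : ∀ s ∈ Icc a b, ∀ t ∈ Icc a b, ‖T s - T t‖ ≤ K * |s - t|) :
    angle (T a) (T b) ≤ K * (b - a) := by
  have ha : a ∈ Icc a b := ⟨le_refl a, hab⟩
  have hb : b ∈ Icc a b := ⟨hab, le_refl b⟩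
  have hTa0 : T a ≠ 0 := by
    intro h
    have := hunit a ha
    rw [h] at this
    simp at this
  rcases eq_or_lt_of_le hab with rfl | hab'
  · rw [angle_self hTa0]; nlinarith
  set d := b - a with hd
  have hd0 : 0 < d := by simp [hd]; linarith
  -- membership of subdivision points
  have hmem : ∀ n : ℕ, 0 < n → ∀ i : ℕ, i ≤ n → a + i * d / n ∈ Icc a b := by
    intro n hn i hi
    have hn' : (0:ℝ) < n := by exact_mod_cast hn
    have hi' : (i:ℝ) ≤ n := by exact_mod_cast hi
    constructor
    · have : 0 ≤ (i:ℝ) * d / n := by positivity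
      linarith
    · have : (i:ℝ) * d / n ≤ d := by
        rw [div_le_iff₀ hn']
        nlinarith
      simp [hd] at this ⊢; linarith
  have hstep : ∀ n : ℕ, 0 < n →
      angle (T a) (T b) ≤ n * (2 * Real.arcsin (K * d / (2 * n))) := by
    intro n hn
    have hn' : (0:ℝ) < n := by exact_mod_cast hn
    have key : ∀ i : ℕ, i ≤ n →
        angle (T a) (T (a + i * d / n)) ≤ i * (2 * Real.arcsin (K * d / (2 * n))) := by
      intro i
      induction i with
      | zero =>
        intro _
        simp [angle_self hTa0]
      | succ i ih =>
        intro hi1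
        have hi : i ≤ n := Nat.le_of_succ_le hi1
        have hxi := hmem n hn i hi
        have hxi1 := hmem n hn (i+1) hi1
        push_cast at hxi1
        have htri := unit_angle_triangle (hunit a ha) (hunit _ hxi) (hunit _ hxi1)
        have hchord : ‖T (a + i * d / n) - T (a + (i+1) * d / n)‖ ≤ K * d / n := by
          have := hlip _ hxi _ hxi1
          have habs : |a + i * d / n - (a + (i+1) * d / n)| = d / n := by
            rw [abs_sub_comm]
            have : a + ((i:ℝ)+1) * d / n - (a + i * d / n) = d / n := by
              field_simp; ring
            rw [this, abs_of_pos (by positivity)]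
          push_cast at habs this ⊢
          rw [habs] at this
          calc _ ≤ K * (d / n) := this
            _ = K * d / n := by ring
        have hseg : angle (T (a + i * d / n)) (T (a + (i+1) * d / n))
            ≤ 2 * Real.arcsin (K * d / (2 * n)) := by
          have h2 : K * d / n / 2 = K * d / (2 * n) := by ring
          have := unit_angle_le_two_arcsin (hunit _ hxi) (hunit _ hxi1) hchord
          rwa [h2] at this
        have := ih hi
        push_cast
        push_cast at htri this hseg
        linarith
    have := key n le_rfl
    have hbn : a + (n:ℝ) * d / n = b := by field_simp; rw [hd]; ring
    rwa [hbn] at this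
  rcases eq_or_lt_of_le hK with rfl | hK'
  · -- K = 0
    have := hstep 1 one_pos
    simpa using this
  · have hKd : 0 < K * d := by positivity
    refine ge_of_tendsto (tendsto_n_arcsin hKd) ?_
    filter_upwards [eventually_gt_atTop 0] with n hn
    exact hstep n hn

/-- Schur chord bound. If `C : [0, L] → ℝ³` is a `C²` unit-speed curve
with curvature `|C''| ≤ K`, `K > 0`, and `K·L ≤ π`, then the chord satisfies
`|C L − C 0| ≥ (2/K)·sin (K·L/2)`. -/
theorem schur_chord_bound
    (C : ℝ → EuclideanSpace ℝ (Fin 3)) (L K : ℝ) (hL : 0 ≤ L) (hK : 0 < K)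
    (hC : ContDiff ℝ 2 C)
    (hunit : ∀ s ∈ Set.Icc 0 L, ‖deriv C s‖ = 1)
    (hcurv : ∀ s ∈ Set.Icc 0 L, ‖iteratedDeriv 2 C s‖ ≤ K)
    (hKL : K * L ≤ Real.pi) :
    (2 / K) * Real.sin (K * L / 2) ≤ ‖C L - C 0‖ := by
  set T := deriv C with hT
  set m := L / 2 with hm
  have hm_mem : m ∈ Icc 0 L := ⟨by positivity, by rw [hm]; linarith⟩
  have hC' : ContDiff ℝ 1 T := by
    have h2 : (2 : WithTop ℕ∞) = 1 + 1 := by norm_num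
    rw [h2] at hC
    exact (contDiff_succ_iff_deriv.mp hC).2.2
  have hTdiff : ∀ x, DifferentiableAt ℝ T x :=
    fun x => (hC'.differentiable one_ne_zero).differentiableAt
  have hderiv2 : ∀ s, deriv T s = iteratedDeriv 2 C s := by
    intro s
    rw [hT, iteratedDeriv_succ, iteratedDeriv_one]
  have hlip : ∀ s ∈ Icc 0 L, ∀ t ∈ Icc 0 L, ‖T s - T t‖ ≤ K * |s - t| := by
    intro s hs t ht
    have := (convex_Icc (0:ℝ) L).norm_image_sub_le_of_norm_deriv_le (f := T)
      (fun x _ => hTdiff x)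
      (fun x hx => by rw [hderiv2]; exact hcurv x hx) ht hs
    simpa [Real.norm_eq_abs] using this
  -- angle bound
  have hangle : ∀ s ∈ Icc 0 L, Real.cos (K * (s - m)) ≤ ⟪T m, T s⟫ := by
    intro s hs
    have hang : angle (T m) (T s) ≤ K * |s - m| := by
      rcases le_total s m with h | h
      · have := angle_le_of_lip h hK.le
          (fun x hx => hunit x ⟨le_trans hs.1 hx.1, le_trans hx.2 hm_mem.2⟩)
          (fun x hx y hy => hlip x ⟨le_trans hs.1 hx.1, le_trans hx.2 hm_mem.2⟩
            y ⟨le_trans hs.1 hy.1, le_trans hy.2 hm_mem.2⟩)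
        rw [angle_comm]
        rwa [abs_of_nonpos (by linarith), neg_sub]
      · have := angle_le_of_lip h hK.le
          (fun x hx => hunit x ⟨le_trans hm_mem.1 hx.1, le_trans hx.2 hs.2⟩)
          (fun x hx y hy => hlip x ⟨le_trans hm_mem.1 hx.1, le_trans hx.2 hs.2⟩
            y ⟨le_trans hm_mem.1 hy.1, le_trans hy.2 hs.2⟩)
        rwa [abs_of_nonneg (by linarith)]
    have hKsm_pi : K * |s - m| ≤ π := by
      have h1 : |s - m| ≤ L / 2 := by
        rw [abs_le]; constructor <;> simp [hm] at hs ⊢ <;> linarith [hs.1, hs.2]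
      nlinarith [Real.pi_pos]
    have hcos : Real.cos (K * |s - m|) ≤ Real.cos (angle (T m) (T s)) := by
      apply Real.cos_le_cos_of_nonneg_of_le_pi (angle_nonneg _ _) hKsm_pi hang
    have hcoseq : Real.cos (angle (T m) (T s)) = ⟪T m, T s⟫ := by
      rw [cos_angle, hunit m hm_mem, hunit s hs]; ring
    have habs : Real.cos (K * |s - m|) = Real.cos (K * (s - m)) := by
      rw [← Real.cos_abs (K * (s - m)), abs_mul, abs_of_nonneg hK.le]
    linarith
  -- integration
  have hTcont : Continuous T := hC'.continuous
  have hTint : IntervalIntegrable T MeasureTheory.volume 0 L := hTcont.intervalIntegrable 0 L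
  have hFTC : ∫ s in (0:ℝ)..L, T s = C L - C 0 := by
    rw [hT]
    exact intervalIntegral.integral_deriv_eq_sub
      (fun x _ => (hC.differentiable (by norm_num)).differentiableAt) hTint
  have hinner : ∫ s in (0:ℝ)..L, ⟪T m, T s⟫ = ⟪T m, C L - C 0⟫ := by
    have h := (innerSL ℝ (T m)).intervalIntegral_comp_comm hTint
    simpa [hFTC] using h
  have hcoscont : Continuous fun s => Real.cos (K * (s - m)) :=
    Real.continuous_cos.comp (by continuity)
  have hcosint : ∫ s in (0:ℝ)..L, Real.cos (K * (s - m)) = 2 / K * Real.sin (K * L / 2) := by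
    have hg : ∀ x ∈ uIcc (0:ℝ) L, HasDerivAt (fun s => Real.sin (K * (s - m)) / K)
        (Real.cos (K * (x - m))) x := by
      intro x _
      have h1 : HasDerivAt (fun s : ℝ => K * (s - m)) K x := by
        simpa using ((hasDerivAt_id x).sub_const m).const_mul K
      have h2 := (Real.hasDerivAt_sin (K * (x - m))).comp x h1
      have h3 := h2.div_const K
      have : Real.cos (K * (x - m)) * K / K = Real.cos (K * (x - m)) := by
        field_simp
      rwa [Function.comp_def, this] at h3
    rw [intervalIntegral.integral_eq_sub_of_hasDerivAt hg (hcoscont.intervalIntegrable 0 L)]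
    have h0 : K * ((0:ℝ) - m) = -(K * L / 2) := by rw [hm]; ring
    have hLm : K * (L - m) = K * L / 2 := by rw [hm]; ring
    rw [h0, hLm, Real.sin_neg]
    field_simp
    ring
  have hmono : ∫ s in (0:ℝ)..L, Real.cos (K * (s - m)) ≤ ∫ s in (0:ℝ)..L, ⟪T m, T s⟫ := by
    apply intervalIntegral.integral_mono_on hL (hcoscont.intervalIntegrable 0 L)
      ((continuous_const.inner hTcont).intervalIntegrable 0 L)
    exact fun s hs => hangle s hs
  have hCS : ⟪T m, C L - C 0⟫ ≤ ‖C L - C 0‖ := by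
    have := real_inner_le_norm (T m) (C L - C 0)
    rwa [hunit m hm_mem, one_mul] at this
  linarith [hcosint ▸ hmono.trans_eq hinner]
end

section
/- Let C : [0, L] → ℝ³ be a C² curve parametrized by arclength with |C''(s)| ≤ K for all s, where K > 0. Then for every s ∈ [0, L] with K·s ≤ π: |C(s) − C(0)| ≤ s and 0 ≤ s − |C(s) − C(0)| ≤ (K²/24)·s³ + (1/120)·s⁵. -/
set_option maxHeartbeats 1000000

open intervalIntegral Real Set

/-- If `C : [0, L] → ℝ³` is a `C²` unit-speed curve with curvature
`|C''| ≤ K`, `K > 0`, then for every `s ∈ [0, L]` with `K·s ≤ π` we have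
`|C s − C 0| ≤ s` and `0 ≤ s − |C s − C 0| ≤ (K²/24)·s³ + (1/120)·s⁵`. -/
theorem chord_length_estimate
    (C : ℝ → EuclideanSpace ℝ (Fin 3)) (L K : ℝ) (hL : 0 ≤ L) (hK : 0 < K)
    (hC : ContDiff ℝ 2 C)
    (hunit : ∀ s ∈ Set.Icc 0 L, ‖deriv C s‖ = 1)
    (hcurv : ∀ s ∈ Set.Icc 0 L, ‖iteratedDeriv 2 C s‖ ≤ K) :
    ∀ s ∈ Set.Icc 0 L, K * s ≤ Real.pi →
      ‖C s - C 0‖ ≤ s ∧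
      0 ≤ s - ‖C s - C 0‖ ∧
      s - ‖C s - C 0‖ ≤ K ^ 2 / 24 * s ^ 3 + 1 / 120 * s ^ 5 := by
  intro s hs hKs
  obtain ⟨hs0, hsL⟩ := hs
  set T := deriv C with hT
  have h2 : ContDiff ℝ ((1:ℕ)+1) C := by exact_mod_cast hC
  rw [contDiff_succ_iff_deriv] at h2
  obtain ⟨hdiff, hT1⟩ := h2
  have hTdiff : Differentiable ℝ T := hT1.2.differentiable (by simp)
  have hTcont : Continuous T := hTdiff.continuous
  have hTint : ∀ a b : ℝ, IntervalIntegrable T MeasureTheory.volume a b :=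
    fun a b => hTcont.intervalIntegrable a b
  have hiter : ∀ t, iteratedDeriv 2 C t = deriv T t := by
    intro t; rw [iteratedDeriv_succ, iteratedDeriv_one]
  have hftc : C s - C 0 = ∫ t in (0:ℝ)..s, T t := by
    rw [intervalIntegral.integral_deriv_eq_sub (fun x _ => hdiff x) (hTint 0 s)]
  have hchord : ‖C s - C 0‖ ≤ s := by
    rw [hftc]
    calc ‖∫ t in (0:ℝ)..s, T t‖ ≤ ∫ t in (0:ℝ)..s, ‖T t‖ :=
          intervalIntegral.norm_integral_le_integral_norm hs0
      _ = ∫ t in (0:ℝ)..s, (1:ℝ) := by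
          apply intervalIntegral.integral_congr
          intro t ht
          rw [Set.uIcc_of_le hs0] at ht
          exact hunit t ⟨ht.1, ht.2.trans hsL⟩
      _ = s := by simp
  refine ⟨hchord, by linarith, ?_⟩
  set m := s / 2 with hm
  have hmIcc : m ∈ Set.Icc 0 L := ⟨by positivity, by simp only [hm]; linarith⟩
  have hmnorm : ‖T m‖ = 1 := hunit m hmIcc
  -- Lipschitz bound on T on Icc 0 L
  have hlip : ∀ t ∈ Set.Icc 0 L, ‖T t - T m‖ ≤ K * ‖t - m‖ := by
    intro t ht
    exact (convex_Icc 0 L).norm_image_sub_le_of_norm_deriv_le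
      (fun x _ => hTdiff.differentiableAt)
      (fun x hx => by rw [← hiter]; exact hcurv x hx) hmIcc ht
  -- pointwise inner bound
  have hinner : ∀ t ∈ Set.Icc 0 s, 1 - K^2/2 * (t - m)^2 ≤ inner ℝ (T m) (T t) := by
    intro t ht
    have htL : t ∈ Set.Icc 0 L := ⟨ht.1, ht.2.trans hsL⟩
    have h1 : ‖T t‖ = 1 := hunit t htL
    have h2 : ‖T t - T m‖ ≤ K * ‖t - m‖ := hlip t htL
    have h3 : ‖T t - T m‖^2 ≤ K^2 * (t - m)^2 := by
      have := sq_le_sq' (by linarith [norm_nonneg (T t - T m)]) h2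
      calc ‖T t - T m‖^2 ≤ (K * ‖t - m‖)^2 := by
            apply sq_le_sq' _ h2; linarith [norm_nonneg (T t - T m)]
        _ = K^2 * (t-m)^2 := by rw [mul_pow, Real.norm_eq_abs, sq_abs]
    have h4 : ‖T t - T m‖^2 = ‖T t‖^2 - 2 * inner ℝ (T t) (T m) + ‖T m‖^2 :=
      @norm_sub_sq_real (EuclideanSpace ℝ (Fin 3)) _ _ _ _
    rw [real_inner_comm]
    rw [h1, hmnorm] at h4
    nlinarith [h4, h3]
  -- inner with integral
  have key : (s - K^2/24 * s^3 : ℝ) ≤ ‖C s - C 0‖ := by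
    have hci : (inner ℝ (T m) (C s - C 0) : ℝ) = ∫ t in (0:ℝ)..s, inner ℝ (T m) (T t) := by
      have h := (innerSL ℝ (T m)).intervalIntegral_comp_comm (hTint 0 s)
      simp only [innerSL_apply_apply] at h
      rw [hftc]
      exact h.symm
    have hmono : (∫ t in (0:ℝ)..s, (1 - K^2/2 * (t - m)^2)) ≤
        ∫ t in (0:ℝ)..s, (inner ℝ (T m) (T t) : ℝ) := by
      apply intervalIntegral.integral_mono_on hs0
      · exact (Continuous.intervalIntegrable (by fun_prop) 0 s)
      · exact ((innerSL ℝ (T m)).continuous.comp hTcont).intervalIntegrable 0 s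
      · exact hinner
    have hval : (∫ t in (0:ℝ)..s, (1 - K^2/2 * (t - m)^2)) = s - K^2/24 * s^3 := by
      have hint2 : IntervalIntegrable (fun t => K^2/2 * (t - m)^2)
          MeasureTheory.volume 0 s := (Continuous.intervalIntegrable (by fun_prop) 0 s)
      have h5 : (∫ t in (0:ℝ)..s, (t - m)^2) = s^3/12 := by
        rw [intervalIntegral.integral_comp_sub_right (fun t => t^2) m,
          integral_pow]
        simp only [hm]; ring
      rw [intervalIntegral.integral_sub (intervalIntegrable_const (c:=(1:ℝ))) hint2,
        intervalIntegral.integral_const_mul, h5]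
      simp; ring
    have hcs : (inner ℝ (T m) (C s - C 0) : ℝ) ≤ ‖C s - C 0‖ := by
      calc (inner ℝ (T m) (C s - C 0) : ℝ) ≤ ‖T m‖ * ‖C s - C 0‖ :=
            real_inner_le_norm _ _
        _ = ‖C s - C 0‖ := by rw [hmnorm, one_mul]
    linarith [hval ▸ hmono, hci ▸ hcs]
  have hs5 : 0 ≤ 1/120 * s^5 := by positivity
  nlinarith [key]
end

section
/- Let C : [0, L] → ℝ³ be a C² curve parametrized by arclength with |C''(s)| ≤ K for all s, where K > 0, and let 0 ≤ a < b ≤ L with K·(b − a) ≤ π. If |C(b) − C(a)| ≤ x and K·x ≤ 2/5, then b − a ≤ 1.01·x; that is, the arclength between two points of the curve is at most 1.01 times any bound x on the chord length, provided 1/x ≥ (5/2)·K. -/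
lemma arclength_le_chord_bound_aux (t u : ℝ) (ht : 0 < t) (hpi : t ≤ 3.15)
    (hu : u ≤ 2/5) (hm : t - t^3/24 ≤ u) : t ≤ 1.01 * u := by
  have s1 : t ≤ 0.69 := by
    nlinarith [mul_pos ht ht, sq_nonneg t, mul_nonneg (mul_nonneg ht.le ht.le) ht.le]
  have s2 : t ≤ 0.41 := by nlinarith [mul_pos ht ht]
  nlinarith [mul_pos ht ht, mul_nonneg (mul_nonneg ht.le ht.le) ht.le]

/-- If `C : [0, L] → ℝ³` is a `C²` unit-speed curve with curvature
`|C''| ≤ K`, `K > 0`, and `0 ≤ a < b ≤ L` with `K·(b − a) ≤ π`, `|C b − C a| ≤ x`, and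
`K·x ≤ 2/5` (i.e. `1/x ≥ (5/2)·K`), then the arclength satisfies `b − a ≤ 1.01·x`. -/
theorem arclength_le_chord_bound
    (C : ℝ → EuclideanSpace ℝ (Fin 3)) (L K a b x : ℝ) (hK : 0 < K)
    (hC : ContDiff ℝ 2 C)
    (hunit : ∀ s ∈ Set.Icc 0 L, ‖deriv C s‖ = 1)
    (hcurv : ∀ s ∈ Set.Icc 0 L, ‖iteratedDeriv 2 C s‖ ≤ K)
    (ha : 0 ≤ a) (hab : a < b) (hbL : b ≤ L)
    (harc : K * (b - a) ≤ Real.pi)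
    (hchord : ‖C b - C a‖ ≤ x) (hx : K * x ≤ 2 / 5) :
    b - a ≤ 1.01 * x := by
  have hab' : a ≤ b := hab.le
  have hsub : Set.Icc a b ⊆ Set.Icc 0 L := Set.Icc_subset_Icc ha hbL
  set m : ℝ := (a + b) / 2 with hm
  have hma : a ≤ m := by rw [hm]; linarith
  have hmb : m ≤ b := by rw [hm]; linarith
  -- smoothness facts
  have h2 : ContDiff ℝ (1 + 1 : ℕ) C := by exact_mod_cast hC
  have hC1 : ContDiff ℝ 1 (deriv C) := (contDiff_succ_iff_deriv.mp h2).2.2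
  have hd1 : Differentiable ℝ C := hC.differentiable (by norm_num)
  have hd2 : Differentiable ℝ (deriv C) := hC1.differentiable (by norm_num)
  have hcont2 : Continuous (deriv C) := hd2.continuous
  have hiter : iteratedDeriv 2 C = deriv (deriv C) := by
    rw [iteratedDeriv_succ, iteratedDeriv_one]
  -- mean value: deriv C is K-Lipschitz on [a,b]
  have key : ∀ s ∈ Set.Icc a b, ‖deriv C s - deriv C m‖ ≤ K * |s - m| := by
    intro s hs
    have := Convex.norm_image_sub_le_of_norm_hasDerivWithin_le
      (f := deriv C) (f' := deriv (deriv C)) (s := Set.Icc a b)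
      (fun y _ => ((hd2 y).hasDerivAt).hasDerivWithinAt)
      (fun y hy => by rw [← hiter]; exact hcurv y (hsub hy))
      (convex_Icc a b) ⟨hma, hmb⟩ hs
    simpa [Real.norm_eq_abs] using this
  set v := deriv C m with hv
  have hvnorm : ‖v‖ = 1 := hunit m (hsub ⟨hma, hmb⟩)
  -- inner product lower bound
  have hinner : ∀ s ∈ Set.Icc a b, 1 - K^2 * (s - m)^2 / 2 ≤ inner ℝ v (deriv C s) := by
    intro s hs
    have h1 : ‖deriv C s‖ = 1 := hunit s (hsub hs)
    have h3 : ‖v - deriv C s‖ ^ 2 = ‖v‖^2 - 2 * inner ℝ v (deriv C s) + ‖deriv C s‖^2 :=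
      norm_sub_sq_real v (deriv C s)
    have h4 : ‖v - deriv C s‖ ≤ K * |s - m| := by
      have := key s hs
      rwa [norm_sub_rev] at this
    have h5 : ‖v - deriv C s‖^2 ≤ (K * |s - m|)^2 :=
      pow_le_pow_left₀ (norm_nonneg _) h4 2
    have h6 : (K * |s - m|)^2 = K^2 * (s-m)^2 := by
      rw [mul_pow, sq_abs]
    rw [h6] at h5
    rw [h1, hvnorm] at h3
    linarith [h3, h5]
  -- FTC
  have hinteg : IntervalIntegrable (deriv C) MeasureTheory.volume a b :=
    hcont2.intervalIntegrable a b
  have hftc : ∫ s in a..b, deriv C s = C b - C a :=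
    intervalIntegral.integral_deriv_eq_sub (fun y _ => hd1 y) hinteg
  have hcomm : ∫ s in a..b, (inner ℝ v (deriv C s) : ℝ) = inner ℝ v (C b - C a) := by
    have := (innerSL ℝ v).intervalIntegral_comp_comm hinteg
    rw [hftc] at this
    simpa using this
  have hcontf : Continuous fun s => (inner ℝ v (deriv C s) : ℝ) :=
    continuous_const.inner hcont2
  -- integral monotonicity
  have hmono : ∫ s in a..b, (1 - K^2 * (s - m)^2 / 2)
      ≤ ∫ s in a..b, (inner ℝ v (deriv C s) : ℝ) := by
    apply intervalIntegral.integral_mono_on hab'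
    · exact (Continuous.intervalIntegrable (by fun_prop) a b)
    · exact hcontf.intervalIntegrable a b
    · exact hinner
  -- compute left integral
  have hpow : ∫ s in a..b, ((s - m)^2) = ((b-m)^3 - (a-m)^3)/3 := by
    rw [intervalIntegral.integral_comp_sub_right (fun t => t^2) m, integral_pow]
    norm_num
  have hval : ∫ s in a..b, (1 - K^2 * (s - m)^2 / 2) = (b-a) - K^2 * (b-a)^3 / 24 := by
    have hint1 : IntervalIntegrable (fun _ : ℝ => (1:ℝ)) MeasureTheory.volume a b :=
      intervalIntegrable_const
    have hint2 : IntervalIntegrable (fun s : ℝ => (K^2/2) * (s-m)^2) MeasureTheory.volume a b :=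
      Continuous.intervalIntegrable (by fun_prop) a b
    have hsplit : ∫ s in a..b, (1 - K^2 * (s - m)^2 / 2)
        = (∫ _ in a..b, (1:ℝ)) - (K^2/2) * ∫ s in a..b, ((s-m)^2) := by
      rw [← intervalIntegral.integral_const_mul, ← intervalIntegral.integral_sub hint1 hint2]
      congr 1; ext s; ring
    rw [hsplit, hpow, intervalIntegral.integral_const, hm]
    simp only [smul_eq_mul, mul_one]
    ring
  -- chord lower bound
  have hCS : (inner ℝ v (C b - C a) : ℝ) ≤ ‖C b - C a‖ := by
    have := real_inner_le_norm v (C b - C a)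
    rwa [hvnorm, one_mul] at this
  have hmain : (b - a) - K^2 * (b-a)^3 / 24 ≤ x := by
    calc (b - a) - K^2 * (b-a)^3 / 24
        = ∫ s in a..b, (1 - K^2 * (s - m)^2 / 2) := hval.symm
      _ ≤ ∫ s in a..b, (inner ℝ v (deriv C s) : ℝ) := hmono
      _ = inner ℝ v (C b - C a) := hcomm
      _ ≤ ‖C b - C a‖ := hCS
      _ ≤ x := hchord
  -- arithmetic
  have hl : 0 < b - a := sub_pos.2 hab
  have hpi : K * (b - a) ≤ 3.15 := harc.trans (by linarith [Real.pi_lt_d2])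
  have hm' : K*(b-a) - (K*(b-a))^3/24 ≤ K*x := by
    nlinarith [mul_le_mul_of_nonneg_left hmain hK.le]
  have hfin := arclength_le_chord_bound_aux (K*(b-a)) (K*x) (mul_pos hK hl) hpi hx hm'
  have : K * (b - a) ≤ K * (1.01 * x) := by linarith [hfin]
  exact le_of_mul_le_mul_left (by linarith) hK
end

section
/- Let C : ℝ → ℝ³ be a C² curve parametrized by arclength with |C''(u)| ≤ K for all u, where K > 0, and let a < b with K·(b − a) ≤ π. Suppose 0 < |C(b) − C(a)| ≤ x where K·x ≤ 2/5. Then for every s ∈ [a, b], the angle between the tangent vector C'(s) and the chord vector C(b) − C(a) is at most (1.01²/2)·K·x; in particular sin of this angle is at most (1.01/2)·K·x. -/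
open Real Filter MeasureTheory intervalIntegral
open scoped RealInnerProductSpace

section Aux

lemma aux_sin_cubic {t : ℝ} (ht : 0 ≤ t) : t - t^3/6 ≤ Real.sin t := by
  have mono : Monotone (fun t : ℝ => Real.sin t - t + t^3/6) := by
    apply monotone_of_deriv_nonneg
    · fun_prop
    · intro y
      have h1 : HasDerivAt (fun t : ℝ => Real.sin t - t + t^3/6)
          (Real.cos y - 1 + (3*y^2)/6) y := by
        have := ((Real.hasDerivAt_sin y).sub (hasDerivAt_id y)).add
          (((hasDerivAt_pow 3 y)).div_const 6)
        convert this using 1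
        · rfl
        · rfl
        · rfl
        · norm_num
      rw [h1.deriv]
      have := Real.one_sub_sq_div_two_le_cos (x := y)
      nlinarith [sq_nonneg y]
  have := mono ht
  simp at this; linarith

lemma aux_int_cos (K s a b : ℝ) (hK : K ≠ 0) :
    ∫ u in a..b, Real.cos (K*(u-s)) = (Real.sin (K*(b-s)) - Real.sin (K*(a-s)))/K := by
  have h : ∀ u, HasDerivAt (fun u => Real.sin (K*(u-s))/K) (Real.cos (K*(u-s))) u := by
    intro u
    have h1 : HasDerivAt (fun u : ℝ => K*(u-s)) K u := by
      simpa using ((hasDerivAt_id u).sub_const s).const_mul K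
    have := ((Real.hasDerivAt_sin (K*(u-s))).comp u h1).div_const K
    simpa [mul_comm, mul_div_assoc, mul_div_cancel_left₀ _ hK] using this
  rw [intervalIntegral.integral_eq_sub_of_hasDerivAt (fun u _ => h u)
    (Continuous.intervalIntegrable (by fun_prop) a b)]
  ring

lemma aux_int_sin (K s a b : ℝ) (hK : K ≠ 0) :
    ∫ u in a..b, Real.sin (K*(u-s)) = (Real.cos (K*(a-s)) - Real.cos (K*(b-s)))/K := by
  have h : ∀ u, HasDerivAt (fun u => -Real.cos (K*(u-s))/K) (Real.sin (K*(u-s))) u := by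
    intro u
    have h1 : HasDerivAt (fun u : ℝ => K*(u-s)) K u := by
      simpa using ((hasDerivAt_id u).sub_const s).const_mul K
    have := (((Real.hasDerivAt_cos (K*(u-s))).comp u h1).neg).div_const K
    simpa [mul_comm, mul_div_assoc, mul_div_cancel_left₀ _ hK] using this
  rw [intervalIntegral.integral_eq_sub_of_hasDerivAt (fun u _ => h u)
    (Continuous.intervalIntegrable (by fun_prop) a b)]
  ring

variable {E : Type*} [NormedAddCommGroup E] [InnerProductSpace ℝ E]

lemma aux_cos_add_le_inner {A B C : E} (hA : ‖A‖ = 1) (hB : ‖B‖ = 1) (hC : ‖C‖ = 1)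
    {φ ψ : ℝ} (hφ : 0 ≤ φ) (hψ : 0 ≤ ψ) (hsum : φ + ψ ≤ π)
    (h1 : Real.cos φ ≤ ⟪A, B⟫) (h2 : Real.cos ψ ≤ ⟪B, C⟫) :
    Real.cos (φ + ψ) ≤ ⟪A, C⟫ := by
  have hc₁1 : ⟪A, B⟫ ≤ 1 := by simpa [hA, hB] using real_inner_le_norm A B
  have hc₂1 : ⟪B, C⟫ ≤ 1 := by simpa [hB, hC] using real_inner_le_norm B C
  have hc₁n : (-1 : ℝ) ≤ ⟪A, B⟫ := le_trans (Real.neg_one_le_cos φ) h1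
  have hc₂n : (-1 : ℝ) ≤ ⟪B, C⟫ := le_trans (Real.neg_one_le_cos ψ) h2
  have hnormA : ‖A - ⟪A, B⟫ • B‖ ^ 2 = 1 - ⟪A, B⟫ ^ 2 := by
    rw [norm_sub_sq_real, real_inner_smul_right, norm_smul, hA, hB]
    simp [Real.norm_eq_abs, sq_abs]
    ring
  have hnormC : ‖C - ⟪B, C⟫ • B‖ ^ 2 = 1 - ⟪B, C⟫ ^ 2 := by
    rw [norm_sub_sq_real, real_inner_smul_right, norm_smul, hC, hB, real_inner_comm C B]
    simp [Real.norm_eq_abs, sq_abs]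
    ring
  have expand : ⟪A - ⟪A, B⟫ • B, C - ⟪B, C⟫ • B⟫ = ⟪A, C⟫ - ⟪A, B⟫ * ⟪B, C⟫ := by
    rw [inner_sub_left, inner_sub_right, inner_sub_right, real_inner_smul_right,
      real_inner_smul_left, real_inner_smul_left, real_inner_smul_right,
      real_inner_self_eq_norm_sq, hB, real_inner_comm B A]
    ring
  have key : |⟪A, C⟫ - ⟪A, B⟫ * ⟪B, C⟫|
      ≤ Real.sqrt (1 - ⟪A, B⟫ ^ 2) * Real.sqrt (1 - ⟪B, C⟫ ^ 2) := by
    rw [← expand]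
    calc |⟪A - ⟪A, B⟫ • B, C - ⟪B, C⟫ • B⟫| ≤ ‖A - ⟪A, B⟫ • B‖ * ‖C - ⟪B, C⟫ • B‖ :=
          abs_real_inner_le_norm _ _
      _ = Real.sqrt (1 - ⟪A, B⟫ ^ 2) * Real.sqrt (1 - ⟪B, C⟫ ^ 2) := by
          rw [← hnormA, ← hnormC, Real.sqrt_sq (norm_nonneg _), Real.sqrt_sq (norm_nonneg _)]
  have hαφ : Real.arccos ⟪A, B⟫ ≤ φ := by
    conv_rhs => rw [← Real.arccos_cos hφ (by linarith)]
    rw [Real.arccos_eq_pi_div_two_sub_arcsin, Real.arccos_eq_pi_div_two_sub_arcsin]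
    have := Real.monotone_arcsin h1
    linarith
  have hβψ : Real.arccos ⟪B, C⟫ ≤ ψ := by
    conv_rhs => rw [← Real.arccos_cos hψ (by linarith)]
    rw [Real.arccos_eq_pi_div_two_sub_arcsin, Real.arccos_eq_pi_div_two_sub_arcsin]
    have := Real.monotone_arcsin h2
    linarith
  have hcosab : Real.cos (Real.arccos ⟪A, B⟫ + Real.arccos ⟪B, C⟫)
      = ⟪A, B⟫ * ⟪B, C⟫ - Real.sqrt (1 - ⟪A, B⟫ ^ 2) * Real.sqrt (1 - ⟪B, C⟫ ^ 2) := by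
    rw [Real.cos_add, Real.cos_arccos hc₁n hc₁1, Real.cos_arccos hc₂n hc₂1,
      Real.sin_arccos, Real.sin_arccos]
  have h1' : Real.cos (φ + ψ) ≤ Real.cos (Real.arccos ⟪A, B⟫ + Real.arccos ⟪B, C⟫) :=
    Real.cos_le_cos_of_nonneg_of_le_pi
      (add_nonneg (Real.arccos_nonneg _) (Real.arccos_nonneg _)) hsum
      (add_le_add hαφ hβψ)
  have habs := (abs_le.mp key).1
  rw [hcosab] at h1'
  linarith

lemma aux_cos_step {r : ℝ} (hr0 : 0 ≤ r) (hr : r ≤ 1 / 2) :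
    Real.cos (r + r ^ 3) ≤ 1 - r ^ 2 / 2 := by
  have h2 : r ^ 2 ≤ 1 / 4 := by nlinarith
  have ht : |r + r ^ 3| ≤ 1 := by
    rw [abs_of_nonneg (by positivity)]
    nlinarith
  have hb := (abs_le.mp (Real.cos_bound ht)).2
  rw [abs_of_nonneg (by positivity)] at hb
  have h3 : (r + r ^ 3) ^ 4 ≤ r ^ 4 * (625 / 256) := by
    have he : r + r ^ 3 = r * (1 + r ^ 2) := by ring
    rw [he, mul_pow]
    have h4 : (1 + r ^ 2) ^ 4 ≤ 625 / 256 := by nlinarith [sq_nonneg r, sq_nonneg (r^2)]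
    have h5 : 0 ≤ r ^ 4 := by positivity
    nlinarith
  nlinarith [pow_nonneg hr0 4, pow_nonneg hr0 6]

set_option maxHeartbeats 1000000 in
lemma aux_inner_tangent (T : ℝ → E) (K : ℝ) (hK : 0 < K)
    (hunit : ∀ u, ‖T u‖ = 1) (hlip : ∀ p q : ℝ, ‖T p - T q‖ ≤ K * |p - q|)
    {p q : ℝ} (hpq : p ≤ q) (harc : K * (q - p) ≤ π / 2) :
    Real.cos (K * (q - p)) ≤ ⟪T p, T q⟫ := by
  set c := K * (q - p) with hc
  have hc0 : 0 ≤ c := mul_nonneg hK.le (by linarith)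
  have main : ∀ n : ℕ, 4 ≤ n → Real.cos (c + c ^ 3 / (n : ℝ) ^ 2) ≤ ⟪T p, T q⟫ := by
    intro n hn
    have hn0 : 0 < (n : ℝ) := by positivity
    have hne : (n : ℝ) ≠ 0 := ne_of_gt hn0
    set δ := (q - p) / n with hδ
    have hδ0 : 0 ≤ δ := div_nonneg (by linarith) hn0.le
    set r := c / n with hr
    have hr0 : 0 ≤ r := by positivity
    have hrhalf : r ≤ 1 / 2 := by
      rw [hr, div_le_iff₀ hn0]
      have h4n : (4 : ℝ) ≤ (n : ℝ) := by exact_mod_cast hn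
      nlinarith [Real.pi_le_four]
    have hrδ : r = K * δ := by rw [hr, hδ, hc]; ring
    have hstep₁ : (0:ℝ) ≤ r + r ^ 3 := by positivity
    have hnr : (n : ℝ) * (r + r ^ 3) = c + c ^ 3 / (n : ℝ) ^ 2 := by
      rw [hr]; field_simp
    have hnsum : (n : ℝ) * (r + r ^ 3) ≤ π := by
      rw [hnr]
      have hr2 : c ^ 3 / (n : ℝ) ^ 2 = c * r ^ 2 := by rw [hr]; field_simp
      have hrq : r ^ 2 ≤ 1 / 4 := by nlinarith
      rw [hr2]
      nlinarith [Real.pi_pos, harc]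
    have claim : ∀ k : ℕ, k ≤ n → Real.cos (k * (r + r ^ 3)) ≤ ⟪T p, T (p + k * δ)⟫ := by
      intro k
      induction k with
      | zero => intro _; simp [real_inner_self_eq_norm_sq, hunit]
      | succ k ih =>
        intro hk1
        have hk : k ≤ n := le_of_lt (Nat.lt_of_succ_le hk1)
        have ihk := ih hk
        have hkn : (k : ℝ) ≤ n := by exact_mod_cast hk
        have hk1n : ((k : ℝ) + 1) ≤ n := by exact_mod_cast hk1
        have hknn : (0:ℝ) ≤ (k:ℝ) := Nat.cast_nonneg k
        have hd : ‖T (p + k * δ) - T (p + (k + 1 : ℕ) * δ)‖ ≤ r := by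
          have hl := hlip (p + k * δ) (p + (k + 1 : ℕ) * δ)
          have habs : p + (k : ℝ) * δ - (p + ((k + 1 : ℕ) : ℝ) * δ) = -δ := by
            push_cast; ring
          rw [habs, abs_neg, abs_of_nonneg hδ0] at hl
          rw [hrδ]; exact hl
        have hinner : 1 - r ^ 2 / 2 ≤ ⟪T (p + k * δ), T (p + (k + 1 : ℕ) * δ)⟫ := by
          have hsq := norm_sub_sq_real (T (p + k * δ)) (T (p + (k + 1 : ℕ) * δ))
          rw [hunit, hunit] at hsq
          have hd2 : ‖T (p + k * δ) - T (p + (k + 1 : ℕ) * δ)‖ ^ 2 ≤ r ^ 2 := by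
            have hnn := norm_nonneg (T (p + k * δ) - T (p + (k + 1 : ℕ) * δ))
            nlinarith
          nlinarith
        have hstepchord : Real.cos (r + r ^ 3) ≤ ⟪T (p + k * δ), T (p + (k + 1 : ℕ) * δ)⟫ :=
          le_trans (aux_cos_step hr0 hrhalf) hinner
        have hsum2 : (k : ℝ) * (r + r ^ 3) + (r + r ^ 3) ≤ π := by
          have h := mul_le_mul_of_nonneg_right hk1n hstep₁
          nlinarith [hnsum]
        have hmain := aux_cos_add_le_inner (hunit p) (hunit (p + k * δ))
          (hunit (p + (k + 1 : ℕ) * δ))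
          (by positivity : (0:ℝ) ≤ (k : ℝ) * (r + r ^ 3)) hstep₁ hsum2 ihk hstepchord
        have harg : (k : ℝ) * (r + r ^ 3) + (r + r ^ 3) = ((k + 1 : ℕ) : ℝ) * (r + r ^ 3) := by
          push_cast; ring
        rw [harg] at hmain
        exact hmain
    have hfin := claim n le_rfl
    have hq : p + (n : ℝ) * δ = q := by
      rw [hδ, mul_div_cancel₀ _ hne]; ring
    rw [hq, hnr] at hfin
    exact hfin
  have htend : Tendsto (fun n : ℕ => Real.cos (c + c ^ 3 / (n : ℝ) ^ 2)) atTop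
      (nhds (Real.cos c)) := by
    have h1 : Tendsto (fun n : ℕ => c + c ^ 3 / (n : ℝ) ^ 2) atTop (nhds (c + 0)) := by
      apply tendsto_const_nhds.add
      have h2 : Tendsto (fun n : ℕ => ((n : ℝ) ^ 2)) atTop atTop :=
        (tendsto_pow_atTop (by norm_num : (2:ℕ) ≠ 0)).comp tendsto_natCast_atTop_atTop
      simpa [div_eq_mul_inv] using (h2.inv_tendsto_atTop).const_mul (c ^ 3)
    simpa [Function.comp_def] using (Real.continuous_cos.tendsto (c + 0)).comp h1
  exact le_of_tendsto htend (eventually_atTop.mpr ⟨4, main⟩)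

end Aux


set_option maxHeartbeats 2000000 in
/-- If `C : ℝ → ℝ³` is a `C²` unit-speed curve with curvature
`|C''| ≤ K`, `K > 0`, and `a < b` with `K·(b − a) ≤ π`, `0 < |C b − C a| ≤ x`, and
`K·x ≤ 2/5`, then for every `s ∈ [a, b]` the angle between `C'(s)` and the chord
`C b − C a` is at most `(1.01²/2)·K·x`, and its sine is at most `(1.01/2)·K·x`. -/
theorem tangent_chord_angle_bound
    (C : ℝ → EuclideanSpace ℝ (Fin 3)) (K a b x : ℝ) (hK : 0 < K)
    (hC : ContDiff ℝ 2 C)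
    (hunit : ∀ u : ℝ, ‖deriv C u‖ = 1)
    (hcurv : ∀ u : ℝ, ‖iteratedDeriv 2 C u‖ ≤ K)
    (hab : a < b) (harc : K * (b - a) ≤ Real.pi)
    (hchordpos : 0 < ‖C b - C a‖) (hchord : ‖C b - C a‖ ≤ x) (hx : K * x ≤ 2 / 5) :
    ∀ s ∈ Set.Icc a b,
      InnerProductGeometry.angle (deriv C s) (C b - C a) ≤ 1.01 ^ 2 / 2 * K * x ∧
      Real.sin (InnerProductGeometry.angle (deriv C s) (C b - C a)) ≤ 1.01 / 2 * K * x := by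
  have hπ := Real.pi_pos
  have hπ3 := Real.pi_gt_three
  -- smoothness bookkeeping
  have hC' : ContDiff ℝ (1 + 1 : ℕ) C := by exact_mod_cast hC
  have hCdiff : Differentiable ℝ C := hC'.differentiable (by norm_num)
  have hT1 : ContDiff ℝ 1 (deriv C) := (contDiff_succ_iff_deriv.mp (by exact_mod_cast hC')).2.2
  have hTdiff : Differentiable ℝ (deriv C) := hT1.differentiable one_ne_zero
  have hTcont : Continuous (deriv C) := hTdiff.continuous
  have hT'le : ∀ u, ‖deriv (deriv C) u‖ ≤ K := by
    intro u
    have := hcurv u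
    rwa [iteratedDeriv_succ, iteratedDeriv_one] at this
  have hlip : ∀ p q : ℝ, ‖deriv C p - deriv C q‖ ≤ K * |p - q| := by
    intro p q
    have := convex_univ.norm_image_sub_le_of_norm_deriv_le
      (fun u _ => hTdiff u) (fun u _ => hT'le u) (Set.mem_univ q) (Set.mem_univ p)
    simpa [Real.norm_eq_abs] using this
  -- the master tangent-angle bound
  have master : ∀ p q : ℝ, K * |q - p| ≤ π / 2 →
      Real.cos (K * (q - p)) ≤ ⟪deriv C p, deriv C q⟫ := by
    intro p q hpq
    rcases le_total p q with h | h
    · exact aux_inner_tangent (deriv C) K hK hunit hlip h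
        (by rwa [abs_of_nonneg (by linarith)] at hpq)
    · rw [real_inner_comm]
      have he : K * (q - p) = -(K * (p - q)) := by ring
      rw [he, Real.cos_neg]
      exact aux_inner_tangent (deriv C) K hK hunit hlip h
        (by rwa [abs_of_nonpos (by linarith), neg_sub] at hpq)
  -- chord as integral of the tangent
  have chord_eq : C b - C a = ∫ u in a..b, deriv C u :=
    (intervalIntegral.integral_deriv_eq_sub (fun u _ => hCdiff.differentiableAt)
      (hTcont.intervalIntegrable a b)).symm
  have inner_int : ∀ v : EuclideanSpace ℝ (Fin 3),
      ⟪v, C b - C a⟫ = ∫ u in a..b, ⟪v, deriv C u⟫ := by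
    intro v
    rw [chord_eq, intervalIntegral.integral_of_le hab.le,
      intervalIntegral.integral_of_le hab.le]
    exact (integral_inner (hTcont.integrableOn_Ioc) v).symm
  set θ := K * (b - a) with hθdef
  have hθ0 : 0 < θ := mul_pos hK (by linarith)
  -- Step 1: chord-arc inequality via the midpoint tangent
  have hchordarc : 2 * Real.sin (θ / 2) ≤ K * ‖C b - C a‖ := by
    set m := (a + b) / 2 with hm
    have hint : ∫ u in a..b, Real.cos (K*(u-m)) ≤ ∫ u in a..b, ⟪deriv C m, deriv C u⟫ := by
      apply intervalIntegral.integral_mono_on hab.le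
        (Continuous.intervalIntegrable (by fun_prop) a b)
        (Continuous.intervalIntegrable (Continuous.inner continuous_const hTcont) a b)
      intro u hu
      apply master
      have habs : |u - m| ≤ (b - a)/2 :=
        abs_le.mpr ⟨by rw [hm]; linarith [hu.1], by rw [hm]; linarith [hu.2]⟩
      have h2 : K * ((b-a)/2) = θ/2 := by rw [hθdef]; ring
      have h3 := mul_le_mul_of_nonneg_left habs hK.le
      linarith
    rw [aux_int_cos K m a b (ne_of_gt hK), ← inner_int] at hint
    have hsin : Real.sin (K*(b-m)) - Real.sin (K*(a-m)) = 2 * Real.sin (θ/2) := by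
      have e1 : K*(b-m) = θ/2 := by rw [hm, hθdef]; ring
      have e2 : K*(a-m) = -(θ/2) := by rw [hm, hθdef]; ring
      rw [e1, e2, Real.sin_neg]; ring
    rw [hsin] at hint
    have hcs : ⟪deriv C m, C b - C a⟫ ≤ ‖C b - C a‖ := by
      have := real_inner_le_norm (deriv C m) (C b - C a)
      rwa [hunit, one_mul] at this
    rw [div_le_iff₀ hK] at hint
    nlinarith [hint, mul_le_mul_of_nonneg_right hcs hK.le]
  have hKx0 : 0 < K * x := mul_pos hK (lt_of_lt_of_le hchordpos hchord)
  -- Step 2: K(b-a) ≤ 1.01 Kx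
  have hθKx : θ ≤ 1.01 * (K * x) := by
    set y := K * x / 2 with hy
    have hy0 : 0 < y := by positivity
    have hy5 : y ≤ 1/5 := by rw [hy]; linarith
    have hsiny : Real.sin (θ/2) ≤ y := by
      have h1 : K * ‖C b - C a‖ ≤ K * x := mul_le_mul_of_nonneg_left hchord hK.le
      rw [hy]; linarith
    have hsin2 : y ≤ Real.sin (1.01 * y) := by
      have hcb := aux_sin_cubic (t := 1.01 * y) (by positivity)
      have he : (1.01*y)^3 = 1.030301*y^3 := by ring
      have hsq : y*y ≤ 1/25 := by nlinarith
      have hy3 : y^3 ≤ y/25 := by nlinarith [mul_le_mul_of_nonneg_left hsq hy0.le]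
      linarith
    by_contra hcon
    push_neg at hcon
    have hlt : 1.01 * y < θ / 2 := by rw [hy]; linarith
    have hmono := Real.strictMonoOn_sin
      (Set.mem_Icc.mpr ⟨by nlinarith, by nlinarith⟩)
      (Set.mem_Icc.mpr ⟨by nlinarith, by linarith⟩) hlt
    linarith
  have hθ404 : θ ≤ 0.404 := by nlinarith
  -- fix s
  intro s hs
  obtain ⟨hsa, hsb⟩ := hs
  set β := K * (b - s) with hβ
  set γ := K * (s - a) with hγ
  have hβ0 : 0 ≤ β := mul_nonneg hK.le (by linarith)
  have hγ0 : 0 ≤ γ := mul_nonneg hK.le (by linarith)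
  have hβγ : β + γ = θ := by rw [hβ, hγ, hθdef]; ring
  have key2 : ∀ u ∈ Set.Icc a b, Real.cos (K*(u-s)) ≤ ⟪deriv C s, deriv C u⟫ := by
    intro u hu
    apply master
    have habs : |u - s| ≤ b - a := abs_le.mpr ⟨by linarith [hu.1], by linarith [hu.2]⟩
    have h3 := mul_le_mul_of_nonneg_left habs hK.le
    linarith
  have hip : (Real.sin β + Real.sin γ)/K ≤ ⟪deriv C s, C b - C a⟫ := by
    have hint : ∫ u in a..b, Real.cos (K*(u-s)) ≤ ∫ u in a..b, ⟪deriv C s, deriv C u⟫ := by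
      apply intervalIntegral.integral_mono_on hab.le
        (Continuous.intervalIntegrable (by fun_prop) a b)
        (Continuous.intervalIntegrable (Continuous.inner continuous_const hTcont) a b)
      exact key2
    rw [aux_int_cos K s a b (ne_of_gt hK), ← inner_int] at hint
    have e2 : K*(a-s) = -γ := by rw [hγ]; ring
    rw [← hβ, e2, Real.sin_neg] at hint
    have he : (Real.sin β - -Real.sin γ)/K = (Real.sin β + Real.sin γ)/K := by ring
    linarith [he ▸ hint]
  set ip := ⟪deriv C s, C b - C a⟫ with hipdef
  set P := (C b - C a) - ip • deriv C s with hP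
  have hPint : P = ∫ u in a..b, (deriv C u - ⟪deriv C s, deriv C u⟫ • deriv C s) := by
    rw [intervalIntegral.integral_sub (hTcont.intervalIntegrable a b)
      (Continuous.intervalIntegrable (u := fun u => ⟪deriv C s, deriv C u⟫ • deriv C s)
        ((Continuous.inner (𝕜 := ℝ) continuous_const hTcont).smul continuous_const) a b),
      intervalIntegral.integral_smul_const, ← inner_int, ← chord_eq]
  have hPnorm : K * ‖P‖ ≤ 2 - Real.cos β - Real.cos γ := by
    have hnormint : ‖P‖ ≤ ∫ u in a..b, ‖deriv C u - ⟪deriv C s, deriv C u⟫ • deriv C s‖ := by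
      rw [hPint]
      exact intervalIntegral.norm_integral_le_integral_norm hab.le
    have hpt : ∀ u ∈ Set.Icc a b,
        ‖deriv C u - ⟪deriv C s, deriv C u⟫ • deriv C s‖ ≤ Real.sin (K * |u - s|) := by
      intro u hu
      have ht1 : Real.cos (K * |u - s|) ≤ ⟪deriv C s, deriv C u⟫ := by
        rcases le_total s u with h | h
        · rw [abs_of_nonneg (by linarith)]; exact key2 u hu
        · rw [abs_of_nonpos (by linarith), show K * -(u - s) = -(K*(u-s)) by ring,
            Real.cos_neg]
          exact key2 u hu
      have hargnn : 0 ≤ K * |u - s| := by positivity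
      have harg2 : K * |u - s| ≤ π / 2 := by
        have habs : |u - s| ≤ b - a := abs_le.mpr ⟨by linarith [hu.1], by linarith [hu.2]⟩
        have h3 := mul_le_mul_of_nonneg_left habs hK.le
        linarith
      have hcos0 : 0 ≤ Real.cos (K * |u - s|) :=
        Real.cos_nonneg_of_mem_Icc ⟨by linarith, harg2⟩
      have hsin0 : 0 ≤ Real.sin (K * |u - s|) :=
        Real.sin_nonneg_of_nonneg_of_le_pi hargnn (by linarith)
      have hnsq : ‖deriv C u - ⟪deriv C s, deriv C u⟫ • deriv C s‖^2
          = 1 - ⟪deriv C s, deriv C u⟫^2 := by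
        rw [norm_sub_sq_real, real_inner_smul_right, norm_smul, hunit, hunit,
          real_inner_comm (deriv C u) (deriv C s)]
        simp [Real.norm_eq_abs, sq_abs]
        ring
      have hs2 : Real.sin (K*|u-s|)^2 = 1 - Real.cos (K*|u-s|)^2 := Real.sin_sq (K*|u-s|)
      nlinarith [norm_nonneg (deriv C u - ⟪deriv C s, deriv C u⟫ • deriv C s)]
    have hint2 : ∫ u in a..b, ‖deriv C u - ⟪deriv C s, deriv C u⟫ • deriv C s‖
        ≤ ∫ u in a..b, Real.sin (K * |u - s|) := by
      apply intervalIntegral.integral_mono_on hab.le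
        (Continuous.intervalIntegrable
          ((hTcont.sub ((Continuous.inner (𝕜 := ℝ) continuous_const hTcont).smul
            continuous_const)).norm) a b)
        (Continuous.intervalIntegrable (by fun_prop) a b)
      exact hpt
    have hsplit : ∫ u in a..b, Real.sin (K * |u - s|)
        = (2 - Real.cos β - Real.cos γ)/K := by
      have hadj : ∫ u in a..b, Real.sin (K * |u - s|)
          = (∫ u in a..s, Real.sin (K * |u - s|)) + ∫ u in s..b, Real.sin (K * |u - s|) :=
        (intervalIntegral.integral_add_adjacent_intervals
          (Continuous.intervalIntegrable (by fun_prop) a s)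
          (Continuous.intervalIntegrable (by fun_prop) s b)).symm
      have h1 : ∫ u in a..s, Real.sin (K * |u - s|) = (1 - Real.cos γ)/K := by
        have hcong : ∫ u in a..s, Real.sin (K * |u - s|)
            = ∫ u in a..s, -Real.sin (K * (u - s)) := by
          apply intervalIntegral.integral_congr
          intro u hu
          rw [Set.uIcc_of_le hsa] at hu
          show Real.sin (K * |u - s|) = -Real.sin (K * (u - s))
          rw [abs_of_nonpos (by linarith [hu.2]), show K * -(u-s) = -(K*(u-s)) by ring,
            Real.sin_neg]
        rw [hcong, intervalIntegral.integral_neg, aux_int_sin K s a s (ne_of_gt hK),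
          show K * (s - s) = 0 by ring, Real.cos_zero,
          show K * (a - s) = -γ by rw [hγ]; ring, Real.cos_neg]
        ring
      have h2 : ∫ u in s..b, Real.sin (K * |u - s|) = (1 - Real.cos β)/K := by
        have hcong : ∫ u in s..b, Real.sin (K * |u - s|)
            = ∫ u in s..b, Real.sin (K * (u - s)) := by
          apply intervalIntegral.integral_congr
          intro u hu
          rw [Set.uIcc_of_le hsb] at hu
          show Real.sin (K * |u - s|) = Real.sin (K * (u - s))
          rw [abs_of_nonneg (by linarith [hu.1])]
        rw [hcong, aux_int_sin K s s b (ne_of_gt hK),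
          show K * (s - s) = 0 by ring, Real.cos_zero, ← hβ]
      rw [hadj, h1, h2]; ring
    rw [hsplit] at hint2
    have hfin := le_trans hnormint hint2
    rw [le_div_iff₀ hK] at hfin
    nlinarith [hfin]
  have hPsq : ‖P‖^2 = ‖C b - C a‖^2 - ip^2 := by
    rw [hP, hipdef, norm_sub_sq_real, real_inner_smul_right, norm_smul, hunit,
      real_inner_comm (C b - C a) (deriv C s)]
    simp [Real.norm_eq_abs, sq_abs]
    ring
  set α := InnerProductGeometry.angle (deriv C s) (C b - C a) with hα
  have hcosα : Real.cos α * ‖C b - C a‖ = ip := by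
    have h := InnerProductGeometry.cos_angle_mul_norm_mul_norm (deriv C s) (C b - C a)
    rwa [hunit, one_mul] at h
  have hsinα : Real.sin α * ‖C b - C a‖ = ‖P‖ := by
    have h := InnerProductGeometry.sin_angle_mul_norm_mul_norm (deriv C s) (C b - C a)
    rw [hunit, one_mul] at h
    rw [hα, h, real_inner_self_eq_norm_sq, real_inner_self_eq_norm_sq, hunit,
      show (1:ℝ)^2 * ‖C b - C a‖^2 - ip*ip = ‖P‖^2 by rw [hPsq]; ring]
    exact Real.sqrt_sq (norm_nonneg P)
  have hsh : 0 ≤ Real.sin (θ/2) :=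
    Real.sin_nonneg_of_nonneg_of_le_pi (by linarith) (by linarith)
  have hch : 0 ≤ Real.cos (θ/2) := Real.cos_nonneg_of_mem_Icc ⟨by linarith, by linarith⟩
  have htrig : (2 - Real.cos β - Real.cos γ) * Real.cos (θ/2)
      ≤ (Real.sin β + Real.sin γ) * Real.sin (θ/2) := by
    have hbh := Real.cos_sub β (θ/2)
    have hgh := Real.cos_sub γ (θ/2)
    have hcc : Real.cos (θ/2) ≤ Real.cos (β - θ/2) := by
      rw [← Real.cos_abs (β - θ/2)]
      apply Real.cos_le_cos_of_nonneg_of_le_pi (abs_nonneg _) (by linarith)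
      rw [abs_le]; constructor <;> linarith
    have hcc2 : Real.cos (γ - θ/2) = Real.cos (β - θ/2) := by
      rw [show γ - θ/2 = -(β - θ/2) by linarith, Real.cos_neg]
    linarith
  have hNc : 0 < Real.sin β + Real.sin γ := by
    have hβπ : β < π := by linarith
    have hγπ : γ < π := by linarith
    rcases lt_or_ge 0 β with h | h
    · have h1 := Real.sin_pos_of_pos_of_lt_pi h hβπ
      have h2 := Real.sin_nonneg_of_nonneg_of_le_pi hγ0 (le_of_lt hγπ)
      linarith
    · have hβe : β = 0 := le_antisymm h hβ0
      have hγpos : 0 < γ := by rw [hβe] at hβγ; linarith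
      have h1 := Real.sin_pos_of_pos_of_lt_pi hγpos hγπ
      rw [hβe, Real.sin_zero]
      linarith
  have hip' := hip
  rw [div_le_iff₀ hK] at hip'
  have hip2 : Real.sin β + Real.sin γ ≤ K * (Real.cos α * ‖C b - C a‖) := by
    rw [hcosα]; nlinarith [hip']
  have hsinb : K * (Real.sin α * ‖C b - C a‖) ≤ 2 - Real.cos β - Real.cos γ := by
    rw [hsinα]; exact hPnorm
  have hKd : 0 < K * ‖C b - C a‖ := mul_pos hK hchordpos
  have hsinle : Real.sin (α - θ/2) ≤ 0 := by
    have h1 : Real.sin (α - θ/2) * (K * ‖C b - C a‖) ≤ 0 := by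
      rw [Real.sin_sub,
        show (Real.sin α * Real.cos (θ/2) - Real.cos α * Real.sin (θ/2)) * (K * ‖C b - C a‖)
          = (K * (Real.sin α * ‖C b - C a‖)) * Real.cos (θ/2)
            - (K * (Real.cos α * ‖C b - C a‖)) * Real.sin (θ/2) by ring]
      have t1 := mul_le_mul_of_nonneg_right hsinb hch
      have t2 := mul_le_mul_of_nonneg_right hip2 hsh
      linarith
    nlinarith [h1, hKd]
  have hαnn := InnerProductGeometry.angle_nonneg (deriv C s) (C b - C a)
  have hαpi := InnerProductGeometry.angle_le_pi (deriv C s) (C b - C a)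
  have hippos : 0 < ip := by nlinarith [hip', hNc]
  have hcosαpos : 0 < Real.cos α := by nlinarith [hcosα, hippos, hchordpos]
  have hαlt : α < π/2 := by
    by_contra hcon
    push_neg at hcon
    have := Real.cos_nonpos_of_pi_div_two_le_of_le hcon (by linarith)
    linarith
  have hαh : α ≤ θ/2 := by
    by_contra hcon
    push_neg at hcon
    have h0 : 0 < α - θ/2 := by linarith
    have h1 : α - θ/2 < π := by linarith
    linarith [Real.sin_pos_of_pos_of_lt_pi h0 h1]
  have hαfin : α ≤ 1.01 * (K*x) / 2 := by linarith
  constructor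
  · nlinarith [hKx0]
  · have h1 : Real.sin α ≤ α := Real.sin_le hαnn
    nlinarith [hKx0]
end

section
/- Let C : ℝ → ℝ³ be a closed curve of period L, of class C², simple (injective on [0, L)), with regular parametrization (C' never vanishes). Then the writhe integrand ω(s, t) = ((C'(s) × C'(t)) · (C(s) − C(t)))/|C(s) − C(t)|³, defined for s ≢ t (mod L), extends to a continuous function on all of ℝ² taking the value 0 at every diagonal point s ≡ t (mod L). -/
noncomputable section

lemma coord_abs_le (v : EuclideanSpace ℝ (Fin 3)) (i : Fin 3) : |v i| ≤ ‖v‖ := by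
  rw [EuclideanSpace.norm_eq, ← Real.sqrt_sq_eq_abs]
  apply Real.sqrt_le_sqrt
  have : |v i| ^ 2 ≤ ∑ j, ‖v j‖ ^ 2 := by
    refine Finset.single_le_sum (f := fun j => ‖v j‖ ^ 2) (fun j _ => by positivity)
      (Finset.mem_univ i) |>.trans_eq' ?_
    simp [Real.norm_eq_abs, sq_abs]
  simpa [sq_abs] using this

lemma term_bound (u v w : EuclideanSpace ℝ (Fin 3)) (i j k : Fin 3) :
    |u i * v j * w k| ≤ ‖u‖ * ‖v‖ * ‖w‖ := by
  rw [abs_mul, abs_mul]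
  gcongr <;> first | positivity | exact coord_abs_le _ _

lemma dot3_cross3_eq (v w x : EuclideanSpace ℝ (Fin 3)) :
    dot3 (cross3 v w) x = v 1 * w 2 * x 0 - v 2 * w 1 * x 0 + (v 2 * w 0 * x 1 - v 0 * w 2 * x 1)
      + (v 0 * w 1 * x 2 - v 1 * w 0 * x 2) := by
  simp [dot3, cross3, PiLp.inner_apply, Fin.sum_univ_three, RCLike.inner_apply, conj_trivial]
  ring

lemma triple_bound (u v w : EuclideanSpace ℝ (Fin 3)) :
    |dot3 (cross3 u v) w| ≤ 6 * (‖u‖ * ‖v‖ * ‖w‖) := by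
  rw [dot3_cross3_eq]
  have h := term_bound u v w
  calc |u 1 * v 2 * w 0 - u 2 * v 1 * w 0 + (u 2 * v 0 * w 1 - u 0 * v 2 * w 1)
      + (u 0 * v 1 * w 2 - u 1 * v 0 * w 2)|
      ≤ |u 1 * v 2 * w 0| + |u 2 * v 1 * w 0| + |u 2 * v 0 * w 1| + |u 0 * v 2 * w 1|
        + |u 0 * v 1 * w 2| + |u 1 * v 0 * w 2| := by
        calc _ ≤ |u 1 * v 2 * w 0 - u 2 * v 1 * w 0| + |u 2 * v 0 * w 1 - u 0 * v 2 * w 1|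
            + |u 0 * v 1 * w 2 - u 1 * v 0 * w 2| := by
              exact (abs_add_le _ _).trans (by gcongr; exact abs_add_le _ _)
          _ ≤ _ := by
              have := abs_sub (u 1 * v 2 * w 0) (u 2 * v 1 * w 0)
              have := abs_sub (u 2 * v 0 * w 1) (u 0 * v 2 * w 1)
              have := abs_sub (u 0 * v 1 * w 2) (u 1 * v 0 * w 2)
              linarith
    _ ≤ _ := by
        have h1 := h 1 2 0; have h2 := h 2 1 0; have h3 := h 2 0 1
        have h4 := h 0 2 1; have h5 := h 0 1 2; have h6 := h 1 0 2
        linarith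

lemma triple_reduce (A B D : EuclideanSpace ℝ (Fin 3)) (k : ℝ) :
    dot3 (cross3 A B) D = dot3 (cross3 A (B - A)) (D - k • A) := by
  simp only [dot3_cross3_eq, PiLp.sub_apply, PiLp.smul_apply, smul_eq_mul]
  ring

lemma key_id (A W b₁ d₁ : EuclideanSpace ℝ (Fin 3)) (c e : ℝ) :
    dot3 (cross3 A (c • W + b₁)) (-(e • W) - d₁)
      = c * dot3 (cross3 A W) (-d₁) + dot3 (cross3 A b₁) (-(e • W) - d₁) := by
  simp only [dot3_cross3_eq, PiLp.add_apply, PiLp.sub_apply, PiLp.smul_apply, PiLp.neg_apply,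
    smul_eq_mul]
  ring

set_option maxHeartbeats 1600000 in
/-- For a simple closed regular `C²` curve `C` of period `L`, the writhe
integrand `ω(s,t) = ((C'(s) × C'(t))·(C s − C t))/|C s − C t|³`, defined for
`s ≢ t (mod L)`, extends to a continuous function on `ℝ²` vanishing at every diagonal
point `s ≡ t (mod L)`. -/
theorem writhe_integrand_extends_continuously
    (C : ℝ → EuclideanSpace ℝ (Fin 3)) (L : ℝ) (hL : 0 < L)
    (hP : Function.Periodic C L)
    (hC : ContDiff ℝ 2 C)
    (hinj : Set.InjOn C (Set.Ico (0:ℝ) L))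
    (hreg : ∀ s : ℝ, deriv C s ≠ 0) :
    ∃ ω : ℝ × ℝ → ℝ, Continuous ω ∧
      (∀ s t : ℝ, ¬(∃ k : ℤ, s - t = k * L) →
        ω (s, t) =
          dot3 (cross3 (deriv C s) (deriv C t)) (C s - C t) / ‖C s - C t‖ ^ 3) ∧
      (∀ s t : ℝ, (∃ k : ℤ, s - t = k * L) → ω (s, t) = 0) := by
  classical
  -- basic differentiability facts
  have h2 : ContDiff ℝ (1+1) C := by norm_num [hC]
  have hdiff : Differentiable ℝ C := (contDiff_succ_iff_deriv.1 h2).1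
  have hC1 : ContDiff ℝ 1 (deriv C) := (contDiff_succ_iff_deriv.1 h2).2.2
  have hdcont : Continuous (deriv C) := hC1.continuous
  have hdiff2 : Differentiable ℝ (deriv C) := (contDiff_one_iff_deriv.1 hC1).1
  have hd2cont : Continuous (deriv (deriv C)) := (contDiff_one_iff_deriv.1 hC1).2
  have hPd : Function.Periodic (deriv C) L := by
    intro x; rw [← deriv_comp_add_const, hP.funext]
  -- characterization of coincidence points
  have hCeq : ∀ s t : ℝ, C s = C t ↔ ∃ k : ℤ, s - t = k * L := by
    intro s t
    constructor
    · intro h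
      have hmem : ∀ x : ℝ, x - ⌊x / L⌋ * L ∈ Set.Ico (0:ℝ) L := fun x =>
        ⟨Int.sub_floor_div_mul_nonneg x hL, Int.sub_floor_div_mul_lt x hL⟩
      have hs' : C (s - ⌊s / L⌋ * L) = C s := hP.sub_int_mul_eq _
      have ht' : C (t - ⌊t / L⌋ * L) = C t := hP.sub_int_mul_eq _
      have := hinj (hmem s) (hmem t) (by rw [hs', ht', h])
      refine ⟨⌊s / L⌋ - ⌊t / L⌋, ?_⟩
      push_cast
      linarith
    · rintro ⟨k, hk⟩
      have : s = t + k * L := by linarith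
      rw [this]
      exact (hP.int_mul k) t
  -- the extension
  set ω : ℝ × ℝ → ℝ := fun p =>
    if ∃ k : ℤ, p.1 - p.2 = k * L then 0
    else dot3 (cross3 (deriv C p.1) (deriv C p.2)) (C p.1 - C p.2) / ‖C p.1 - C p.2‖ ^ 3 with hω
  have hω_off : ∀ s t : ℝ, ¬(∃ k : ℤ, s - t = k * L) →
      ω (s, t) = dot3 (cross3 (deriv C s) (deriv C t)) (C s - C t) / ‖C s - C t‖ ^ 3 := by
    intro s t h; simp only [hω, h, if_false]
  have hω_on : ∀ s t : ℝ, (∃ k : ℤ, s - t = k * L) → ω (s, t) = 0 := by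
    intro s t h; simp only [hω, h, if_true]
  -- continuity at true diagonal points
  have hdiag : ∀ a : ℝ, ContinuousAt ω (a, a) := by
    intro a
    rw [Metric.continuousAt_iff]
    intro ε hε
    set V := deriv C a with hV
    set W := deriv (deriv C) a with hW
    have hnV : 0 < ‖V‖ := norm_pos_iff.2 (hreg a)
    set nV := ‖V‖ with hnVdef
    set K : ℝ := 2 * ‖W‖ + 1 with hK
    have hKpos : 0 < K := by positivity
    set δ : ℝ := min 1 (ε * nV ^ 2 / (97 * K)) with hδ
    have hδpos : 0 < δ := lt_min one_pos (by positivity)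
    have hδ1 : δ ≤ 1 := min_le_left _ _
    have hδε : 96 * δ * K / nV ^ 2 < ε := by
      have h1 : δ ≤ ε * nV ^ 2 / (97 * K) := min_le_right _ _
      have h2 : 96 * δ * K / nV ^ 2 ≤ 96 * (ε * nV ^ 2 / (97 * K)) * K / nV ^ 2 := by gcongr
      have h3 : 96 * (ε * nV ^ 2 / (97 * K)) * K / nV ^ 2 = (96 / 97) * ε := by
        field_simp
      rw [h3] at h2
      nlinarith
    -- choose radius
    obtain ⟨r₁, hr₁pos, hr₁⟩ := Metric.continuousAt_iff.1 hdcont.continuousAt (nV / 2)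
      (by positivity)
    obtain ⟨r₂, hr₂pos, hr₂⟩ := Metric.continuousAt_iff.1 hd2cont.continuousAt δ hδpos
    set r : ℝ := min (min r₁ r₂) (L / 2) with hr
    have hrpos : 0 < r := lt_min (lt_min hr₁pos hr₂pos) (by linarith)
    have hrL : r ≤ L / 2 := min_le_right _ _
    have hball1 : ∀ u ∈ Metric.ball a r, ‖deriv C u - V‖ ≤ nV / 2 := by
      intro u hu
      have : dist u a < r₁ := lt_of_lt_of_le (Metric.mem_ball.1 hu)
        ((min_le_left _ _).trans (min_le_left _ _))
      have := hr₁ this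
      rw [dist_eq_norm] at this
      exact this.le
    have hball2 : ∀ u ∈ Metric.ball a r, ‖deriv (deriv C) u - W‖ ≤ δ := by
      intro u hu
      have : dist u a < r₂ := lt_of_lt_of_le (Metric.mem_ball.1 hu)
        ((min_le_left _ _).trans (min_le_right _ _))
      have := hr₂ this
      rw [dist_eq_norm] at this
      exact this.le
    -- pairwise MVT bounds on the ball
    have pair1 : ∀ x ∈ Metric.ball a r, ∀ y ∈ Metric.ball a r,
        ‖(C y - C x) - (y - x) • V‖ ≤ nV / 2 * |y - x| := by
      intro x hx y hy
      have hfd : ∀ u : ℝ, HasDerivAt (fun u => C u - u • V) (deriv C u - V) u := fun u =>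
        ((hdiff u).hasDerivAt).sub (by simpa using (hasDerivAt_id u).smul_const V)
      have := (convex_ball a r).norm_image_sub_le_of_norm_hasDerivWithin_le
        (fun u hu => (hfd u).hasDerivWithinAt) hball1 hx hy
      have heq : (C y - y • V) - (C x - x • V) = (C y - C x) - (y - x) • V := by module
      rw [heq] at this
      simpa [Real.norm_eq_abs] using this
    have pair2 : ∀ x ∈ Metric.ball a r, ∀ y ∈ Metric.ball a r,
        ‖(deriv C y - deriv C x) - (y - x) • W‖ ≤ δ * |y - x| := by
      intro x hx y hy
      have hfd : ∀ u : ℝ, HasDerivAt (fun u => deriv C u - u • W) (deriv (deriv C) u - W) u :=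
        fun u => ((hdiff2 u).hasDerivAt).sub (by simpa using (hasDerivAt_id u).smul_const W)
      have := (convex_ball a r).norm_image_sub_le_of_norm_hasDerivWithin_le
        (fun u hu => (hfd u).hasDerivWithinAt) hball2 hx hy
      have heq : (deriv C y - y • W) - (deriv C x - x • W)
          = (deriv C y - deriv C x) - (y - x) • W := by module
      rw [heq] at this
      simpa [Real.norm_eq_abs] using this
    refine ⟨r, hrpos, ?_⟩
    intro p hp
    obtain ⟨s, t⟩ := p
    rw [Prod.dist_eq] at hp
    obtain ⟨hps, hpt⟩ := max_lt_iff.1 hp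
    have hsball : s ∈ Metric.ball a r := Metric.mem_ball.2 hps
    have htball : t ∈ Metric.ball a r := Metric.mem_ball.2 hpt
    have hωaa : ω (a, a) = 0 := hω_on a a ⟨0, by simp⟩
    rw [hωaa]
    by_cases hst : ∃ k : ℤ, s - t = k * L
    · rw [hω_on s t hst]; simpa using hε
    · rw [hω_off s t hst]
      have hsne : s ≠ t := by
        rintro rfl
        exact hst ⟨0, by simp⟩
      set T : ℝ := |t - s| with hT
      have hTpos : 0 < T := abs_pos.2 (sub_ne_zero.2 (Ne.symm hsne))
      have hTst : |s - t| = T := abs_sub_comm s t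
      -- notation
      set A := deriv C s with hA
      set B := deriv C t with hB
      set D := C s - C t with hD
      set b₁ := (B - A) - (t - s) • W with hb₁
      set d₁ := (C t - C s) - (t - s) • A - ((t - s) ^ 2 / 2) • W with hd₁
      -- bounds
      have hb₁le : ‖b₁‖ ≤ δ * T := pair2 s hsball t htball
      have hAle : ‖A‖ ≤ 2 * nV := by
        have h1 := hball1 s hsball
        have h2 : ‖A‖ = ‖A - V + V‖ := by rw [sub_add_cancel]
        have h3 := norm_add_le (A - V) V
        rw [← h2] at h3
        linarith
      -- bound on d₁ via MVT on the segment
      have hd₁le : ‖d₁‖ ≤ δ * T * T := by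
        set Kc : Set ℝ := Set.uIcc s t with hKc
        have hKconv : Convex ℝ Kc := by rw [hKc, Set.uIcc]; exact convex_Icc _ _
        have hKball : Kc ⊆ Metric.ball a r :=
          (convex_ball a r).ordConnected.uIcc_subset hsball htball
        have hgd : ∀ u : ℝ, HasDerivAt
            (fun u => C u - (u - s) • A - ((u - s) ^ 2 / 2) • W)
            (deriv C u - A - (u - s) • W) u := by
          intro u
          have h1 : HasDerivAt (fun u : ℝ => (u - s) • A) A u := by
            simpa using ((hasDerivAt_id u).sub_const s).smul_const A
          have h2 : HasDerivAt (fun u : ℝ => ((u - s) ^ 2 / 2) • W) ((u - s) • W) u := by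
            have h := (((hasDerivAt_id u).sub_const s).pow 2).div_const 2
            have := h.smul_const W
            refine this.congr_deriv ?_
            congr 1
            simp only [id_eq, Nat.cast_ofNat, show (2:ℕ) - 1 = 1 from rfl, pow_one, mul_one]; ring
          exact (((hdiff u).hasDerivAt).sub h1).sub h2
        have hbound : ∀ u ∈ Kc, ‖deriv C u - A - (u - s) • W‖ ≤ δ * T := by
          intro u hu
          have heq : deriv C u - A - (u - s) • W
              = (deriv C u - deriv C s) - (u - s) • W := by rw [hA]
          rw [heq]
          have h1 := pair2 s hsball u (hKball hu)
          have h2 : |u - s| ≤ T := by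
            have := Real.dist_le_of_mem_uIcc (x := u) (y := s) hu Set.left_mem_uIcc
            simpa [Real.dist_eq, hT, abs_sub_comm] using this
          calc ‖(deriv C u - deriv C s) - (u - s) • W‖ ≤ δ * |u - s| := h1
            _ ≤ δ * T := by gcongr
        have := hKconv.norm_image_sub_le_of_norm_hasDerivWithin_le
          (fun u hu => (hgd u).hasDerivWithinAt) hbound
          (Set.left_mem_uIcc) (Set.right_mem_uIcc)
        have heq : (C t - (t - s) • A - ((t - s) ^ 2 / 2) • W)
            - (C s - (s - s) • A - ((s - s) ^ 2 / 2) • W) = d₁ := by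
          rw [hd₁]; module
        rw [heq] at this
        simpa [Real.norm_eq_abs, hT] using this
      -- numerator decomposition
      have hNdecomp : dot3 (cross3 A B) D
          = (t - s) * dot3 (cross3 A W) (-d₁) + dot3 (cross3 A b₁)
              (-(((t - s) ^ 2 / 2) • W) - d₁) := by
        have h1 : dot3 (cross3 A B) D = dot3 (cross3 A (B - A)) (D - (s - t) • A) :=
          triple_reduce A B D (s - t)
        have h2 : B - A = (t - s) • W + b₁ := by rw [hb₁]; module
        have h3 : D - (s - t) • A = -(((t - s) ^ 2 / 2) • W) - d₁ := by
          rw [hD, hd₁]; module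
        rw [h1, h2, h3, key_id]
      clear_value T A B D b₁ d₁ δ nV K V W r
      -- bound on d
      have hdle : ‖-(((t - s) ^ 2 / 2) • W) - d₁‖ ≤ T ^ 2 / 2 * ‖W‖ + δ * T * T := by
        have habs : ‖((t - s) ^ 2 / 2 : ℝ)‖ = T ^ 2 / 2 := by
          rw [Real.norm_eq_abs, abs_of_nonneg (by positivity), ← sq_abs (t - s), ← hT]
        calc ‖-(((t - s) ^ 2 / 2) • W) - d₁‖
            ≤ ‖-(((t - s) ^ 2 / 2) • W)‖ + ‖d₁‖ := norm_sub_le _ _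
          _ = T ^ 2 / 2 * ‖W‖ + ‖d₁‖ := by rw [norm_neg, norm_smul, habs]
          _ ≤ T ^ 2 / 2 * ‖W‖ + δ * T * T := by gcongr
      -- numerator bound
      have hN : |dot3 (cross3 A B) D| ≤ 12 * nV * δ * K * T ^ 3 := by
        rw [hNdecomp]
        have t1 : |(t - s) * dot3 (cross3 A W) (-d₁)| ≤ T * (6 * (‖A‖ * ‖W‖ * ‖d₁‖)) := by
          rw [abs_mul, ← hT]
          have := triple_bound A W (-d₁)
          rw [norm_neg] at this
          gcongr
        have t2 : |dot3 (cross3 A b₁) (-(((t - s) ^ 2 / 2) • W) - d₁)|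
            ≤ 6 * (‖A‖ * ‖b₁‖ * ‖-(((t - s) ^ 2 / 2) • W) - d₁‖) := triple_bound _ _ _
        have tri := abs_add_le ((t - s) * dot3 (cross3 A W) (-d₁))
          (dot3 (cross3 A b₁) (-(((t - s) ^ 2 / 2) • W) - d₁))
        have hWn : (0:ℝ) ≤ ‖W‖ := norm_nonneg _
        have hAn : (0:ℝ) ≤ ‖A‖ := norm_nonneg _
        have hb₁n : (0:ℝ) ≤ ‖b₁‖ := norm_nonneg _
        have hd₁n : (0:ℝ) ≤ ‖d₁‖ := norm_nonneg _
        have hdn : (0:ℝ) ≤ ‖-(((t - s) ^ 2 / 2) • W) - d₁‖ := norm_nonneg _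
        have e1 : T * (6 * (‖A‖ * ‖W‖ * ‖d₁‖)) ≤ T * (6 * ((2 * nV) * ‖W‖ * (δ * T * T))) := by
          gcongr
        have e2 : 6 * (‖A‖ * ‖b₁‖ * ‖-(((t - s) ^ 2 / 2) • W) - d₁‖)
            ≤ 6 * ((2 * nV) * (δ * T) * (T ^ 2 / 2 * ‖W‖ + δ * T * T)) := by
          gcongr
        have hfin : T * (6 * ((2 * nV) * ‖W‖ * (δ * T * T)))
            + 6 * ((2 * nV) * (δ * T) * (T ^ 2 / 2 * ‖W‖ + δ * T * T))
            ≤ 12 * nV * δ * K * T ^ 3 := by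
          rw [hK]
          nlinarith [mul_nonneg (mul_nonneg (mul_nonneg hnV.le hδpos.le) (pow_pos hTpos 3).le) hWn,
            mul_nonneg (mul_nonneg (mul_nonneg hnV.le hδpos.le) (pow_pos hTpos 3).le)
              (sub_nonneg.2 hδ1)]
        linarith
      -- lower bound on the denominator
      have hDlow : nV / 2 * T ≤ ‖D‖ := by
        have h1 := pair1 t htball s hsball
        have h2 : ‖(s - t) • V‖ = T * nV := by
          rw [norm_smul, Real.norm_eq_abs, hTst, hnVdef]
        have h3 : ‖(s - t) • V‖ ≤ ‖D‖ + ‖(s - t) • V - D‖ := by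
          have := norm_add_le D ((s - t) • V - D)
          simpa using this
        have h4 : ‖(s - t) • V - D‖ = ‖(C s - C t) - (s - t) • V‖ := by
          rw [← norm_neg]; congr 1; rw [hD]; module
        rw [h4] at h3
        rw [hTst] at h1
        linarith
      have hD3 : (nV / 2) ^ 3 * T ^ 3 ≤ ‖D‖ ^ 3 := by
        calc (nV / 2) ^ 3 * T ^ 3 = (nV / 2 * T) ^ 3 := by ring
          _ ≤ ‖D‖ ^ 3 := by gcongr
      rw [Real.dist_eq, sub_zero, abs_div, abs_of_nonneg (by positivity : (0:ℝ) ≤ ‖D‖ ^ 3)]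
      calc |dot3 (cross3 A B) D| / ‖D‖ ^ 3
          ≤ (12 * nV * δ * K * T ^ 3) / ((nV / 2) ^ 3 * T ^ 3) :=
            div_le_div₀ (by positivity) hN (by positivity) hD3
        _ = 96 * δ * K / nV ^ 2 := by field_simp; ring
        _ < ε := hδε
  -- continuity everywhere
  have hcont : Continuous ω := by
    rw [continuous_iff_continuousAt]
    rintro ⟨s₀, t₀⟩
    by_cases hdg : ∃ k : ℤ, s₀ - t₀ = k * L
    · obtain ⟨k, hk⟩ := hdg
      have hshift : ∀ p : ℝ × ℝ, ω p = ω (p.1, p.2 + (k : ℝ) * L) := by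
        rintro ⟨s, t⟩
        have hiff : (∃ m : ℤ, s - t = m * L) ↔ ∃ m : ℤ, s - (t + (k : ℝ) * L) = m * L := by
          constructor
          · rintro ⟨m, hm⟩; exact ⟨m - k, by push_cast; linarith⟩
          · rintro ⟨m, hm⟩; exact ⟨m + k, by push_cast; linarith⟩
        have hCk : C (t + (k : ℝ) * L) = C t := (hP.int_mul k) t
        have hDk : deriv C (t + (k : ℝ) * L) = deriv C t := (hPd.int_mul k) t
        by_cases h : ∃ m : ℤ, s - t = m * L
        · rw [hω_on s t h, hω_on s _ (hiff.1 h)]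
        · rw [hω_off s t h, hω_off s _ (fun hc => h (hiff.2 hc)), hCk, hDk]
      have hgc : Continuous (fun p : ℝ × ℝ => ((p.1, p.2 + (k : ℝ) * L) : ℝ × ℝ)) := by
        fun_prop
      have ht : t₀ + (k : ℝ) * L = s₀ := by linarith
      have hd2 : ContinuousAt ω (s₀, t₀ + (k : ℝ) * L) := by rw [ht]; exact hdiag s₀
      have hca : ContinuousAt (ω ∘ fun p : ℝ × ℝ => ((p.1, p.2 + (k : ℝ) * L) : ℝ × ℝ))
          (s₀, t₀) := ContinuousAt.comp (x := ((s₀, t₀) : ℝ × ℝ)) hd2 hgc.continuousAt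
      exact hca.congr (Filter.Eventually.of_forall fun p => (hshift p).symm)
    · have hne : C s₀ ≠ C t₀ := fun h => hdg ((hCeq s₀ t₀).1 h)
      have hsub : Continuous fun p : ℝ × ℝ => C p.1 - C p.2 :=
        (hC.continuous.comp continuous_fst).sub (hC.continuous.comp continuous_snd)
      have hU : IsOpen {p : ℝ × ℝ | C p.1 ≠ C p.2} := by
        have hset : {p : ℝ × ℝ | C p.1 ≠ C p.2}
            = (fun p : ℝ × ℝ => C p.1 - C p.2) ⁻¹' {0}ᶜ := by
          ext p; simp [sub_eq_zero]
        rw [hset]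
        exact isOpen_compl_singleton.preimage hsub
      have hnum : Continuous fun p : ℝ × ℝ =>
          dot3 (cross3 (deriv C p.1) (deriv C p.2)) (C p.1 - C p.2) := by
        have h1 : ∀ i : Fin 3, Continuous fun u => deriv C u i :=
          fun i => (EuclideanSpace.proj (𝕜 := ℝ) i).continuous.comp hdcont
        have h2 : ∀ i : Fin 3, Continuous fun u => C u i :=
          fun i => (EuclideanSpace.proj (𝕜 := ℝ) i).continuous.comp hC.continuous
        simp only [dot3_cross3_eq, PiLp.sub_apply]
        fun_prop
      have hden : Continuous fun p : ℝ × ℝ => ‖C p.1 - C p.2‖ ^ 3 := hsub.norm.pow 3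
      have hden0 : ‖C s₀ - C t₀‖ ^ 3 ≠ 0 :=
        pow_ne_zero 3 (norm_ne_zero_iff.2 (sub_ne_zero.2 hne))
      have hfc : ContinuousAt (fun p : ℝ × ℝ =>
          dot3 (cross3 (deriv C p.1) (deriv C p.2)) (C p.1 - C p.2)
            / ‖C p.1 - C p.2‖ ^ 3) (s₀, t₀) :=
        hnum.continuousAt.div hden.continuousAt hden0
      apply hfc.congr
      filter_upwards [hU.mem_nhds hne] with p hp
      have hnp : ¬∃ m : ℤ, p.1 - p.2 = m * L := fun hc => hp ((hCeq _ _).2 hc)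
      exact (hω_off p.1 p.2 hnp).symm
  exact ⟨ω, hcont, hω_off, hω_on⟩

end
end
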